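/- arXiv:2006.10418 — 5 statements merged into one kernel-verified Lean document; each statement's English description precedes it below -/
import Mathlib

section
/- Let K/F be a finite cyclic Galois extension of degree n with Gal(K/F)=⟨σ⟩ and R = K[t;σ]. If f ∈ R is irreducible and h(t) = ĥ(t^n) (with ĥ ∈ F[x] monic) is the monic central left multiple of f of minimal degree, then ĥ(x) is irreducible in F[x]. -/
section Aux

variable {K R : Type} [Field K] [Ring R] (ι : K →+* R) (t : R) (s : K →+* K)
  (coeff : R →+ (ℕ →₀ K))

noncomputable def auxD (x : R) : ℕ := (coeff x).support.sup id

variable (hmul : ∀ a : K, t * ι a = ι (s a) * t)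
  (hcoeff : ∀ (a : K) (i : ℕ), coeff (ι a * t ^ i) = Finsupp.single i a)
  (hrepr : ∀ x : R, (coeff x).sum (fun i a => ι a * t ^ i) = x)

include hmul in
lemma aux_tpow_mul (i : ℕ) (a : K) : t ^ i * ι a = ι ((⇑s)^[i] a) * t ^ i := by
  induction i generalizing a with
  | zero => simp
  | succ i ih =>
    rw [pow_succ, mul_assoc, hmul, ← mul_assoc, ih, mul_assoc, ← pow_succ,
      Function.iterate_succ_apply]

include hmul in
lemma aux_mono_mul (a b : K) (i j : ℕ) :
    (ι a * t ^ i) * (ι b * t ^ j) = ι (a * (⇑s)^[i] b) * t ^ (i + j) := by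
  rw [mul_assoc, ← mul_assoc (t ^ i), aux_tpow_mul ι t s hmul, map_mul, pow_add,
    mul_assoc, mul_assoc]

include hmul hcoeff hrepr in
lemma aux_coeff_monoMul (c : K) (k : ℕ) (y : R) (m : ℕ) :
    coeff (ι c * t ^ k * y) m =
      if k ≤ m then c * (⇑s)^[k] (coeff y (m - k)) else 0 := by
  classical
  conv_lhs => rw [← hrepr y]
  rw [Finsupp.sum, Finset.mul_sum]
  have hterm : ∀ j ∈ (coeff y).support,
      ι c * t ^ k * (ι (coeff y j) * t ^ j) = ι (c * (⇑s)^[k] (coeff y j)) * t ^ (k + j) :=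
    fun j _ => aux_mono_mul ι t s hmul c (coeff y j) k j
  rw [Finset.sum_congr rfl hterm, map_sum, Finset.sum_apply']
  simp only [hcoeff, Finsupp.single_apply]
  by_cases hkm : k ≤ m
  · rw [if_pos hkm]
    by_cases hmem : m - k ∈ (coeff y).support
    · rw [Finset.sum_eq_single (m - k)]
      · rw [if_pos (by omega)]
      · intro j hj hne
        rw [if_neg (by omega)]
      · intro h; exact absurd hmem h
    · have h0 : coeff y (m - k) = 0 := Finsupp.notMem_support_iff.1 hmem
      rw [h0, iterate_map_zero, mul_zero]
      apply Finset.sum_eq_zero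
      intro j hj
      rw [if_neg]
      intro he
      have : j = m - k := by omega
      exact hmem (this ▸ hj)
  · rw [if_neg hkm]
    apply Finset.sum_eq_zero
    intro j hj
    rw [if_neg (by omega)]

include hmul hcoeff hrepr in
lemma aux_coeff_mul (x y : R) (m : ℕ) :
    coeff (x * y) m = ∑ i ∈ (coeff x).support,
      (if i ≤ m then coeff x i * (⇑s)^[i] (coeff y (m - i)) else 0) := by
  classical
  conv_lhs => rw [← hrepr x]
  rw [Finsupp.sum, Finset.sum_mul, map_sum, Finset.sum_apply']
  exact Finset.sum_congr rfl fun i _ => aux_coeff_monoMul ι t s coeff hmul hcoeff hrepr _ _ y m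

include hrepr in
lemma aux_coeff_inj : Function.Injective coeff := by
  intro x y h
  rw [← hrepr x, ← hrepr y, h]

include hrepr in
lemma aux_eq_zero (x : R) : x = 0 ↔ coeff x = 0 := by
  constructor
  · rintro rfl; exact map_zero coeff
  · intro h; exact aux_coeff_inj ι t coeff hrepr (by rw [h, map_zero])

include hrepr in
lemma aux_coeff_D_ne (x : R) (hx : x ≠ 0) : coeff x (auxD coeff x) ≠ 0 := by
  have hne : (coeff x).support.Nonempty := by
    rw [Finsupp.support_nonempty_iff]
    exact fun h => hx ((aux_eq_zero ι t coeff hrepr x).2 h)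
  obtain ⟨b, hb, hbe⟩ := Finset.exists_mem_eq_sup _ hne (id : ℕ → ℕ)
  have : auxD coeff x ∈ (coeff x).support := by rw [auxD, hbe]; exact hb
  exact Finsupp.mem_support_iff.1 this

lemma aux_le_D (x : R) (m : ℕ) (h : coeff x m ≠ 0) : m ≤ auxD coeff x :=
  Finset.le_sup (f := id) (Finsupp.mem_support_iff.2 h)

lemma aux_coeff_zero_of_lt (x : R) (m : ℕ) (h : auxD coeff x < m) : coeff x m = 0 := by
  by_contra hc
  exact absurd (aux_le_D coeff x m hc) (by omega)

include hmul hcoeff hrepr in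
lemma aux_coeff_mul_top (x y : R) :
    coeff (x * y) (auxD coeff x + auxD coeff y) =
      coeff x (auxD coeff x) * (⇑s)^[auxD coeff x] (coeff y (auxD coeff y)) := by
  classical
  rw [aux_coeff_mul ι t s coeff hmul hcoeff hrepr]
  by_cases hmem : auxD coeff x ∈ (coeff x).support
  · rw [Finset.sum_eq_single (auxD coeff x)]
    · rw [if_pos (by omega), Nat.add_sub_cancel_left]
    · intro i hi hne
      have hle : i ≤ auxD coeff x := Finset.le_sup (f := id) hi
      rw [if_pos (by omega)]
      have : coeff y (auxD coeff x + auxD coeff y - i) = 0 :=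
        aux_coeff_zero_of_lt coeff y _ (by omega)
      rw [this, iterate_map_zero, mul_zero]
    · intro h; exact absurd hmem h
  · have h0 : coeff x (auxD coeff x) = 0 := Finsupp.notMem_support_iff.1 hmem
    rw [h0, zero_mul]
    apply Finset.sum_eq_zero
    intro i hi
    have hle : i ≤ auxD coeff x := Finset.le_sup (f := id) hi
    have hne : i ≠ auxD coeff x := fun h => hmem (h ▸ hi)
    rw [if_pos (by omega)]
    have : coeff y (auxD coeff x + auxD coeff y - i) = 0 :=
      aux_coeff_zero_of_lt coeff y _ (by omega)
    rw [this, iterate_map_zero, mul_zero]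

include hmul hcoeff hrepr in
lemma aux_coeff_mul_zero_of_gt (x y : R) (m : ℕ) (hm : auxD coeff x + auxD coeff y < m) :
    coeff (x * y) m = 0 := by
  classical
  rw [aux_coeff_mul ι t s coeff hmul hcoeff hrepr]
  apply Finset.sum_eq_zero
  intro i hi
  have hle : i ≤ auxD coeff x := Finset.le_sup (f := id) hi
  by_cases hkm : i ≤ m
  · rw [if_pos hkm]
    have : coeff y (m - i) = 0 := aux_coeff_zero_of_lt coeff y _ (by omega)
    rw [this, iterate_map_zero, mul_zero]
  · rw [if_neg hkm]

include hmul hcoeff hrepr in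
lemma aux_mul_ne_zero (x y : R) (hx : x ≠ 0) (hy : y ≠ 0) : x * y ≠ 0 := by
  have hinj : Function.Injective ((⇑s)^[auxD coeff x]) :=
    Function.Injective.iterate (RingHom.injective s) _
  have h1 : coeff (x * y) (auxD coeff x + auxD coeff y) ≠ 0 := by
    rw [aux_coeff_mul_top ι t s coeff hmul hcoeff hrepr]
    apply mul_ne_zero (aux_coeff_D_ne ι t coeff hrepr x hx)
    intro h
    exact aux_coeff_D_ne ι t coeff hrepr y hy (hinj (by rw [h, iterate_map_zero]))
  intro h
  rw [h, map_zero] at h1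
  exact h1 rfl

include hmul hcoeff hrepr in
lemma aux_D_mul (x y : R) (hx : x ≠ 0) (hy : y ≠ 0) :
    auxD coeff (x * y) = auxD coeff x + auxD coeff y := by
  have hinj : Function.Injective ((⇑s)^[auxD coeff x]) :=
    Function.Injective.iterate (RingHom.injective s) _
  have h1 : coeff (x * y) (auxD coeff x + auxD coeff y) ≠ 0 := by
    rw [aux_coeff_mul_top ι t s coeff hmul hcoeff hrepr]
    apply mul_ne_zero (aux_coeff_D_ne ι t coeff hrepr x hx)
    intro h
    exact aux_coeff_D_ne ι t coeff hrepr y hy (hinj (by rw [h, iterate_map_zero]))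
  apply le_antisymm
  · by_contra h
    push_neg at h
    exact aux_coeff_D_ne ι t coeff hrepr (x * y)
      (aux_mul_ne_zero ι t s coeff hmul hcoeff hrepr x y hx hy)
      (aux_coeff_mul_zero_of_gt ι t s coeff hmul hcoeff hrepr x y _ h)
  · exact aux_le_D coeff _ _ h1

include hmul hcoeff hrepr in
lemma aux_div (f : R) (hf : f ≠ 0) :
    ∀ x : R, ∃ q r : R, x = q * f + r ∧ (r = 0 ∨ auxD coeff r < auxD coeff f) := by
  classical
  have main : ∀ m : ℕ, ∀ x : R, auxD coeff x ≤ m →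
      ∃ q r : R, x = q * f + r ∧ (r = 0 ∨ auxD coeff r < auxD coeff f) := by
    intro m
    induction m using Nat.strong_induction_on with
    | _ m ih =>
      intro x hxm
      by_cases hx0 : x = 0
      · exact ⟨0, 0, by rw [hx0, zero_mul, add_zero], Or.inl rfl⟩
      by_cases hdeg : auxD coeff x < auxD coeff f
      · exact ⟨0, x, by rw [zero_mul, zero_add], Or.inr hdeg⟩
      push_neg at hdeg
      set k := auxD coeff x - auxD coeff f with hk
      set c := coeff x (auxD coeff x) * ((⇑s)^[k] (coeff f (auxD coeff f)))⁻¹ with hc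
      set u := ι c * t ^ k * f with hu
      have hcoeffu : ∀ j, coeff u j =
          if k ≤ j then c * (⇑s)^[k] (coeff f (j - k)) else 0 := fun j =>
        aux_coeff_monoMul ι t s coeff hmul hcoeff hrepr c k f j
      have hlcf : coeff f (auxD coeff f) ≠ 0 := aux_coeff_D_ne ι t coeff hrepr f hf
      have hsf : (⇑s)^[k] (coeff f (auxD coeff f)) ≠ 0 := by
        intro h
        exact hlcf ((Function.Injective.iterate (RingHom.injective s) k)
          (by rw [h, iterate_map_zero]))
      have htop : coeff u (auxD coeff x) = coeff x (auxD coeff x) := by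
        rw [hcoeffu, if_pos (by omega)]
        have : auxD coeff x - k = auxD coeff f := by omega
        rw [this, hc, mul_assoc, inv_mul_cancel₀ hsf, mul_one]
      have hhigh : ∀ j, auxD coeff x < j → coeff u j = 0 := by
        intro j hj
        rw [hcoeffu]
        by_cases hkj : k ≤ j
        · rw [if_pos hkj]
          have : coeff f (j - k) = 0 := aux_coeff_zero_of_lt coeff f _ (by omega)
          rw [this, iterate_map_zero, mul_zero]
        · rw [if_neg hkj]
      set x' := x - u with hx'
      have hzero : ∀ j, auxD coeff x ≤ j → coeff x' j = 0 := by
        intro j hj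
        rw [hx', map_sub, Finsupp.sub_apply]
        rcases Nat.lt_or_ge (auxD coeff x) j with h | h
        · rw [hhigh j h, aux_coeff_zero_of_lt coeff x j h, sub_zero]
        · have : j = auxD coeff x := by omega
          rw [this, htop, sub_self]
      by_cases hx'0 : x' = 0
      · refine ⟨ι c * t ^ k, 0, ?_, Or.inl rfl⟩
        have : x = u := by rw [← sub_eq_zero]; exact hx'0
        rw [this, add_zero, hu]
      · have hxlt : auxD coeff x' < auxD coeff x := by
          by_contra h
          push_neg at h
          exact aux_coeff_D_ne ι t coeff hrepr x' hx'0 (hzero _ h)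
        obtain ⟨q', r', hqr, hr⟩ := ih (auxD coeff x') (by omega) x' le_rfl
        refine ⟨q' + ι c * t ^ k, r', ?_, hr⟩
        rw [add_mul, ← hu]
        have : x = u + x' := by rw [hx']; noncomm_ring
        rw [this, hqr]
        abel
  exact fun x => main (auxD coeff x) x le_rfl

include hmul hcoeff hrepr in
lemma aux_gcrd (a b : R) (ha : a ≠ 0) :
    ∃ d α β e w : R, d = α * a + β * b ∧ a = e * d ∧ b = w * d := by
  classical
  have hex : ∃ m : ℕ, ∃ x : R, (x ≠ 0 ∧ ∃ α β, x = α * a + β * b) ∧ auxD coeff x = m :=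
    ⟨auxD coeff a, a, ⟨ha, 1, 0, by rw [one_mul, zero_mul, add_zero]⟩, rfl⟩
  obtain ⟨d, ⟨hd0, dα, dβ, hdab⟩, hdm⟩ := Nat.find_spec hex
  have hmin : ∀ x : R, x ≠ 0 → (∃ α β, x = α * a + β * b) →
      auxD coeff d ≤ auxD coeff x := by
    intro x hx hab
    rw [hdm]
    exact Nat.find_le ⟨x, ⟨hx, hab⟩, rfl⟩
  have key : ∀ c : R, (∃ α β, c = α * a + β * b) → ∃ w, c = w * d := by
    rintro c ⟨α, β, hc⟩
    obtain ⟨q, r, hqr, hr⟩ := aux_div ι t s coeff hmul hcoeff hrepr d hd0 c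
    by_cases hr0 : r = 0
    · exact ⟨q, by rw [hqr, hr0, add_zero]⟩
    · exfalso
      have hrlt : auxD coeff r < auxD coeff d := hr.resolve_left hr0
      have hrab : ∃ α β, r = α * a + β * b := by
        refine ⟨α - q * dα, β - q * dβ, ?_⟩
        have : r = c - q * d := by rw [hqr]; noncomm_ring
        rw [this, hc, hdab]
        noncomm_ring
      exact absurd (hmin r hr0 hrab) (by omega)
  obtain ⟨e, he⟩ := key a ⟨1, 0, by rw [one_mul, zero_mul, add_zero]⟩
  obtain ⟨w, hw⟩ := key b ⟨0, 1, by rw [one_mul, zero_mul, zero_add]⟩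
  exact ⟨d, dα, dβ, e, w, hdab, he, hw⟩

variable {F : Type} [Field F] (ψ : F →+* K) (n : ℕ)

def auxE (r : Polynomial F) : R := r.sum fun k a => ι (ψ a) * t ^ (n * k)

lemma aux_E_eval (r : Polynomial F) :
    auxE ι t ψ n r = Polynomial.eval₂ (ι.comp ψ) (t ^ n) r := by
  rw [Polynomial.eval₂_eq_sum, auxE]
  congr 1
  funext k a
  rw [RingHom.comp_apply, ← pow_mul]

variable (hsn : ∀ a : K, (⇑s)^[n] a = a)

include hmul hsn in
lemma aux_tn_comm (a : K) : Commute (ι a) (t ^ n) := by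
  have := aux_tpow_mul ι t s hmul n a
  rw [hsn] at this
  exact (Commute.symm this)

include hmul hsn in
lemma aux_E_mul (p q : Polynomial F) :
    auxE ι t ψ n (p * q) = auxE ι t ψ n p * auxE ι t ψ n q := by
  rw [aux_E_eval, aux_E_eval, aux_E_eval]
  exact Polynomial.eval₂_mul_noncomm _ _ fun k =>
    aux_tn_comm ι t s hmul n hsn (ψ (q.coeff k))

lemma aux_E_one : auxE ι t ψ n (1 : Polynomial F) = 1 := by
  rw [aux_E_eval]
  exact Polynomial.eval₂_one _ _

include hcoeff in
lemma aux_coeff_E (r : Polynomial F) (m : ℕ) :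
    coeff (auxE ι t ψ n r) m =
      ∑ k ∈ r.support, (if n * k = m then ψ (r.coeff k) else 0) := by
  rw [auxE, Polynomial.sum_def, map_sum, Finset.sum_apply']
  exact Finset.sum_congr rfl fun k _ => by rw [hcoeff, Finsupp.single_apply]

include hcoeff in
lemma aux_coeff_E_nk (hn : 0 < n) (r : Polynomial F) (k : ℕ) :
    coeff (auxE ι t ψ n r) (n * k) = ψ (r.coeff k) := by
  classical
  rw [aux_coeff_E ι t coeff hcoeff ψ n]
  by_cases hmem : k ∈ r.support
  · rw [Finset.sum_eq_single k]
    · rw [if_pos rfl]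
    · intro j hj hne
      rw [if_neg]
      intro he
      exact hne (by exact Nat.eq_of_mul_eq_mul_left hn he)
    · intro h; exact absurd hmem h
  · have h0 : r.coeff k = 0 := Polynomial.notMem_support_iff.1 hmem
    rw [h0, map_zero]
    apply Finset.sum_eq_zero
    intro j hj
    rw [if_neg]
    intro he
    have : j = k := Nat.eq_of_mul_eq_mul_left hn he
    exact hmem (this ▸ hj)

include hcoeff in
lemma aux_coeff_E_gt (r : Polynomial F) (m : ℕ) (hm : n * r.natDegree < m) :
    coeff (auxE ι t ψ n r) m = 0 := by
  rw [aux_coeff_E ι t coeff hcoeff ψ n]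
  apply Finset.sum_eq_zero
  intro k hk
  have hle : k ≤ r.natDegree := Polynomial.le_natDegree_of_mem_supp k hk
  rw [if_neg]
  intro he
  have : n * k ≤ n * r.natDegree := Nat.mul_le_mul_left n hle
  omega

include hcoeff in
lemma aux_E_ne_zero (hn : 0 < n) (r : Polynomial F) (hr : r ≠ 0) :
    coeff (auxE ι t ψ n r) (n * r.natDegree) ≠ 0 := by
  rw [aux_coeff_E_nk ι t coeff hcoeff ψ n hn]
  intro h
  exact Polynomial.leadingCoeff_ne_zero.2 hr (RingHom.injective ψ (by rw [Polynomial.leadingCoeff, h, map_zero]))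

include hcoeff hrepr in
lemma aux_D_E (hn : 0 < n) (r : Polynomial F) (hr : r ≠ 0) :
    auxD coeff (auxE ι t ψ n r) = n * r.natDegree := by
  apply le_antisymm
  · by_contra h
    push_neg at h
    have hne : auxE ι t ψ n r ≠ 0 := fun h0 => by
      have := aux_E_ne_zero ι t coeff hcoeff ψ n hn r hr
      rw [h0, map_zero] at this
      exact this rfl
    exact aux_coeff_D_ne ι t coeff hrepr _ hne
      (aux_coeff_E_gt ι t coeff hcoeff ψ n r _ h)
  · exact aux_le_D coeff _ _ (aux_E_ne_zero ι t coeff hcoeff ψ n hn r hr)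

variable (hψ : ∀ a : F, s (ψ a) = ψ a)

include hmul hrepr hsn hψ in
lemma aux_E_comm (r : Polynomial F) (x : R) : Commute (auxE ι t ψ n r) x := by
  have hfix1 : ∀ (k : ℕ) (b : K), (⇑s)^[n * k] b = b := by
    intro k b
    induction k with
    | zero => simp
    | succ k ih => rw [Nat.mul_succ, Function.iterate_add_apply, hsn, ih]
  have hfix2 : ∀ (j : ℕ) (a : F), (⇑s)^[j] (ψ a) = ψ a := by
    intro j a
    induction j with
    | zero => simp
    | succ j ih => rw [Function.iterate_succ_apply, hψ, ih]
  have hmono : ∀ (a : F) (k : ℕ) (b : K) (j : ℕ),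
      Commute (ι (ψ a) * t ^ (n * k)) (ι b * t ^ j) := by
    intro a k b j
    unfold Commute SemiconjBy
    rw [aux_mono_mul ι t s hmul, aux_mono_mul ι t s hmul, hfix1, hfix2,
      mul_comm (ψ a) b, Nat.add_comm]
  rw [auxE, Polynomial.sum_def]
  apply Commute.sum_left
  intro k _
  rw [← hrepr x, Finsupp.sum]
  apply Commute.sum_right
  intro j _
  exact hmono _ _ _ _

end Aux

/-- If `f ∈ R = K[t;σ]` is irreducible and `h(t) = ĥ(t^n)` (with `ĥ ∈ F[x]` monic)
is the monic central left multiple of `f` of minimal degree, then `ĥ` is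
irreducible in `F[x]`. -/
theorem minimal_central_left_multiple_irreducible
    (F K : Type) [Field F] [Field K] [Algebra F K] [IsGalois F K]
    (n : ℕ) (hn : 0 < n) (hdim : Module.finrank F K = n)
    (σ : K ≃ₐ[F] K) (hσgen : ∀ τ : K ≃ₐ[F] K, τ ∈ Subgroup.zpowers σ)
    (R : Type) [Ring R] (ι : K →+* R) (t : R)
    (hmul : ∀ a : K, t * ι a = ι (σ a) * t)
    (coeff : R →+ (ℕ →₀ K))
    (hcoeff : ∀ (a : K) (i : ℕ), coeff (ι a * t ^ i) = Finsupp.single i a)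
    (hrepr : ∀ x : R, (coeff x).sum (fun i a => ι a * t ^ i) = x)
    (f : R) (hf : Irreducible f)
    (hhat : Polynomial F) (hmonic : hhat.Monic)
    -- h(t) = ĥ(t^n) is a left multiple of f:
    (hleft : ∃ g : R, (hhat.sum fun k a => ι (algebraMap F K a) * t ^ (n * k)) = g * f)
    -- it is central and of minimal degree among nonzero central left multiples of f:
    (hcentral : (hhat.sum fun k a => ι (algebraMap F K a) * t ^ (n * k)) ∈ Subring.center R)
    (hminimal : ∀ c : R, c ∈ Subring.center R → c ≠ 0 → (∃ g : R, c = g * f) →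
      (coeff (hhat.sum fun k a => ι (algebraMap F K a) * t ^ (n * k))).support.sup id ≤
        (coeff c).support.sup id) :
    Irreducible hhat := by
  classical
  -- basic setup
  have hFD : FiniteDimensional F K := FiniteDimensional.of_finrank_pos (hdim ▸ hn)
  have hcard : Fintype.card (K ≃ₐ[F] K) = n := by
    rw [← Nat.card_eq_fintype_card, IsGalois.card_aut_eq_finrank, hdim]
  have hσn : σ ^ n = 1 := by rw [← hcard]; exact pow_card_eq_one
  set s : K →+* K := RingHomClass.toRingHom σ with hs
  have hmuls : ∀ a : K, t * ι a = ι (s a) * t := hmul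
  have hiter : ∀ (m : ℕ) (a : K), (⇑s)^[m] a = (σ ^ m) a := by
    intro m
    induction m with
    | zero => intro a; simp
    | succ m ih =>
      intro a
      rw [Function.iterate_succ_apply', ih, pow_succ', AlgEquiv.mul_apply]
      rfl
  have hsn : ∀ a : K, (⇑s)^[n] a = a := by
    intro a; rw [hiter, hσn]; rfl
  have hψ : ∀ a : F, s (algebraMap F K a) = algebraMap F K a := fun a => σ.commutes a
  have h10 : (1 : R) ≠ 0 := by
    intro h
    have h1 : coeff (1 : R) = Finsupp.single 0 (1 : K) := by
      have := hcoeff 1 0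
      rwa [map_one, pow_zero, mul_one] at this
    rw [h, map_zero] at h1
    have := congrFun (congrArg (fun g : ℕ →₀ K => (g : ℕ → K)) h1) 0
    simp at this
  have hf0 : f ≠ 0 := by
    rintro rfl
    rcases hf.isUnit_or_isUnit (mul_zero (0 : R)).symm with h | h <;>
      exact h10 (isUnit_zero_iff.1 h).symm
  -- notation
  have hcomm : ∀ (r : Polynomial F) (x : R),
      Commute (auxE ι t (algebraMap F K) n r) x :=
    aux_E_comm ι t s coeff hmuls hrepr (algebraMap F K) n hsn hψ
  have hcent : ∀ r : Polynomial F, auxE ι t (algebraMap F K) n r ∈ Subring.center R :=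
    fun r => Subring.mem_center_iff.2 fun g => ((hcomm r g).symm).eq
  have hEne : ∀ r : Polynomial F, r ≠ 0 → auxE ι t (algebraMap F K) n r ≠ 0 := by
    intro r hr h
    have := aux_E_ne_zero ι t coeff hcoeff (algebraMap F K) n hn r hr
    rw [h, map_zero] at this
    exact this rfl
  constructor
  · -- hhat is not a unit
    intro hu
    have h1 : hhat = 1 := hmonic.eq_one_of_isUnit hu
    obtain ⟨g, hg⟩ := hleft
    rw [h1] at hg
    have hg1 : (1 : R) = g * f :=
      (aux_E_one ι t (algebraMap F K) n (R := R)).symm.trans hg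
    have hgf : g * f = 1 := hg1.symm
    have h2 : (f * g - 1) * f = 0 := by
      rw [sub_mul, one_mul, mul_assoc, hgf, mul_one, sub_self]
    have hfg : f * g = 1 := by
      by_contra hne
      exact aux_mul_ne_zero ι t s coeff hmuls hcoeff hrepr _ f
        (sub_ne_zero.2 hne) hf0 h2
    exact hf.not_isUnit ⟨⟨f, g, hfg, hgf⟩, rfl⟩
  · rintro p q hpq
    have hh0 : hhat ≠ 0 := hmonic.ne_zero
    have hp0 : p ≠ 0 := fun h => hh0 (by rw [hpq, h, zero_mul])
    have hq0 : q ≠ 0 := fun h => hh0 (by rw [hpq, h, mul_zero])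
    obtain ⟨g, hg⟩ := hleft
    have hgE : auxE ι t (algebraMap F K) n hhat = g * f := hg
    have hEpq : auxE ι t (algebraMap F K) n p * auxE ι t (algebraMap F K) n q = g * f := by
      rw [← aux_E_mul ι t s hmuls (algebraMap F K) n hsn, ← hpq]
      exact hgE
    have hdeg : hhat.natDegree = p.natDegree + q.natDegree := by
      rw [hpq]; exact Polynomial.natDegree_mul hp0 hq0
    have hDh : auxD coeff (auxE ι t (algebraMap F K) n hhat) = n * hhat.natDegree :=
      aux_D_E ι t coeff hcoeff hrepr (algebraMap F K) n hn hhat hh0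
    have hunit : ∀ r : Polynomial F, r ≠ 0 → r.natDegree = 0 → IsUnit r := by
      intro r hr h0
      have hC : r = Polynomial.C (r.coeff 0) := Polynomial.eq_C_of_natDegree_eq_zero h0
      rw [hC]
      refine Polynomial.isUnit_C.2 (isUnit_iff_ne_zero.2 fun h => hr ?_)
      rw [hC, h, map_zero]
    obtain ⟨d, α, β, e, w, hd, hfd, hpd⟩ :=
      aux_gcrd ι t s coeff hmuls hcoeff hrepr f (auxE ι t (algebraMap F K) n p) hf0
    rcases hf.isUnit_or_isUnit hfd with he | hdu
    · -- f right-divides E p, hence q has degree ≥ deg hhat... gives IsUnit q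
      obtain ⟨uu, huu⟩ := he
      have hd2 : d = ↑uu⁻¹ * f := by
        rw [hfd, ← huu, ← mul_assoc, Units.inv_mul, one_mul]
      have hEpf : auxE ι t (algebraMap F K) n p = (w * ↑uu⁻¹) * f := by
        rw [hpd, hd2, mul_assoc]
      have hmin := hminimal (auxE ι t (algebraMap F K) n p) (hcent p)
        (hEne p hp0) ⟨w * ↑uu⁻¹, hEpf⟩
      have hmin' : auxD coeff (auxE ι t (algebraMap F K) n hhat) ≤
          auxD coeff (auxE ι t (algebraMap F K) n p) := hmin
      rw [hDh, aux_D_E ι t coeff hcoeff hrepr (algebraMap F K) n hn p hp0] at hmin'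
      have := Nat.le_of_mul_le_mul_left hmin' hn
      right
      exact hunit q hq0 (by omega)
    · -- d is a unit; then f right-divides E q, gives IsUnit p
      obtain ⟨uu, huu⟩ := hdu
      have h1 : auxE ι t (algebraMap F K) n q =
          auxE ι t (algebraMap F K) n q * ↑uu⁻¹ * d := by
        rw [← huu, mul_assoc, Units.inv_mul, mul_one]
      have key : auxE ι t (algebraMap F K) n q =
          (auxE ι t (algebraMap F K) n q * ↑uu⁻¹ * α + ↑uu⁻¹ * β * g) * f := by
        rw [add_mul]
        conv_lhs => rw [h1, hd]
        rw [mul_add]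
        congr 1
        · simp only [mul_assoc]
        · calc auxE ι t (algebraMap F K) n q * ↑uu⁻¹ * (β * auxE ι t (algebraMap F K) n p)
              = auxE ι t (algebraMap F K) n q *
                  (↑uu⁻¹ * (β * auxE ι t (algebraMap F K) n p)) := by
                rw [mul_assoc]
            _ = ↑uu⁻¹ * (β * auxE ι t (algebraMap F K) n p) *
                  auxE ι t (algebraMap F K) n q := ((hcomm q _).symm).eq.symm
            _ = ↑uu⁻¹ * β * (auxE ι t (algebraMap F K) n p *
                  auxE ι t (algebraMap F K) n q) := by
                simp only [mul_assoc]
            _ = ↑uu⁻¹ * β * (g * f) := by rw [hEpq]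
            _ = ↑uu⁻¹ * β * g * f := by simp only [mul_assoc]
      have hmin := hminimal (auxE ι t (algebraMap F K) n q) (hcent q)
        (hEne q hq0) ⟨_, key⟩
      have hmin' : auxD coeff (auxE ι t (algebraMap F K) n hhat) ≤
          auxD coeff (auxE ι t (algebraMap F K) n q) := hmin
      rw [hDh, aux_D_E ι t coeff hcoeff hrepr (algebraMap F K) n hn q hq0] at hmin'
      have := Nat.le_of_mul_le_mul_left hmin' hn
      left
      exact hunit p hp0 (by omega)
end

section
/- Let K/F be a finite cyclic Galois extension of degree n with Gal(K/F)=⟨σ⟩ and R = K[t;σ]. Suppose f ∈ R satisfies gcrd(f,t) = 1 and its minimal central left multiple h(t) = ĥ(t^n) has ĥ ∈ F[x] irreducible. Then f factors as f = f₁⋯f_r with each f_i irreducible in R and any two of the f_i similar (i.e. R/Rf_i ≅ R/Rf_j as left R-modules). -/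
set_option linter.unusedSectionVars false

namespace SkewFactor

variable {F K : Type} [Field F] [Field K] [Algebra F K] [IsGalois F K]
variable {n : ℕ} {σ : K ≃ₐ[F] K}
variable {R : Type} [Ring R] {ι : K →+* R} {t : R}
variable {coeff : R →+ (ℕ →₀ K)}

/-- The degree (sup of the support; `0` for `x = 0`). -/
noncomputable def dg (coeff : R →+ (ℕ →₀ K)) (x : R) : ℕ := ((coeff x).support.sup id)

/-- The natural map `F[x] → R`, `x ↦ t^n`. -/
noncomputable def Phi (ι : K →+* R) (t : R) (n : ℕ) (p : Polynomial F) : R :=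
  Polynomial.eval₂ (ι.comp (algebraMap F K)) (t ^ n) p

section Basic
variable (hmul : ∀ a : K, t * ι a = ι (σ a) * t)
variable (hcoeff : ∀ (a : K) (i : ℕ), coeff (ι a * t ^ i) = Finsupp.single i a)
variable (hrepr : ∀ x : R, (coeff x).sum (fun i a => ι a * t ^ i) = x)

include hcoeff hrepr in
lemma coeff_injective : Function.Injective coeff := by
  intro x y hxy
  rw [← hrepr x, ← hrepr y, hxy]

include hmul in
lemma tpow_mul (i : ℕ) (a : K) : t ^ i * ι a = ι ((σ ^ i) a) * t ^ i := by
  induction i generalizing a with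
  | zero => simp
  | succ i ih =>
      rw [pow_succ, mul_assoc, hmul, ← mul_assoc, ih (σ a), mul_assoc, ← pow_succ]
      rw [pow_succ σ i]
      rfl

include hmul in
lemma mon_mul (a b : K) (i j : ℕ) :
    (ι a * t ^ i) * (ι b * t ^ j) = ι (a * (σ ^ i) b) * t ^ (i + j) := by
  rw [mul_assoc, ← mul_assoc (t ^ i), tpow_mul hmul, mul_assoc, ← pow_add, ← mul_assoc,
    ← map_mul]

include hmul hcoeff hrepr in
lemma coeff_mul (x y : R) :
    coeff (x * y) = (coeff x).sum fun i a => (coeff y).sum fun j b =>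
      Finsupp.single (i + j) (a * (σ ^ i) b) := by
  conv_lhs => rw [← hrepr x, ← hrepr y]
  rw [Finsupp.sum_mul]
  rw [map_finsuppSum]
  refine Finsupp.sum_congr fun i hi => ?_
  rw [Finsupp.mul_sum, map_finsuppSum]
  refine Finsupp.sum_congr fun j hj => ?_
  rw [mon_mul hmul, hcoeff]

include hmul hcoeff hrepr in
lemma coeff_mul_apply (x y : R) (k : ℕ) :
    coeff (x * y) k = ∑ i ∈ (coeff x).support, ∑ j ∈ (coeff y).support,
      (if i + j = k then (coeff x i) * ((σ ^ i) (coeff y j)) else 0) := by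
  rw [coeff_mul hmul hcoeff hrepr]
  simp only [Finsupp.sum, Finset.sum_apply', Finsupp.single_apply]

include hmul hcoeff hrepr

lemma coeff_one' : coeff (1 : R) = Finsupp.single 0 1 := by
  simpa using hcoeff 1 0

lemma coeff_iota (a : K) : coeff (ι a) = Finsupp.single 0 a := by
  simpa using hcoeff a 0

lemma coeff_t : coeff t = Finsupp.single 1 1 := by
  simpa using hcoeff 1 1

lemma eq_zero_of_coeff_eq_zero {x : R} (h : ∀ k, coeff x k = 0) : x = 0 := by
  have hc : coeff x = 0 := Finsupp.ext h
  calc x = (coeff x).sum (fun i a => ι a * t ^ i) := (hrepr x).symm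
  _ = 0 := by rw [hc, Finsupp.sum_zero_index]

lemma nontrivialR : (1 : R) ≠ 0 := by
  intro h01
  have h1 := coeff_one' hmul hcoeff hrepr (ι := ι) (t := t)
  rw [h01, map_zero] at h1
  exact one_ne_zero (Finsupp.single_eq_zero.mp h1.symm)

lemma mem_support_le {x : R} {k : ℕ} (h : k ∈ (coeff x).support) : k ≤ dg coeff x :=
  Finset.le_sup (f := id) h

lemma coeff_eq_zero_of_dg_lt {x : R} {k : ℕ} (h : dg coeff x < k) : coeff x k = 0 := by
  by_contra hc
  exact absurd (mem_support_le hmul hcoeff hrepr (Finsupp.mem_support_iff.mpr hc)) (not_le.mpr h)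

lemma dg_mem_support {x : R} (hx : x ≠ 0) : dg coeff x ∈ (coeff x).support := by
  have hne : (coeff x).support.Nonempty := by
    rw [Finsupp.support_nonempty_iff]
    intro hc
    exact hx (eq_zero_of_coeff_eq_zero hmul hcoeff hrepr (fun k => by rw [hc]; rfl))
  have h1 : (coeff x).support.sup id = (coeff x).support.max' hne := by
    rw [Finset.max'_eq_sup', Finset.sup'_eq_sup]
  rw [dg, h1]
  exact Finset.max'_mem _ hne

lemma lc_ne_zero {x : R} (hx : x ≠ 0) : coeff x (dg coeff x) ≠ 0 :=
  Finsupp.mem_support_iff.mp (dg_mem_support hmul hcoeff hrepr hx)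

lemma coeff_mul_top (x y : R) :
    coeff (x * y) (dg coeff x + dg coeff y)
      = coeff x (dg coeff x) * (σ ^ (dg coeff x)) (coeff y (dg coeff y)) := by
  by_cases hx : x = 0
  · simp [hx]
  by_cases hy : y = 0
  · simp [hy]
  rw [coeff_mul_apply hmul hcoeff hrepr]
  have houter : ∀ i ∈ (coeff x).support, i ≠ dg coeff x →
      (∑ j ∈ (coeff y).support,
        if i + j = dg coeff x + dg coeff y then coeff x i * (σ ^ i) (coeff y j) else 0) = 0 := by
    intro i hi hine
    refine Finset.sum_eq_zero fun j hj => if_neg (fun hc => ?_)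
    have h1 := mem_support_le hmul hcoeff hrepr hi
    have h2 := mem_support_le hmul hcoeff hrepr hj
    omega
  rw [Finset.sum_eq_single_of_mem (dg coeff x) (dg_mem_support hmul hcoeff hrepr hx) houter]
  have hinner : ∀ j ∈ (coeff y).support, j ≠ dg coeff y →
      (if dg coeff x + j = dg coeff x + dg coeff y
        then coeff x (dg coeff x) * (σ ^ (dg coeff x)) (coeff y j) else 0) = 0 := by
    intro j hj hjne
    exact if_neg (fun hc => hjne (by omega))
  rw [Finset.sum_eq_single_of_mem (dg coeff y) (dg_mem_support hmul hcoeff hrepr hy) hinner,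
    if_pos rfl]

lemma coeff_mul_high {x y : R} {k : ℕ} (hk : dg coeff x + dg coeff y < k) :
    coeff (x * y) k = 0 := by
  rw [coeff_mul_apply hmul hcoeff hrepr]
  refine Finset.sum_eq_zero fun i hi => Finset.sum_eq_zero fun j hj => if_neg (fun hc => ?_)
  have h1 := mem_support_le hmul hcoeff hrepr hi
  have h2 := mem_support_le hmul hcoeff hrepr hj
  omega

lemma mul_ne_zero' {x y : R} (hx : x ≠ 0) (hy : y ≠ 0) : x * y ≠ 0 := by
  have htop : coeff (x * y) (dg coeff x + dg coeff y) ≠ 0 := by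
    rw [coeff_mul_top hmul hcoeff hrepr]
    exact mul_ne_zero (lc_ne_zero hmul hcoeff hrepr hx)
      (fun hc => lc_ne_zero hmul hcoeff hrepr hy
        ((σ ^ (dg coeff x)).injective (by simpa using hc)))
  intro hc
  rw [hc, map_zero] at htop
  simp at htop

lemma eq_zero_or_eq_zero {x y : R} (h : x * y = 0) : x = 0 ∨ y = 0 := by
  by_contra hc
  push_neg at hc
  exact mul_ne_zero' hmul hcoeff hrepr hc.1 hc.2 h

lemma mul_right_cancel'' {x y z : R} (hz : z ≠ 0) (h : x * z = y * z) : x = y := by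
  have : (x - y) * z = 0 := by rw [sub_mul, h, sub_self]
  rcases eq_zero_or_eq_zero hmul hcoeff hrepr this with h1 | h1
  · exact sub_eq_zero.mp h1
  · exact absurd h1 hz

lemma dg_mul {x y : R} (hx : x ≠ 0) (hy : y ≠ 0) :
    dg coeff (x * y) = dg coeff x + dg coeff y := by
  refine le_antisymm (Finset.sup_le fun k hk => ?_) ?_
  · have := Finsupp.mem_support_iff.mp hk
    by_contra hc
    simp only [id_eq] at hc
    exact this (coeff_mul_high hmul hcoeff hrepr (by omega))
  · refine Finset.le_sup (f := id) (Finsupp.mem_support_iff.mpr ?_)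
    rw [coeff_mul_top hmul hcoeff hrepr]
    exact mul_ne_zero (lc_ne_zero hmul hcoeff hrepr hx)
      (fun hc => lc_ne_zero hmul hcoeff hrepr hy
        ((σ ^ (dg coeff x)).injective (by simpa using hc)))

lemma lc_mul {x y : R} :
    coeff (x * y) (dg coeff x + dg coeff y)
      = coeff x (dg coeff x) * (σ ^ (dg coeff x)) (coeff y (dg coeff y)) :=
  coeff_mul_top hmul hcoeff hrepr x y

lemma dg_iota (a : K) : dg coeff (ι a) = 0 := by
  rw [dg, coeff_iota hmul hcoeff hrepr]
  exact Nat.le_zero.mp (Finset.sup_le fun k hk => by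
    have := Finsupp.support_single_subset hk
    simp only [Finset.mem_singleton] at this
    simp [this])

lemma dg_one : dg coeff (1 : R) = 0 := by
  have : (1 : R) = ι 1 := by rw [map_one]
  rw [this, dg_iota hmul hcoeff hrepr]

lemma eq_iota_of_dg_eq_zero {x : R} (h : dg coeff x = 0) : x = ι (coeff x 0) := by
  refine coeff_injective hcoeff hrepr ?_
  rw [coeff_iota hmul hcoeff hrepr]
  ext k
  rcases Nat.eq_zero_or_pos k with rfl | hk
  · simp
  · rw [coeff_eq_zero_of_dg_lt hmul hcoeff hrepr (by omega), Finsupp.single_apply,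
      if_neg (by omega)]

lemma isUnit_iota {a : K} (ha : a ≠ 0) : IsUnit (ι a) := by
  refine ⟨⟨ι a, ι a⁻¹, ?_, ?_⟩, rfl⟩
  · rw [← map_mul, mul_inv_cancel₀ ha, map_one]
  · rw [← map_mul, inv_mul_cancel₀ ha, map_one]

lemma isUnit_of_dg_eq_zero {x : R} (hx : x ≠ 0) (h : dg coeff x = 0) : IsUnit x := by
  rw [eq_iota_of_dg_eq_zero hmul hcoeff hrepr h]
  refine isUnit_iota hmul hcoeff hrepr (fun hc => ?_)
  exact hx (by rw [eq_iota_of_dg_eq_zero hmul hcoeff hrepr h, hc, map_zero])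

lemma dg_of_isUnit {x : R} (h : IsUnit x) : x ≠ 0 ∧ dg coeff x = 0 := by
  obtain ⟨u, rfl⟩ := h
  have h1 : (u : R) * (u⁻¹ : Rˣ) = 1 := u.mul_inv
  have hu : (u : R) ≠ 0 := by
    intro hc
    rw [hc, zero_mul] at h1
    exact nontrivialR hmul hcoeff hrepr h1.symm
  have hv : ((u⁻¹ : Rˣ) : R) ≠ 0 := by
    intro hc
    rw [hc, mul_zero] at h1
    exact nontrivialR hmul hcoeff hrepr h1.symm
  refine ⟨hu, ?_⟩
  have := dg_mul hmul hcoeff hrepr hu hv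
  rw [h1, dg_one hmul hcoeff hrepr] at this
  omega

lemma isUnit_of_left_inverse {u v : R} (h : v * u = 1) : IsUnit u := by
  have hu : u ≠ 0 := by
    intro hc
    rw [hc, mul_zero] at h
    exact nontrivialR hmul hcoeff hrepr h.symm
  have h2 : (u * v - 1) * u = 0 := by
    rw [sub_mul, one_mul, mul_assoc, h, mul_one, sub_self]
  rcases eq_zero_or_eq_zero hmul hcoeff hrepr h2 with h3 | h3
  · have huv : u * v = 1 := by rwa [sub_eq_zero] at h3
    exact ⟨⟨u, v, huv, h⟩, rfl⟩
  · exact absurd h3 hu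

lemma coeff_iota_mul (c : K) (x : R) (k : ℕ) : coeff (ι c * x) k = c * coeff x k := by
  by_cases hc : c = 0
  · simp [hc]
  rw [coeff_mul_apply hmul hcoeff hrepr, coeff_iota hmul hcoeff hrepr,
    Finsupp.support_single_ne_zero _ hc, Finset.sum_singleton]
  simp only [Finsupp.single_eq_same, zero_add, pow_zero, AlgEquiv.one_apply]
  by_cases hk : k ∈ (coeff x).support
  · rw [Finset.sum_ite_eq' (coeff x).support k (fun j => c * coeff x j), if_pos hk]
  · rw [Finset.sum_ite_eq' (coeff x).support k (fun j => c * coeff x j), if_neg hk]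
    rw [Finsupp.notMem_support_iff.mp hk, mul_zero]

lemma coeff_mul_iota (x : R) (c : K) (k : ℕ) : coeff (x * ι c) k = coeff x k * (σ ^ k) c := by
  by_cases hc : c = 0
  · simp [hc]
  rw [coeff_mul_apply hmul hcoeff hrepr, coeff_iota hmul hcoeff hrepr]
  rw [Finset.sum_congr rfl (fun i (hi : i ∈ (coeff x).support) => by
    rw [Finsupp.support_single_ne_zero _ hc, Finset.sum_singleton])]
  simp only [Finsupp.single_eq_same, add_zero]
  by_cases hk : k ∈ (coeff x).support
  · rw [Finset.sum_ite_eq' (coeff x).support k (fun i => coeff x i * (σ ^ i) c), if_pos hk]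
  · rw [Finset.sum_ite_eq' (coeff x).support k (fun i => coeff x i * (σ ^ i) c), if_neg hk]
    rw [Finsupp.notMem_support_iff.mp hk, zero_mul]

lemma coeff_mul_zero' (x y : R) : coeff (x * y) 0 = coeff x 0 * coeff y 0 := by
  rw [coeff_mul_apply hmul hcoeff hrepr]
  have h1 : ∀ i ∈ (coeff x).support, i ≠ 0 →
      (∑ j ∈ (coeff y).support, if i + j = 0 then coeff x i * (σ ^ i) (coeff y j) else 0) = 0 :=
    fun i _ hine => Finset.sum_eq_zero fun j _ => if_neg (by omega)
  by_cases hx0 : (0 : ℕ) ∈ (coeff x).support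
  · rw [Finset.sum_eq_single_of_mem 0 hx0 h1]
    by_cases hy0 : (0 : ℕ) ∈ (coeff y).support
    · rw [Finset.sum_eq_single_of_mem 0 hy0 (fun j _ hjne => if_neg (by omega))]
      simp
    · rw [Finset.sum_eq_zero (fun j hj => if_neg (fun hc => hy0 (by
        have : j = 0 := by omega
        rwa [this] at hj))), Finsupp.notMem_support_iff.mp hy0, mul_zero]
  · rw [Finset.sum_eq_zero (fun i hi => Finset.sum_eq_zero (fun j hj => if_neg (fun hc => hx0 (by
      have : i = 0 := by omega
      rwa [this] at hi)))), Finsupp.notMem_support_iff.mp hx0, zero_mul]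

lemma t_ne_zero' : (t : R) ≠ 0 := by
  intro h0
  have h1 := coeff_t hmul hcoeff hrepr (ι := ι)
  rw [h0, map_zero] at h1
  exact one_ne_zero (Finsupp.single_eq_zero.mp h1.symm)

lemma coeff_mul_t (x : R) (k : ℕ) : coeff (x * t) (k + 1) = coeff x k := by
  have ht : coeff t = Finsupp.single 1 1 := coeff_t hmul hcoeff hrepr
  rw [coeff_mul_apply hmul hcoeff hrepr, ht, Finsupp.support_single_ne_zero _ (one_ne_zero)]
  rw [Finset.sum_congr rfl (fun i (_ : i ∈ (coeff x).support) => by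
    rw [Finset.sum_singleton, Finsupp.single_eq_same, map_one, mul_one])]
  have h2 : ∀ i ∈ (coeff x).support,
      (if i + 1 = k + 1 then coeff x i else 0) = (if i = k then coeff x i else 0) := by
    intro i _
    by_cases he : i = k
    · rw [if_pos he, if_pos (by omega)]
    · rw [if_neg he, if_neg (by omega)]
  rw [Finset.sum_congr rfl h2, Finset.sum_ite_eq' _ k (fun i => coeff x i)]
  by_cases hk : k ∈ (coeff x).support
  · rw [if_pos hk]
  · rw [if_neg hk, Finsupp.notMem_support_iff.mp hk]

lemma coeff_mul_t_zero (x : R) : coeff (x * t) 0 = 0 := by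
  have ht : coeff t = Finsupp.single 1 1 := coeff_t hmul hcoeff hrepr
  rw [coeff_mul_apply hmul hcoeff hrepr, ht, Finsupp.support_single_ne_zero _ (one_ne_zero)]
  exact Finset.sum_eq_zero fun i _ => by rw [Finset.sum_singleton, if_neg (by omega)]

lemma coeff_t_mul (x : R) (k : ℕ) : coeff (t * x) (k + 1) = σ (coeff x k) := by
  have ht : coeff t = Finsupp.single 1 1 := coeff_t hmul hcoeff hrepr
  rw [coeff_mul_apply hmul hcoeff hrepr, ht, Finsupp.support_single_ne_zero _ (one_ne_zero)]
  rw [Finset.sum_singleton, Finsupp.single_eq_same]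
  have h2 : ∀ j ∈ (coeff x).support,
      (if 1 + j = k + 1 then (1 : K) * (σ ^ 1) (coeff x j) else 0)
        = (if j = k then σ (coeff x j) else 0) := by
    intro j _
    by_cases he : j = k
    · rw [if_pos he, if_pos (by omega), one_mul, pow_one]
    · rw [if_neg he, if_neg (by omega)]
  rw [Finset.sum_congr rfl h2, Finset.sum_ite_eq' _ k (fun j => σ (coeff x j))]
  by_cases hk : k ∈ (coeff x).support
  · rw [if_pos hk]
  · rw [if_neg hk, Finsupp.notMem_support_iff.mp hk, map_zero]

lemma coeff_t_mul_zero (x : R) : coeff (t * x) 0 = 0 := by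
  have ht : coeff t = Finsupp.single 1 1 := coeff_t hmul hcoeff hrepr
  rw [coeff_mul_apply hmul hcoeff hrepr, ht, Finsupp.support_single_ne_zero _ (one_ne_zero)]
  rw [Finset.sum_singleton]
  exact Finset.sum_eq_zero fun j _ => by rw [if_neg (by omega)]

lemma dg_t : dg coeff (t : R) = 1 := by
  rw [dg, coeff_t hmul hcoeff hrepr, Finsupp.support_single_ne_zero _ (one_ne_zero)]
  simp

lemma dg_le_one_decomp {w : R} (hw : dg coeff w ≤ 1) :
    w = ι (coeff w 1) * t + ι (coeff w 0) := by
  refine coeff_injective hcoeff hrepr ?_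
  rw [map_add]
  have h1 : coeff (ι (coeff w 1) * t) = Finsupp.single 1 (coeff w 1) := by
    have := hcoeff (coeff w 1) 1
    rwa [pow_one] at this
  rw [h1, coeff_iota hmul hcoeff hrepr]
  ext k
  rw [Finsupp.add_apply, Finsupp.single_apply, Finsupp.single_apply]
  match k with
  | 0 => simp
  | 1 => simp
  | (m+2) =>
      rw [coeff_eq_zero_of_dg_lt hmul hcoeff hrepr (by omega), if_neg (by omega),
        if_neg (by omega)]
      simp

lemma support_nonempty' {x : R} (hx : x ≠ 0) : (coeff x).support.Nonempty := by
  rw [Finsupp.support_nonempty_iff]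
  intro hc
  exact hx (eq_zero_of_coeff_eq_zero hmul hcoeff hrepr (fun k => by rw [hc]; rfl))

lemma coeff_mul_min {x : R} (y : R) (hne : (coeff x).support.Nonempty) :
    coeff (x * y) ((coeff x).support.min' hne)
      = coeff x ((coeff x).support.min' hne)
        * (σ ^ ((coeff x).support.min' hne)) (coeff y 0) := by
  set m := (coeff x).support.min' hne with hm
  rw [coeff_mul_apply hmul hcoeff hrepr]
  have houter : ∀ i ∈ (coeff x).support, i ≠ m →
      (∑ j ∈ (coeff y).support, if i + j = m then coeff x i * (σ ^ i) (coeff y j) else 0)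
        = 0 := by
    intro i hi hine
    have h1 : m ≤ i := Finset.min'_le _ i hi
    exact Finset.sum_eq_zero fun j _ => if_neg (by omega)
  rw [Finset.sum_eq_single_of_mem m (Finset.min'_mem _ hne) houter]
  rw [Finset.sum_eq_single 0 (fun j _ hjne => if_neg (by omega))
    (fun h0 => by rw [if_pos (by omega), Finsupp.notMem_support_iff.mp h0, map_zero, mul_zero])]
  rw [if_pos (by omega)]

lemma mem_span_singleton'' {x d : R} :
    x ∈ Submodule.span R ({d} : Set R) ↔ ∃ c : R, x = c * d := by
  rw [Submodule.mem_span_singleton]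
  constructor
  · rintro ⟨c, rfl⟩; exact ⟨c, by rw [smul_eq_mul]⟩
  · rintro ⟨c, rfl⟩; exact ⟨c, by rw [smul_eq_mul]⟩

lemma div_mod (x y : R) (hy : y ≠ 0) :
    ∃ q r : R, x = q * y + r ∧ (r = 0 ∨ dg coeff r < dg coeff y) := by
  suffices H : ∀ d x, dg coeff x ≤ d →
      ∃ q r : R, x = q * y + r ∧ (r = 0 ∨ dg coeff r < dg coeff y) by
    exact H (dg coeff x) x le_rfl
  intro d
  induction d using Nat.strong_induction_on with
  | _ d IH =>
  intro x hxd
  by_cases hx0 : x = 0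
  · exact ⟨0, 0, by simp [hx0], Or.inl rfl⟩
  by_cases hlt : dg coeff x < dg coeff y
  · exact ⟨0, x, by simp, Or.inr hlt⟩
  push_neg at hlt
  set e := dg coeff x - dg coeff y with he
  have hedg : e + dg coeff y = dg coeff x := by omega
  have hv : (σ ^ e) (coeff y (dg coeff y)) ≠ 0 :=
    fun h0 => (lc_ne_zero hmul hcoeff hrepr hy) ((σ ^ e).injective (by simpa using h0))
  set c := coeff x (dg coeff x) * ((σ ^ e) (coeff y (dg coeff y)))⁻¹ with hc
  have hcne : c ≠ 0 := mul_ne_zero (lc_ne_zero hmul hcoeff hrepr hx0) (inv_ne_zero hv)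
  set m : R := ι c * t ^ e with hm
  have hmne : m ≠ 0 := by
    intro h0
    have h1 := hcoeff c e
    rw [← hm, h0, map_zero] at h1
    exact hcne (Finsupp.single_eq_zero.mp h1.symm)
  have hdgm : dg coeff m = e := by
    rw [dg, hm, hcoeff, Finsupp.support_single_ne_zero _ hcne]
    simp
  have hcm : coeff m e = c := by rw [hm, hcoeff]; simp
  have hdgmy : dg coeff (m * y) = dg coeff x := by
    rw [dg_mul hmul hcoeff hrepr hmne hy, hdgm, hedg]
  have hlcmy : coeff (m * y) (dg coeff x) = coeff x (dg coeff x) := by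
    have h1 := coeff_mul_top hmul hcoeff hrepr m y
    rw [hdgm, hcm, hedg] at h1
    rw [h1, hc, mul_assoc, inv_mul_cancel₀ hv, mul_one]
  set x' := x - m * y with hx'
  have hx'coeff : ∀ k, dg coeff x ≤ k → coeff x' k = 0 := by
    intro k hk
    have h2 : coeff x' k = coeff x k - coeff (m * y) k := by
      rw [hx', map_sub, Finsupp.sub_apply]
    rcases eq_or_lt_of_le hk with rfl | hk'
    · rw [h2, hlcmy, sub_self]
    · rw [h2, coeff_eq_zero_of_dg_lt hmul hcoeff hrepr hk',
        coeff_eq_zero_of_dg_lt hmul hcoeff hrepr (by omega), sub_self]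
  by_cases hx'0 : x' = 0
  · refine ⟨m, 0, ?_, Or.inl rfl⟩
    have : x = m * y := by
      have := sub_eq_zero.mp hx'0
      exact this
    rw [← this, add_zero]
  · have hdgx' : dg coeff x' < dg coeff x := by
      by_contra hge
      push_neg at hge
      exact lc_ne_zero hmul hcoeff hrepr hx'0 (hx'coeff _ hge)
    obtain ⟨q', r', hqr, hr⟩ := IH (dg coeff x') (by omega) x' le_rfl
    refine ⟨m + q', r', ?_, hr⟩
    have hxeq : x = m * y + x' := by rw [hx', add_sub_cancel]
    rw [hxeq, hqr, add_mul, add_assoc]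

lemma exists_monic_generator (J : Submodule R R) (hJ : J ≠ ⊥) :
    ∃ d : R, d ∈ J ∧ d ≠ 0 ∧ coeff d (dg coeff d) = 1 ∧ J = Submodule.span R {d} ∧
      ∀ x ∈ J, x ≠ 0 → dg coeff d ≤ dg coeff x := by
  classical
  obtain ⟨x₀, hx₀J, hx₀⟩ := Submodule.ne_bot_iff J |>.mp hJ
  have hex : ∃ k, ∃ x, x ∈ J ∧ x ≠ 0 ∧ dg coeff x = k := ⟨_, x₀, hx₀J, hx₀, rfl⟩
  obtain ⟨d₀, hd₀J, hd₀ne, hd₀dg⟩ := Nat.find_spec hex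
  have hmin : ∀ x ∈ J, x ≠ 0 → Nat.find hex ≤ dg coeff x := by
    intro x hxJ hxne
    exact Nat.find_min' hex ⟨x, hxJ, hxne, rfl⟩
  set c := (coeff d₀ (dg coeff d₀))⁻¹ with hcdef
  have hcne : c ≠ 0 := inv_ne_zero (lc_ne_zero hmul hcoeff hrepr hd₀ne)
  have hicne : (ι c : R) ≠ 0 := (dg_of_isUnit hmul hcoeff hrepr (isUnit_iota hmul hcoeff hrepr hcne)).1
  set d := ι c * d₀ with hd
  have hdJ : d ∈ J := by
    have := J.smul_mem (ι c) hd₀J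
    simpa [smul_eq_mul] using this
  have hdne : d ≠ 0 := mul_ne_zero' hmul hcoeff hrepr hicne hd₀ne
  have hcoeffd : ∀ k, coeff d k = c * coeff d₀ k := fun k =>
    coeff_iota_mul hmul hcoeff hrepr c d₀ k
  have hsupp : (coeff d).support = (coeff d₀).support := by
    ext k
    simp only [Finsupp.mem_support_iff, hcoeffd, mul_ne_zero_iff]
    exact ⟨fun h => h.2, fun h => ⟨hcne, h⟩⟩
  have hdgd : dg coeff d = dg coeff d₀ := by rw [dg, dg, hsupp]
  have hmonic : coeff d (dg coeff d) = 1 := by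
    rw [hdgd, hcoeffd, hcdef, inv_mul_cancel₀ (lc_ne_zero hmul hcoeff hrepr hd₀ne)]
  refine ⟨d, hdJ, hdne, hmonic, le_antisymm ?_ ?_, fun x hxJ hxne => ?_⟩
  · intro x hx
    obtain ⟨q, r, hqr, hr⟩ := div_mod hmul hcoeff hrepr x d hdne
    have hrJ : r ∈ J := by
      have hr' : r = x - q * d := by rw [hqr, add_sub_cancel_left]
      rw [hr']
      exact Submodule.sub_mem J hx (by simpa [smul_eq_mul] using J.smul_mem q hdJ)
    by_cases hr0 : r = 0
    · rw [mem_span_singleton'' hmul hcoeff hrepr]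
      exact ⟨q, by rw [hqr, hr0, add_zero]⟩
    · exfalso
      rcases hr with rfl | hrne
      · exact hr0 rfl
      have h1 := hmin r hrJ hr0
      rw [← hd₀dg, ← hdgd] at h1
      omega
  · exact Submodule.span_le.mpr (Set.singleton_subset_iff.mpr hdJ)
  · rw [hdgd, hd₀dg]
    exact hmin x hxJ hxne

end Basic

section Galois
variable (hn : 0 < n) (hdim : Module.finrank F K = n)
variable (hσgen : ∀ τ : K ≃ₐ[F] K, τ ∈ Subgroup.zpowers σ)

include hn hdim hσgen in
lemma order_sigma : orderOf σ = n := by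
  have : FiniteDimensional F K := Module.finite_of_finrank_pos (by omega)
  rw [orderOf_eq_card_of_forall_mem_zpowers hσgen,
    IsGalois.card_aut_eq_finrank, hdim]

include hn hdim hσgen in
lemma sigma_pow_n : σ ^ n = 1 := by
  rw [← order_sigma hn hdim hσgen]
  exact pow_orderOf_eq_one σ

include hn hdim hσgen in
lemma sigma_pow_n_mul (k : ℕ) : σ ^ (n * k) = 1 := by
  rw [pow_mul, sigma_pow_n hn hdim hσgen, one_pow]

include hn hdim hσgen in
lemma n_dvd_of_agree {i j : ℕ} (hij : j ≤ i) (h : ∀ a : K, (σ ^ i) a = (σ ^ j) a) :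
    n ∣ i - j := by
  have hpow : σ ^ i = σ ^ j := AlgEquiv.ext h
  have h1 : σ ^ (i - j) * σ ^ j = 1 * σ ^ j := by
    rw [← pow_add, one_mul, show i - j + j = i by omega, hpow]
  have h2 : σ ^ (i - j) = 1 := mul_right_cancel h1
  rw [← order_sigma hn hdim hσgen]
  exact orderOf_dvd_of_pow_eq_one h2

include hn hdim hσgen in
lemma fixed_mem_range {a : K} (ha : σ a = a) : ∃ b : F, algebraMap F K b = a := by
  haveI hfin : FiniteDimensional F K := Module.finite_of_finrank_pos (by omega)
  have hinv : σ⁻¹ a = a := by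
    show σ.symm a = a
    conv_lhs => rw [← ha]
    exact σ.symm_apply_apply a
  have hfix : ∀ m : ℤ, (σ ^ m) a = a := by
    intro m
    induction m using Int.induction_on with
    | zero => simp
    | succ k ih =>
        rw [zpow_add_one, AlgEquiv.mul_apply, ha, ih]
    | pred k ih =>
        rw [zpow_sub_one, AlgEquiv.mul_apply, hinv, ih]
  have hτ : ∀ τ : K ≃ₐ[F] K, τ a = a := by
    intro τ
    obtain ⟨z, hz⟩ := hσgen τ
    rw [← hz]
    exact hfix z
  have hbot : IntermediateField.fixedField (⊤ : Subgroup (K ≃ₐ[F] K)) = ⊥ :=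
    ((IsGalois.tfae (F := F) (E := K)).out 0 1).mp (show IsGalois F K from inferInstance)
  have hmem : a ∈ IntermediateField.fixedField (⊤ : Subgroup (K ≃ₐ[F] K)) := by
    intro g
    exact hτ g.1
  rw [hbot] at hmem
  rcases IntermediateField.mem_bot.mp hmem with ⟨b, hb⟩
  exact ⟨b, hb⟩

end Galois

section PhiFacts
variable (hmul : ∀ a : K, t * ι a = ι (σ a) * t)
variable (hcoeff : ∀ (a : K) (i : ℕ), coeff (ι a * t ^ i) = Finsupp.single i a)
variable (hrepr : ∀ x : R, (coeff x).sum (fun i a => ι a * t ^ i) = x)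
variable (hn : 0 < n) (hdim : Module.finrank F K = n)
variable (hσgen : ∀ τ : K ≃ₐ[F] K, τ ∈ Subgroup.zpowers σ)

include hmul hcoeff hrepr hn hdim hσgen

lemma Phi_eq_sum (p : Polynomial F) :
    Phi ι t n p = p.sum fun k a => ι (algebraMap F K a) * t ^ (n * k) := by
  rw [Phi, Polynomial.eval₂_eq_sum]
  simp only [Polynomial.sum]
  exact Finset.sum_congr rfl fun k _ => by rw [RingHom.comp_apply, pow_mul]

lemma Phi_mul (p q : Polynomial F) : Phi ι t n (p * q) = Phi ι t n p * Phi ι t n q := by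
  have hcomm : ∀ a : F, Commute ((ι.comp (algebraMap F K)) a) (t ^ n) := by
    intro a
    have h1 := tpow_mul hmul n (algebraMap F K a)
    rw [sigma_pow_n hn hdim hσgen] at h1
    simp only [AlgEquiv.one_apply] at h1
    show ι.comp (algebraMap F K) a * t ^ n = t ^ n * (ι.comp (algebraMap F K) a)
    rw [RingHom.comp_apply, h1]
  exact map_mul (Polynomial.eval₂RingHom' (ι.comp (algebraMap F K)) (t ^ n) hcomm) p q

lemma Phi_one : Phi ι t n (1 : Polynomial F) = 1 := Polynomial.eval₂_one (ι.comp (algebraMap F K)) (t ^ n)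

lemma coeff_Phi (p : Polynomial F) (k : ℕ) :
    coeff (Phi ι t n p) (n * k) = algebraMap F K (p.coeff k) := by
  rw [Phi_eq_sum hmul hcoeff hrepr hn hdim hσgen p]
  simp only [Polynomial.sum]
  rw [map_sum, Finset.sum_apply']
  rw [Finset.sum_congr rfl (fun k' (_ : k' ∈ p.support) => by
    rw [hcoeff, Finsupp.single_apply])]
  by_cases hk : k ∈ p.support
  · rw [Finset.sum_eq_single_of_mem k hk (fun j _ hne => if_neg (fun hc => hne
      (Nat.eq_of_mul_eq_mul_left hn hc))), if_pos rfl]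
  · rw [Finset.sum_eq_zero (fun j hj => if_neg (fun hc => hk
      (by rwa [Nat.eq_of_mul_eq_mul_left hn hc] at hj))),
      Polynomial.notMem_support_iff.mp hk, map_zero]

lemma coeff_Phi_not_dvd (p : Polynomial F) {m : ℕ} (hm : ¬ n ∣ m) :
    coeff (Phi ι t n p) m = 0 := by
  rw [Phi_eq_sum hmul hcoeff hrepr hn hdim hσgen p]
  simp only [Polynomial.sum]
  rw [map_sum, Finset.sum_apply']
  exact Finset.sum_eq_zero fun k' _ => by
    rw [hcoeff, Finsupp.single_apply, if_neg (fun hc => hm ⟨k', hc.symm⟩)]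

lemma Phi_ne_zero {p : Polynomial F} (hp : p ≠ 0) : Phi ι t n p ≠ 0 := by
  intro h0
  have h1 := coeff_Phi hmul hcoeff hrepr hn hdim hσgen p p.natDegree
  rw [h0, map_zero] at h1
  exact Polynomial.leadingCoeff_ne_zero.mpr hp
    ((algebraMap F K).injective (show algebraMap F K p.leadingCoeff = algebraMap F K 0 by
      rw [map_zero, Polynomial.leadingCoeff, ← h1]; simp))

lemma dg_Phi {p : Polynomial F} (hp : p ≠ 0) :
    dg coeff (Phi ι t n p) = n * p.natDegree := by
  refine le_antisymm (Finset.sup_le fun k hk => ?_) ?_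
  · have hkne := Finsupp.mem_support_iff.mp hk
    simp only [id_eq]
    by_cases hdvd : n ∣ k
    · obtain ⟨k', rfl⟩ := hdvd
      by_contra hgt
      push_neg at hgt
      have hk' : p.natDegree < k' := by
        rcases Nat.lt_or_ge p.natDegree k' with h | h
        · exact h
        · exact absurd (Nat.mul_le_mul_left n h) (by omega)
      have h1 := coeff_Phi hmul hcoeff hrepr hn hdim hσgen p k'
      rw [Polynomial.coeff_eq_zero_of_natDegree_lt hk', map_zero] at h1
      exact hkne h1
    · exact (hkne (coeff_Phi_not_dvd hmul hcoeff hrepr hn hdim hσgen p hdvd)).elim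
  · refine Finset.le_sup (f := id) (Finsupp.mem_support_iff.mpr ?_)
    rw [coeff_Phi hmul hcoeff hrepr hn hdim hσgen]
    intro hc
    exact Polynomial.leadingCoeff_ne_zero.mpr hp
      ((algebraMap F K).injective (by rw [map_zero, Polynomial.leadingCoeff]; exact hc))

lemma exists_Phi_eq {d : R} (hdvd : ∀ k, coeff d k ≠ 0 → n ∣ k)
    (hfix : ∀ k, ∃ b : F, algebraMap F K b = coeff d k) :
    ∃ p : Polynomial F, Phi ι t n p = d := by
  classical
  choose b hb using hfix
  refine ⟨∑ k ∈ (coeff d).support, Polynomial.monomial (k / n) (b k), ?_⟩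
  apply coeff_injective hcoeff hrepr
  ext m
  by_cases hm : n ∣ m
  · obtain ⟨j, rfl⟩ := hm
    rw [coeff_Phi hmul hcoeff hrepr hn hdim hσgen]
    rw [Polynomial.finset_sum_coeff]
    have hpc : ∀ k ∈ (coeff d).support,
        (Polynomial.monomial (k / n) (b k)).coeff j = if k = n * j then b k else 0 := by
      intro k hk
      rw [Polynomial.coeff_monomial]
      obtain ⟨k', rfl⟩ := hdvd k (Finsupp.mem_support_iff.mp hk)
      rw [Nat.mul_div_cancel_left k' hn]
      by_cases he : k' = j
      · rw [if_pos he, if_pos (by rw [he])]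
      · rw [if_neg he, if_neg (fun hc => he (Nat.eq_of_mul_eq_mul_left hn hc))]
    rw [Finset.sum_congr rfl hpc]
    by_cases hj : n * j ∈ (coeff d).support
    · rw [Finset.sum_ite_eq' _ (n * j) (fun k => b k), if_pos hj, hb]
    · rw [Finset.sum_ite_eq' _ (n * j) (fun k => b k), if_neg hj,
        Finsupp.notMem_support_iff.mp hj, map_zero]
  · rw [coeff_Phi_not_dvd hmul hcoeff hrepr hn hdim hσgen _ hm]
    by_contra hc
    exact hm (hdvd m (fun h0 => hc (by rw [h0])))

end PhiFacts

section TwoSided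
variable (hmul : ∀ a : K, t * ι a = ι (σ a) * t)
variable (hcoeff : ∀ (a : K) (i : ℕ), coeff (ι a * t ^ i) = Finsupp.single i a)
variable (hrepr : ∀ x : R, (coeff x).sum (fun i a => ι a * t ^ i) = x)
variable (hn : 0 < n) (hdim : Module.finrank F K = n)
variable (hσgen : ∀ τ : K ≃ₐ[F] K, τ ∈ Subgroup.zpowers σ)

include hmul hcoeff hrepr hn hdim hσgen

lemma maximal_two_sided {hhat : Polynomial F} (hmonic : hhat.Monic) (hirr : Irreducible hhat)
    (hc0 : hhat.coeff 0 ≠ 0)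
    (J : Submodule R R) (hJ2 : ∀ x ∈ J, ∀ r : R, x * r ∈ J)
    (hhJ : Phi ι t n hhat ∈ J) :
    J = Submodule.span R ({Phi ι t n hhat} : Set R) ∨ J = ⊤ := by
  classical
  have hhne : Phi ι t n hhat ≠ 0 :=
    Phi_ne_zero hmul hcoeff hrepr hn hdim hσgen hmonic.ne_zero
  have hJbot : J ≠ ⊥ := by
    intro hb
    rw [hb, Submodule.mem_bot] at hhJ
    exact hhne hhJ
  obtain ⟨d, hdJ, hdne, hdmonic, hJspan, hdmin⟩ :=
    exists_monic_generator hmul hcoeff hrepr J hJbot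
  by_cases hd0 : dg coeff d = 0
  · refine Or.inr (Submodule.eq_top_iff'.mpr fun x => ?_)
    have hd1 : d = 1 := by
      have h1 := eq_iota_of_dg_eq_zero hmul hcoeff hrepr hd0
      rw [hd0] at hdmonic
      rw [h1, hdmonic, map_one]
    have h1J : (1 : R) ∈ J := hd1 ▸ hdJ
    simpa using J.smul_mem x h1J
  · left
    obtain ⟨e, he⟩ := (mem_span_singleton'' hmul hcoeff hrepr).mp (hJspan ▸ hhJ)
    have hene : e ≠ 0 := fun h0 => hhne (by rw [he, h0, zero_mul])
    have hh0 : coeff (Phi ι t n hhat) 0 = algebraMap F K (hhat.coeff 0) := by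
      have h1 := coeff_Phi hmul hcoeff hrepr hn hdim hσgen hhat 0
      rwa [mul_zero] at h1
    have hcd0 : coeff d 0 ≠ 0 := by
      intro h00
      have h1 : coeff (Phi ι t n hhat) 0 = coeff e 0 * coeff d 0 := by
        rw [he]; exact coeff_mul_zero' hmul hcoeff hrepr e d
      rw [h00, mul_zero, hh0] at h1
      exact hc0 ((algebraMap F K).injective (by rw [h1, map_zero]))
    have hks : ∀ k, coeff d k ≠ 0 → ∀ a : K, (σ ^ k) a = a := by
      intro k hk a
      by_cases ha : a = 0
      · rw [ha, map_zero]
      obtain ⟨w, hw⟩ := (mem_span_singleton'' hmul hcoeff hrepr).mp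
        (hJspan ▸ hJ2 d hdJ (ι a))
      have hia : (ι a : R) ≠ 0 :=
        (dg_of_isUnit hmul hcoeff hrepr (isUnit_iota hmul hcoeff hrepr ha)).1
      have hdaine : d * ι a ≠ 0 := mul_ne_zero' hmul hcoeff hrepr hdne hia
      have hwne : w ≠ 0 := fun h0 => hdaine (by rw [hw, h0, zero_mul])
      have hdgw : dg coeff w = 0 := by
        have h1 : dg coeff (d * ι a) = dg coeff d := by
          rw [dg_mul hmul hcoeff hrepr hdne hia, dg_iota hmul hcoeff hrepr, add_zero]
        have h2 : dg coeff (d * ι a) = dg coeff w + dg coeff d := by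
          rw [hw, dg_mul hmul hcoeff hrepr hwne hdne]
        omega
      have hwc : w = ι (coeff w 0) := eq_iota_of_dg_eq_zero hmul hcoeff hrepr hdgw
      have heq : ∀ m, coeff d m * (σ ^ m) a = coeff w 0 * coeff d m := by
        intro m
        have h1 : coeff (d * ι a) m = coeff d m * (σ ^ m) a :=
          coeff_mul_iota hmul hcoeff hrepr d a m
        have h2 : coeff (d * ι a) m = coeff w 0 * coeff d m := by
          rw [hw]
          conv_lhs => rw [hwc]
          exact coeff_iota_mul hmul hcoeff hrepr _ d m
        rw [← h1, h2]
      have hc_eq : coeff w 0 = a := by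
        have h1 := heq 0
        rw [pow_zero, AlgEquiv.one_apply] at h1
        have h2 : coeff d 0 * a = coeff d 0 * coeff w 0 := by rw [h1, mul_comm]
        exact (mul_left_cancel₀ hcd0 h2).symm
      have h3 := heq k
      rw [hc_eq] at h3
      have h4 : coeff d k * (σ ^ k) a = coeff d k * a := by rw [h3, mul_comm]
      exact mul_left_cancel₀ hk h4
    have hdvd : ∀ k, coeff d k ≠ 0 → n ∣ k := by
      intro k hk
      have h1 := n_dvd_of_agree hn hdim hσgen (Nat.zero_le k) (fun a => by
        rw [pow_zero, AlgEquiv.one_apply]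
        exact hks k hk a)
      simpa using h1
    obtain ⟨w, hw⟩ := (mem_span_singleton'' hmul hcoeff hrepr).mp (hJspan ▸ hJ2 d hdJ t)
    have htne : (t : R) ≠ 0 := t_ne_zero' hmul hcoeff hrepr
    have hdtne : d * t ≠ 0 := mul_ne_zero' hmul hcoeff hrepr hdne htne
    have hwne : w ≠ 0 := fun h0 => hdtne (by rw [hw, h0, zero_mul])
    have hdgw : dg coeff w = 1 := by
      have h1 : dg coeff (d * t) = dg coeff d + 1 := by
        rw [dg_mul hmul hcoeff hrepr hdne htne, dg_t hmul hcoeff hrepr]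
      have h2 : dg coeff (d * t) = dg coeff w + dg coeff d := by
        rw [hw, dg_mul hmul hcoeff hrepr hwne hdne]
      omega
    have hwdec : w = ι (coeff w 1) * t + ι (coeff w 0) :=
      dg_le_one_decomp hmul hcoeff hrepr (le_of_eq hdgw)
    have hw0 : coeff w 0 = 0 := by
      have h1 : coeff (d * t) 0 = 0 := coeff_mul_t_zero hmul hcoeff hrepr d
      have h2 : coeff (w * d) 0 = coeff w 0 * coeff d 0 := coeff_mul_zero' hmul hcoeff hrepr w d
      rw [← hw, h1] at h2
      rcases mul_eq_zero.mp h2.symm with h | h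
      · exact h
      · exact absurd h hcd0
    have hfixk : ∀ m, coeff d m = coeff w 1 * σ (coeff d m) := by
      intro m
      have h1 : coeff (d * t) (m + 1) = coeff d m := coeff_mul_t hmul hcoeff hrepr d m
      have h2 : coeff (w * d) (m + 1) = coeff w 1 * σ (coeff d m) := by
        conv_lhs => rw [hwdec]
        rw [add_mul, AddMonoidHom.map_add, Finsupp.add_apply, mul_assoc,
          coeff_iota_mul hmul hcoeff hrepr, coeff_t_mul hmul hcoeff hrepr,
          coeff_iota_mul hmul hcoeff hrepr, hw0, zero_mul, add_zero]
      rw [← hw, h1] at h2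
      exact h2
    have hw1 : coeff w 1 = 1 := by
      have h1 := hfixk (dg coeff d)
      rw [hdmonic, map_one σ, mul_one] at h1
      exact h1.symm
    have hfix : ∀ m, ∃ b : F, algebraMap F K b = coeff d m := by
      intro m
      refine fixed_mem_range hn hdim hσgen ?_
      have h1 := hfixk m
      rw [hw1, one_mul] at h1
      exact h1.symm
    obtain ⟨p, hp⟩ := exists_Phi_eq hmul hcoeff hrepr hn hdim hσgen hdvd hfix
    have hpne : p ≠ 0 := by
      intro h0
      rw [h0] at hp
      exact hdne (by rw [← hp, Phi, Polynomial.eval₂_zero])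
    have hpdg : dg coeff d = n * p.natDegree := by
      rw [← hp]; exact dg_Phi hmul hcoeff hrepr hn hdim hσgen hpne
    have hpmonic : p.Monic := by
      have h1 := coeff_Phi hmul hcoeff hrepr hn hdim hσgen p p.natDegree
      rw [hp, ← hpdg, hdmonic] at h1
      exact (algebraMap F K).injective (by
        rw [Polynomial.Monic, Polynomial.leadingCoeff] at *
        rw [← h1, map_one])
    -- divide hhat by p
    have hdiv : hhat %ₘ p + p * (hhat /ₘ p) = hhat := Polynomial.modByMonic_add_div hhat p
    have happ : Phi ι t n hhat = Phi ι t n (hhat %ₘ p) + Phi ι t n (hhat /ₘ p) * d := by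
      conv_lhs => rw [← hdiv]
      rw [show hhat %ₘ p + p * (hhat /ₘ p) = hhat %ₘ p + (hhat /ₘ p) * p by rw [mul_comm]]
      rw [Phi, Polynomial.eval₂_add, ← Phi, ← Phi,
        Phi_mul hmul hcoeff hrepr hn hdim hσgen, hp]
    by_cases hs0 : hhat %ₘ p = 0
    · have hfac : hhat = p * (hhat /ₘ p) := by
        conv_lhs => rw [← hdiv, hs0, zero_add]
      rcases hirr.isUnit_or_isUnit hfac with hu | hu
      · exfalso
        have h1 : p = 1 := hpmonic.eq_one_of_isUnit hu
        rw [h1, Polynomial.natDegree_one, Nat.mul_zero] at hpdg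
        exact hd0 hpdg
      · obtain ⟨c, hcu, hcv⟩ := Polynomial.isUnit_iff.mp hu
        have hc1 : c = 1 := by
          have h1 : hhat.leadingCoeff = p.leadingCoeff * (Polynomial.C c).leadingCoeff := by
            rw [← Polynomial.leadingCoeff_mul, hcv, ← hfac]
          rw [hmonic.leadingCoeff, hpmonic.leadingCoeff, Polynomial.leadingCoeff_C, one_mul] at h1
          exact h1.symm
        have hph : hhat = p := by
          rw [hfac, ← hcv, hc1, Polynomial.C_1, mul_one]
        rw [hJspan, ← hp, ← hph]
    · exfalso
      have hPhis : Phi ι t n (hhat %ₘ p) ≠ 0 :=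
        Phi_ne_zero hmul hcoeff hrepr hn hdim hσgen hs0
      have h2 : (e - Phi ι t n (hhat /ₘ p)) * d = Phi ι t n (hhat %ₘ p) := by
        rw [sub_mul, ← he, happ]
        abel
      have hsub_ne : e - Phi ι t n (hhat /ₘ p) ≠ 0 := by
        intro h0
        rw [h0, zero_mul] at h2
        exact hPhis h2.symm
      have hdeg1 : dg coeff (Phi ι t n (hhat %ₘ p)) = n * (hhat %ₘ p).natDegree :=
        dg_Phi hmul hcoeff hrepr hn hdim hσgen hs0
      have hdegs : (hhat %ₘ p).natDegree < p.natDegree :=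
        Polynomial.natDegree_lt_natDegree hs0 (Polynomial.degree_modByMonic_lt hhat hpmonic)
      have h3 : dg coeff ((e - Phi ι t n (hhat /ₘ p)) * d)
          = dg coeff (e - Phi ι t n (hhat /ₘ p)) + dg coeff d :=
        dg_mul hmul hcoeff hrepr hsub_ne hdne
      rw [h2, hdeg1] at h3
      have h4 : n * (hhat %ₘ p).natDegree < n * p.natDegree :=
        (Nat.mul_lt_mul_left hn).mpr hdegs
      omega

end TwoSided

section Modules
variable (hmul : ∀ a : K, t * ι a = ι (σ a) * t)
variable (hcoeff : ∀ (a : K) (i : ℕ), coeff (ι a * t ^ i) = Finsupp.single i a)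
variable (hrepr : ∀ x : R, (coeff x).sum (fun i a => ι a * t ^ i) = x)
variable (hn : 0 < n) (hdim : Module.finrank F K = n)
variable (hσgen : ∀ τ : K ≃ₐ[F] K, τ ∈ Subgroup.zpowers σ)

include hmul hcoeff hrepr

lemma not_isUnit_zero' : ¬IsUnit (0 : R) := fun hu =>
  nontrivialR hmul hcoeff hrepr (isUnit_zero_iff.mp hu).symm

lemma irreducible_ne_zero {p : R} (hp : Irreducible p) : p ≠ 0 := by
  intro h0
  rcases hp.isUnit_or_isUnit (show p = 0 * 0 by rw [h0, mul_zero]) with hu | hu <;>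
    exact not_isUnit_zero' hmul hcoeff hrepr hu

lemma span_singleton_ne_top {p : R} (hp : ¬IsUnit p) :
    Submodule.span R ({p} : Set R) ≠ ⊤ := by
  intro htop
  have h1 : (1 : R) ∈ Submodule.span R ({p} : Set R) := htop ▸ Submodule.mem_top
  obtain ⟨c, hc⟩ := (mem_span_singleton'' hmul hcoeff hrepr).mp h1
  exact hp (isUnit_of_left_inverse hmul hcoeff hrepr hc.symm)

lemma simple_of_irreducible {p : R} (hp : Irreducible p)
    (N : Submodule R (R ⧸ Submodule.span R ({p} : Set R))) : N = ⊥ ∨ N = ⊤ := by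
  classical
  set J := N.comap (Submodule.span R ({p} : Set R)).mkQ with hJdef
  have hpJ : p ∈ J := by
    show (Submodule.span R ({p} : Set R)).mkQ p ∈ N
    have h0 : (Submodule.span R ({p} : Set R)).mkQ p = 0 := by
      rw [Submodule.mkQ_apply, Submodule.Quotient.mk_eq_zero]
      exact Submodule.mem_span_singleton_self p
    rw [h0]; exact N.zero_mem
  have hpne : p ≠ 0 := irreducible_ne_zero hmul hcoeff hrepr hp
  have hJbot : J ≠ ⊥ := fun hb => hpne (Submodule.mem_bot R |>.mp (hb ▸ hpJ))
  obtain ⟨d, hdJ, hdne, hdmonic, hJspan, hdmin⟩ :=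
    exists_monic_generator hmul hcoeff hrepr J hJbot
  obtain ⟨w, hwd⟩ := (mem_span_singleton'' hmul hcoeff hrepr).mp (hJspan ▸ hpJ)
  have hNmap : N = Submodule.map (Submodule.span R ({p} : Set R)).mkQ J :=
    (Submodule.map_comap_eq_of_surjective
      (Submodule.mkQ_surjective (Submodule.span R ({p} : Set R))) N).symm
  rcases hp.isUnit_or_isUnit hwd with hu | hu
  · left
    have hspan : Submodule.span R ({d} : Set R) = Submodule.span R ({p} : Set R) := by
      refine le_antisymm ?_ ?_
      · rw [Submodule.span_le, Set.singleton_subset_iff]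
        obtain ⟨u, rfl⟩ := hu
        have hd : d = ↑u⁻¹ * p := by rw [hwd, ← mul_assoc, Units.inv_mul, one_mul]
        exact (mem_span_singleton'' hmul hcoeff hrepr).mpr ⟨↑u⁻¹, hd⟩
      · rw [Submodule.span_le, Set.singleton_subset_iff]
        exact (mem_span_singleton'' hmul hcoeff hrepr).mpr ⟨w, hwd⟩
    rw [hNmap, hJspan, hspan]
    refine le_antisymm ?_ bot_le
    intro y hy
    obtain ⟨x, hxS, rfl⟩ := hy
    rw [Submodule.mem_bot, Submodule.mkQ_apply, Submodule.Quotient.mk_eq_zero]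
    exact hxS
  · right
    obtain ⟨u, rfl⟩ := hu
    have h1J : (1 : R) ∈ J := by
      have h2 := J.smul_mem (↑u⁻¹ : R) hdJ
      rw [smul_eq_mul, Units.inv_mul] at h2
      exact h2
    have hJtop : J = ⊤ := Submodule.eq_top_iff'.mpr fun x => by
      simpa using J.smul_mem x h1J
    rw [hNmap, hJtop, Submodule.map_top, Submodule.range_mkQ]

lemma equiv_of_nonzero_hom {M N : Type} [AddCommGroup M] [Module R M]
    [AddCommGroup N] [Module R N]
    (hM : ∀ X : Submodule R M, X = ⊥ ∨ X = ⊤) (hN : ∀ X : Submodule R N, X = ⊥ ∨ X = ⊤)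
    (φ : M →ₗ[R] N) (hφ : φ ≠ 0) : Nonempty (M ≃ₗ[R] N) := by
  have hker : LinearMap.ker φ = ⊥ := by
    rcases hM (LinearMap.ker φ) with h | h
    · exact h
    · exact absurd (LinearMap.ker_eq_top.mp h) hφ
  have hrange : LinearMap.range φ = ⊤ := by
    rcases hN (LinearMap.range φ) with h | h
    · exact absurd (LinearMap.range_eq_bot.mp h) hφ
    · exact h
  exact ⟨LinearEquiv.ofBijective φ ⟨LinearMap.ker_eq_bot.mp hker,
    LinearMap.range_eq_top.mp hrange⟩⟩

lemma exists_irreducible_left_factor {x : R} (hx0 : x ≠ 0) (hxu : ¬IsUnit x) :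
    ∃ a b : R, x = a * b ∧ Irreducible a := by
  classical
  have hex : ∃ k, ∃ a b : R, x = a * b ∧ ¬IsUnit a ∧ dg coeff a = k :=
    ⟨dg coeff x, x, 1, (mul_one x).symm, hxu, rfl⟩
  obtain ⟨a, b, hab, hanu, hadg⟩ := Nat.find_spec hex
  refine ⟨a, b, hab, hanu, ?_⟩
  intro u v huv
  by_contra hc
  push_neg at hc
  obtain ⟨hu, hv⟩ := hc
  have hane : a ≠ 0 := by
    intro h0
    rw [h0, zero_mul] at hab
    exact hx0 hab
  have hune : u ≠ 0 := by
    intro h0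
    rw [huv, h0, zero_mul] at hane
    exact hane rfl
  have hvne : v ≠ 0 := by
    intro h0
    rw [huv, h0, mul_zero] at hane
    exact hane rfl
  have hvdg : 0 < dg coeff v := by
    rcases Nat.eq_zero_or_pos (dg coeff v) with h0 | h0
    · exact absurd (isUnit_of_dg_eq_zero hmul hcoeff hrepr hvne h0) hv
    · exact h0
  have hudg : dg coeff u < Nat.find hex := by
    rw [← hadg, huv, dg_mul hmul hcoeff hrepr hune hvne]
    omega
  exact Nat.find_min hex hudg ⟨u, v * b, by rw [hab, huv, mul_assoc], hu, rfl⟩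

include hn hdim hσgen

lemma simiso {hhat : Polynomial F} (hmonic : hhat.Monic) (hirr : Irreducible hhat)
    (hc0 : hhat.coeff 0 ≠ 0)
    (hcen : ∀ x : R, x * Phi ι t n hhat = Phi ι t n hhat * x)
    {p q : R} (hp : Irreducible p) (hq : Irreducible q)
    (hhp : Phi ι t n hhat ∈ Submodule.span R ({p} : Set R))
    (hhq : Phi ι t n hhat ∈ Submodule.span R ({q} : Set R)) :
    Nonempty ((R ⧸ Submodule.span R ({p} : Set R)) ≃ₗ[R]
      (R ⧸ Submodule.span R ({q} : Set R))) := by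
  classical
  have hhne : Phi ι t n hhat ≠ 0 :=
    Phi_ne_zero hmul hcoeff hrepr hn hdim hσgen hmonic.ne_zero
  have hhdeg : 0 < hhat.natDegree := by
    rcases Nat.eq_zero_or_pos hhat.natDegree with h0 | h0
    · exfalso
      have h1 : hhat = Polynomial.C (hhat.coeff 0) := Polynomial.eq_C_of_natDegree_eq_zero h0
      have h2 : hhat.coeff 0 = 1 := by
        have := hmonic.leadingCoeff
        rwa [Polynomial.leadingCoeff, h0] at this
      rw [h2, Polynomial.C_1] at h1
      exact hirr.not_isUnit (h1 ▸ isUnit_one)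
    · exact h0
  have hhnu : ¬IsUnit (Phi ι t n hhat) := by
    intro hu
    have h1 := (dg_of_isUnit hmul hcoeff hrepr hu).2
    rw [dg_Phi hmul hcoeff hrepr hn hdim hσgen hmonic.ne_zero] at h1
    rcases Nat.mul_eq_zero.mp h1 with h | h <;> omega
  obtain ⟨a₀, b₀, hab, hairr⟩ :=
    exists_irreducible_left_factor hmul hcoeff hrepr hhne hhnu
  have hb₀ne : b₀ ≠ 0 := by
    intro h0
    rw [hab, h0, mul_zero] at hhne
    exact hhne rfl
  have hb₀h : b₀ ∉ Submodule.span R ({Phi ι t n hhat} : Set R) := by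
    intro hmem
    obtain ⟨v, hv⟩ := (mem_span_singleton'' hmul hcoeff hrepr).mp hmem
    -- b₀ = v * (a₀ * b₀), so (1 - v * a₀) * b₀ = 0
    have h1 : (1 - v * a₀) * b₀ = 0 := by
      rw [sub_mul, one_mul, mul_assoc, ← hab, ← hv, sub_self]
    rcases eq_zero_or_eq_zero hmul hcoeff hrepr h1 with h2 | h2
    · have h3 : v * a₀ = 1 := by
        have := sub_eq_zero.mp h2
        exact this.symm
      exact hairr.not_isUnit (isUnit_of_left_inverse hmul hcoeff hrepr h3)
    · exact hb₀ne h2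
  set J : Submodule R R :=
    Submodule.span R ({Phi ι t n hhat} ∪ Set.range (fun r : R => b₀ * r)) with hJdef
  have hJ2 : ∀ x ∈ J, ∀ r : R, x * r ∈ J := by
    intro x hx r
    induction hx using Submodule.span_induction generalizing r with
    | mem y hy =>
        rcases hy with h1 | h1
        · rw [Set.mem_singleton_iff] at h1
          subst h1
          rw [← hcen r]
          exact J.smul_mem r (Submodule.subset_span (Or.inl rfl))
        · obtain ⟨r', rfl⟩ := h1
          rw [mul_assoc]
          exact Submodule.subset_span (Or.inr ⟨r' * r, rfl⟩)
    | zero => rw [zero_mul]; exact J.zero_mem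
    | add y z _ _ hy hz => rw [add_mul]; exact J.add_mem (hy r) (hz r)
    | smul c y _ hy =>
        rw [smul_eq_mul, mul_assoc]
        exact J.smul_mem c (hy r)
  have hhJ : Phi ι t n hhat ∈ J := Submodule.subset_span (Or.inl rfl)
  have hbJ : b₀ ∈ J := by
    have : b₀ = b₀ * 1 := (mul_one b₀).symm
    rw [this]
    exact Submodule.subset_span (Or.inr ⟨1, rfl⟩)
  have hJtop : J = ⊤ := by
    rcases maximal_two_sided hmul hcoeff hrepr hn hdim hσgen hmonic hirr hc0 J hJ2 hhJ with
      h1 | h1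
    · exact absurd (h1 ▸ hbJ) hb₀h
    · exact h1
  -- for any irreducible z with h ∈ span z, there is r with b₀ * r ∉ span z,
  -- and then R/span a₀ ≃ R/span z
  have key : ∀ z : R, Irreducible z → Phi ι t n hhat ∈ Submodule.span R ({z} : Set R) →
      Nonempty ((R ⧸ Submodule.span R ({a₀} : Set R)) ≃ₗ[R]
        (R ⧸ Submodule.span R ({z} : Set R))) := by
    intro z hz hhz
    have hr₀ : ∃ r : R, b₀ * r ∉ Submodule.span R ({z} : Set R) := by
      by_contra hcon
      push_neg at hcon
      have hJle : J ≤ Submodule.span R ({z} : Set R) := by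
        rw [hJdef, Submodule.span_le]
        rintro y (h1 | ⟨r', rfl⟩)
        · rw [Set.mem_singleton_iff] at h1
          subst h1
          exact hhz
        · exact hcon r'
      rw [hJtop] at hJle
      exact span_singleton_ne_top hmul hcoeff hrepr hz.not_isUnit (top_le_iff.mp hJle)
    obtain ⟨r₀, hr₀⟩ := hr₀
    set φ : R →ₗ[R] R ⧸ Submodule.span R ({z} : Set R) :=
      (Submodule.span R ({z} : Set R)).mkQ.comp (LinearMap.toSpanSingleton R R (b₀ * r₀))
      with hφdef
    have hker : Submodule.span R ({a₀} : Set R) ≤ LinearMap.ker φ := by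
      rw [Submodule.span_le, Set.singleton_subset_iff]
      show φ a₀ = 0
      rw [hφdef]
      simp only [LinearMap.comp_apply, LinearMap.toSpanSingleton_apply, Submodule.mkQ_apply]
      rw [Submodule.Quotient.mk_eq_zero]
      have h1 : a₀ • (b₀ * r₀) = Phi ι t n hhat * r₀ := by
        rw [smul_eq_mul, ← mul_assoc, ← hab]
      rw [h1, ← hcen r₀]
      obtain ⟨c, hc⟩ := (mem_span_singleton'' hmul hcoeff hrepr).mp hhz
      rw [hc, ← mul_assoc]
      exact (mem_span_singleton'' hmul hcoeff hrepr).mpr ⟨r₀ * c, rfl⟩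
    set θ := Submodule.liftQ (Submodule.span R ({a₀} : Set R)) φ hker with hθdef
    have hθne : θ ≠ 0 := by
      intro h0
      have h1 : θ (Submodule.Quotient.mk (1 : R)) = 0 := by rw [h0]; rfl
      rw [hθdef, Submodule.liftQ_apply, hφdef] at h1
      simp only [LinearMap.comp_apply, LinearMap.toSpanSingleton_apply,
        Submodule.mkQ_apply, one_smul] at h1
      rw [Submodule.Quotient.mk_eq_zero] at h1
      exact hr₀ h1
    exact equiv_of_nonzero_hom hmul hcoeff hrepr
      (simple_of_irreducible hmul hcoeff hrepr hairr)
      (simple_of_irreducible hmul hcoeff hrepr hz) θ hθne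
  obtain ⟨e1⟩ := key p hp hhp
  obtain ⟨e2⟩ := key q hq hhq
  exact ⟨e1.symm.trans e2⟩

end Modules

section Factor
variable (hmul : ∀ a : K, t * ι a = ι (σ a) * t)
variable (hcoeff : ∀ (a : K) (i : ℕ), coeff (ι a * t ^ i) = Finsupp.single i a)
variable (hrepr : ∀ x : R, (coeff x).sum (fun i a => ι a * t ^ i) = x)

include hmul hcoeff hrepr

lemma factor_list {h : R} (hcen : ∀ x : R, x * h = h * x) :
    ∀ D : ℕ, ∀ f' : R, dg coeff f' ≤ D → f' ≠ 0 → ¬IsUnit f' → (∃ g : R, h = g * f') →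
      ∃ l : List R, f' = l.prod ∧
        ∀ x ∈ l, Irreducible x ∧ h ∈ Submodule.span R ({x} : Set R) := by
  intro D
  induction D using Nat.strong_induction_on with
  | _ D IH =>
  intro f' hfD hfne hfnu hleft
  obtain ⟨a, b, hab, hairr⟩ := exists_irreducible_left_factor hmul hcoeff hrepr hfne hfnu
  obtain ⟨g, hg⟩ := hleft
  have hane : a ≠ 0 := irreducible_ne_zero hmul hcoeff hrepr hairr
  have hbne : b ≠ 0 := by
    intro h0
    rw [hab, h0, mul_zero] at hfne
    exact hfne rfl
  have hgab : h = (g * a) * b := by rw [hg, hab, mul_assoc]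
  have hcomm : b * (g * a) = (g * a) * b := by
    have h2 : b * h = h * b := hcen b
    rw [hgab] at h2
    have h3 : (b * (g * a)) * b = ((g * a) * b) * b := by
      rw [mul_assoc]
      exact h2
    exact mul_right_cancel'' hmul hcoeff hrepr hbne h3
  have hha : h = (b * g) * a := by
    rw [hgab, ← hcomm, ← mul_assoc]
  have hhaspan : h ∈ Submodule.span R ({a} : Set R) :=
    (mem_span_singleton'' hmul hcoeff hrepr).mpr ⟨b * g, hha⟩
  by_cases hbu : IsUnit b
  · refine ⟨[f'], by simp, ?_⟩
    intro x hx
    rw [List.mem_singleton] at hx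
    subst hx
    refine ⟨⟨hfnu, ?_⟩, (mem_span_singleton'' hmul hcoeff hrepr).mpr ⟨g, hg⟩⟩
    intro u v huv
    obtain ⟨bu, rfl⟩ := hbu
    have ha' : a = u * (v * ↑bu⁻¹) := by
      have h1 : a = x * ↑bu⁻¹ := by
        rw [hab, mul_assoc, Units.mul_inv, mul_one]
      rw [h1, huv, mul_assoc]
    rcases hairr.isUnit_or_isUnit ha' with h2 | h2
    · exact Or.inl h2
    · right
      have h3 : v = (v * ↑bu⁻¹) * ↑bu := by rw [mul_assoc, Units.inv_mul, mul_one]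
      rw [h3]
      exact h2.mul bu.isUnit
  · have hadg : 0 < dg coeff a := by
      rcases Nat.eq_zero_or_pos (dg coeff a) with h0 | h0
      · exact absurd (isUnit_of_dg_eq_zero hmul hcoeff hrepr hane h0) hairr.not_isUnit
      · exact h0
    have hdgf : dg coeff f' = dg coeff a + dg coeff b := by
      rw [hab, dg_mul hmul hcoeff hrepr hane hbne]
    obtain ⟨l, hl, hlprop⟩ := IH (dg coeff b) (by omega) b le_rfl hbne hbu
      ⟨g * a, by rw [hgab]⟩
    refine ⟨a :: l, ?_, ?_⟩
    · rw [List.prod_cons, ← hl, hab]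
    · intro x hx
      rcases List.mem_cons.mp hx with rfl | hx'
      · exact ⟨hairr, hhaspan⟩
      · exact hlprop x hx'

end Factor

end SkewFactor

/-- If `f ∈ R = K[t;σ]` satisfies `gcrd(f,t) = 1` and its minimal central left
multiple `h(t) = ĥ(t^n)` has `ĥ ∈ F[x]` irreducible, then `f = f₁⋯f_r` with each
`f_i` irreducible in `R` and all the `f_i` pairwise similar. -/
theorem factorization_into_similar_irreducibles
    (F K : Type) [Field F] [Field K] [Algebra F K] [IsGalois F K]
    (n : ℕ) (hn : 0 < n) (hdim : Module.finrank F K = n)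
    (σ : K ≃ₐ[F] K) (hσgen : ∀ τ : K ≃ₐ[F] K, τ ∈ Subgroup.zpowers σ)
    (R : Type) [Ring R] (ι : K →+* R) (t : R)
    (hmul : ∀ a : K, t * ι a = ι (σ a) * t)
    (coeff : R →+ (ℕ →₀ K))
    (hcoeff : ∀ (a : K) (i : ℕ), coeff (ι a * t ^ i) = Finsupp.single i a)
    (hrepr : ∀ x : R, (coeff x).sum (fun i a => ι a * t ^ i) = x)
    (f : R)
    -- gcrd(f,t) = 1 (Bézout in the right-Euclidean domain R):
    (hgcrd : ∃ p q : R, p * f + q * t = 1)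
    (hhat : Polynomial F) (hmonic : hhat.Monic) (hirr : Irreducible hhat)
    -- h(t) = ĥ(t^n) is the minimal central left multiple of f:
    (hleft : ∃ g : R, (hhat.sum fun k a => ι (algebraMap F K a) * t ^ (n * k)) = g * f)
    (hcentral : (hhat.sum fun k a => ι (algebraMap F K a) * t ^ (n * k)) ∈ Subring.center R)
    (hminimal : ∀ c : R, c ∈ Subring.center R → c ≠ 0 → (∃ g : R, c = g * f) →
      (coeff (hhat.sum fun k a => ι (algebraMap F K a) * t ^ (n * k))).support.sup id ≤
        (coeff c).support.sup id) :
    ∃ (r : ℕ) (fs : Fin r → R),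
      f = (List.ofFn fs).prod ∧
      (∀ i, Irreducible (fs i)) ∧
      (∀ i j, Nonempty ((R ⧸ Submodule.span R ({fs i} : Set R)) ≃ₗ[R]
        (R ⧸ Submodule.span R ({fs j} : Set R)))) := by
  classical
  have hPhi_eq : (hhat.sum fun k a => ι (algebraMap F K a) * t ^ (n * k))
      = SkewFactor.Phi ι t n hhat :=
    (SkewFactor.Phi_eq_sum hmul hcoeff hrepr hn hdim hσgen hhat).symm
  rw [hPhi_eq] at hleft hcentral hminimal
  have hcen : ∀ x : R, x * SkewFactor.Phi ι t n hhat = SkewFactor.Phi ι t n hhat * x :=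
    fun x => Subring.mem_center_iff.mp hcentral x
  have hhne : SkewFactor.Phi ι t n hhat ≠ 0 :=
    SkewFactor.Phi_ne_zero hmul hcoeff hrepr hn hdim hσgen hmonic.ne_zero
  obtain ⟨g, hg⟩ := hleft
  have hfne : f ≠ 0 := fun h0 => hhne (by rw [hg, h0, mul_zero])
  have hhdeg : 0 < hhat.natDegree := by
    rcases Nat.eq_zero_or_pos hhat.natDegree with h0 | h0
    · exfalso
      have h1 : hhat = Polynomial.C (hhat.coeff 0) := Polynomial.eq_C_of_natDegree_eq_zero h0
      have h2 : hhat.coeff 0 = 1 := by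
        have h3 := hmonic.leadingCoeff
        rwa [Polynomial.leadingCoeff, h0] at h3
      rw [h2, Polynomial.C_1] at h1
      exact hirr.not_isUnit (h1 ▸ isUnit_one)
    · exact h0
  have hdgh : SkewFactor.dg coeff (SkewFactor.Phi ι t n hhat) = n * hhat.natDegree :=
    SkewFactor.dg_Phi hmul hcoeff hrepr hn hdim hσgen hmonic.ne_zero
  have hfnu : ¬IsUnit f := by
    intro hu
    obtain ⟨u, hufeq⟩ := hu
    have h1 : (1 : R) = ↑u⁻¹ * f := by rw [← hufeq, Units.inv_mul]
    have hmin := hminimal 1 (Subring.one_mem _)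
      (SkewFactor.nontrivialR hmul hcoeff hrepr) ⟨↑u⁻¹, h1⟩
    have h2 : SkewFactor.dg coeff (SkewFactor.Phi ι t n hhat)
        ≤ SkewFactor.dg coeff (1 : R) := hmin
    rw [SkewFactor.dg_one hmul hcoeff hrepr, hdgh] at h2
    have : 0 < n * hhat.natDegree := Nat.mul_pos hn hhdeg
    omega
  have hc0 : hhat.coeff 0 ≠ 0 := by
    intro h00
    have hX : hhat = Polynomial.X := by
      obtain ⟨w, hw⟩ := Polynomial.X_dvd_iff.mpr h00
      rcases hirr.isUnit_or_isUnit hw with hu | hu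
      · exact absurd hu Polynomial.not_isUnit_X
      · obtain ⟨c, hcu, hcv⟩ := Polynomial.isUnit_iff.mp hu
        have h1 : hhat.leadingCoeff = 1 * c := by
          rw [hw, ← hcv, Polynomial.leadingCoeff_mul, Polynomial.leadingCoeff_X,
            Polynomial.leadingCoeff_C]
        rw [hmonic.leadingCoeff, one_mul] at h1
        rw [hw, ← hcv, ← h1, Polynomial.C_1, mul_one]
    have hht : SkewFactor.Phi ι t n hhat = t ^ n := by
      rw [hX, SkewFactor.Phi, Polynomial.eval₂_X]
    obtain ⟨P, Q, hPQ⟩ := hgcrd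
    have hf0 : coeff f 0 ≠ 0 := by
      intro hf00
      have h1a : coeff (P * f + Q * t) 0 = (1 : K) := by
        rw [hPQ, SkewFactor.coeff_one' hmul hcoeff hrepr]
        exact Finsupp.single_eq_same
      rw [map_add, Finsupp.add_apply, SkewFactor.coeff_mul_zero' hmul hcoeff hrepr,
        SkewFactor.coeff_mul_t_zero hmul hcoeff hrepr, hf00, mul_zero, add_zero] at h1a
      exact one_ne_zero h1a.symm
    have hgne : g ≠ 0 := fun h0 => hhne (by rw [hg, h0, zero_mul])
    have hnemp := SkewFactor.support_nonempty' hmul hcoeff hrepr hgne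
    have h1 : coeff (g * f) ((coeff g).support.min' hnemp)
        = coeff g ((coeff g).support.min' hnemp)
          * (σ ^ ((coeff g).support.min' hnemp)) (coeff f 0) :=
      SkewFactor.coeff_mul_min hmul hcoeff hrepr f hnemp
    have h2 : coeff g ((coeff g).support.min' hnemp) ≠ 0 :=
      Finsupp.mem_support_iff.mp (Finset.min'_mem _ hnemp)
    have h3 : coeff (g * f) ((coeff g).support.min' hnemp) ≠ 0 := by
      rw [h1]
      exact mul_ne_zero h2 (fun hcn =>
        hf0 ((σ ^ ((coeff g).support.min' hnemp)).injective (by simpa using hcn)))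
    have hth : coeff (SkewFactor.Phi ι t n hhat) = Finsupp.single n 1 := by
      rw [hht]
      have h4 := hcoeff (1 : K) n
      rwa [map_one, one_mul] at h4
    have h5 : coeff (SkewFactor.Phi ι t n hhat) ((coeff g).support.min' hnemp) ≠ 0 := by
      rw [hg]
      exact h3
    have h6 : (coeff g).support.min' hnemp = n := by
      rw [hth, Finsupp.single_apply] at h5
      by_contra hne
      exact h5 (if_neg (fun hc => hne hc.symm))
    have h7 : SkewFactor.dg coeff (SkewFactor.Phi ι t n hhat)
        = SkewFactor.dg coeff g + SkewFactor.dg coeff f := by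
      rw [hg]
      exact SkewFactor.dg_mul hmul hcoeff hrepr hgne hfne
    have h8 : n ≤ SkewFactor.dg coeff g :=
      h6 ▸ SkewFactor.mem_support_le hmul hcoeff hrepr (Finset.min'_mem _ hnemp)
    have h9 : SkewFactor.dg coeff (SkewFactor.Phi ι t n hhat) = n := by
      rw [SkewFactor.dg, hth, Finsupp.support_single_ne_zero _ one_ne_zero]
      simp
    have h10 : SkewFactor.dg coeff f = 0 := by omega
    exact hfnu (SkewFactor.isUnit_of_dg_eq_zero hmul hcoeff hrepr hfne h10)
  obtain ⟨l, hlprod, hlprop⟩ := SkewFactor.factor_list hmul hcoeff hrepr hcen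
    (SkewFactor.dg coeff f) f le_rfl hfne hfnu ⟨g, hg⟩
  refine ⟨l.length, fun i => l.get i, ?_, ?_, ?_⟩
  · rw [List.ofFn_get]
    exact hlprod
  · intro i
    exact (hlprop _ (List.get_mem l i)).1
  · intro i j
    exact SkewFactor.simiso hmul hcoeff hrepr hn hdim hσgen hmonic hirr hc0 hcen
      (hlprop _ (List.get_mem l i)).1 (hlprop _ (List.get_mem l j)).1
      (hlprop _ (List.get_mem l i)).2 (hlprop _ (List.get_mem l j)).2
end

section
/- Let K/F be a finite cyclic Galois extension of degree n with Gal(K/F)=⟨σ⟩, R = K[t;σ], and N the reduced norm of the cyclic algebra K(x)/F(x)-algebra K(t;σ) ≅ (K(x), σ̃, x), where x = t^n. For f(t) = a₀ + a₁t + ⋯ + a_m t^m ∈ R of degree m (a_m ≠ 0), one has N(f) = N_{K/F}(a₀) + ⋯ + (−1)^{m(n−1)} N_{K/F}(a_m) x^m ∈ F[x]. In particular, the constant coefficient of N(f) is N_{K/F}(a₀), the leading coefficient is (−1)^{m(n−1)} N_{K/F}(a_m), and deg_x N(f) = m. -/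
open Polynomial in
lemma aux_coeff_prod {ι : Type*} {S : Type*} [CommSemiring S] (s : Finset ι)
    (f : ι → S[X]) (d : ι → ℕ) (h : ∀ i ∈ s, (f i).natDegree ≤ d i) :
    (∏ i ∈ s, f i).coeff (∑ i ∈ s, d i) = ∏ i ∈ s, (f i).coeff (d i) := by
  classical
  induction s using Finset.induction with
  | empty => simp
  | @insert x s' hx ih =>
    rw [Finset.prod_insert hx, Finset.sum_insert hx, Finset.prod_insert hx,
      Polynomial.coeff_mul_add_eq_of_natDegree_le (h x (Finset.mem_insert_self x s'))
        (Polynomial.natDegree_prod_le _ _ |>.trans (Finset.sum_le_sum fun i hi => h i (Finset.mem_insert_of_mem hi))),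
      ih fun i hi => h i (Finset.mem_insert_of_mem hi)]

open Polynomial in
lemma aux_coeff_prod_ne_zero {ι : Type*} {S : Type*} [CommSemiring S] (s : Finset ι)
    (f : ι → S[X]) (K : ℕ) (h : (∏ i ∈ s, f i).coeff K ≠ 0) :
    ∃ k : ι → ℕ, (∑ i ∈ s, k i) = K ∧ ∀ i ∈ s, (f i).coeff (k i) ≠ 0 := by
  classical
  induction s using Finset.induction generalizing K with
  | empty =>
    refine ⟨fun _ => 0, ?_, by simp⟩
    simp only [Finset.prod_empty, Polynomial.coeff_one, ne_eq, ite_eq_right_iff] at h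
    simp only [Finset.sum_empty]
    by_contra hK
    exact h fun h1 => absurd h1.symm hK
  | @insert x s' hx ih =>
    rw [Finset.prod_insert hx, Polynomial.coeff_mul] at h
    obtain ⟨⟨u, v⟩, huv, hne⟩ := Finset.exists_ne_zero_of_sum_ne_zero h
    have h1 : (f x).coeff u ≠ 0 := fun h0 => hne (by simp [h0])
    have h2 : (∏ i ∈ s', f i).coeff v ≠ 0 := fun h0 => hne (by simp [h0])
    obtain ⟨k, hk, hk2⟩ := ih v h2
    refine ⟨Function.update k x u, ?_, ?_⟩
    · rw [Finset.sum_insert hx, Function.update_self,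
        Finset.sum_congr rfl (fun i hi => Function.update_of_ne (by rintro rfl; exact hx hi) u k), hk]
      exact Finset.HasAntidiagonal.mem_antidiagonal.mp huv
    · intro i hi
      rcases Finset.mem_insert.mp hi with rfl | hi'
      · rwa [Function.update_self]
      · rw [Function.update_of_ne (by rintro rfl; exact hx hi')]
        exact hk2 i hi'

lemma aux_mod (n q r i p k : ℕ) (hn : 0 < n) (hr : r < n) (hi : i < n) (hp : p < n)
    (e : n * k + i = (n * q + r) + p) : (i + (n - r)) % n = p := by
  have hk : k = q ∨ k = q + 1 := by
    rcases Nat.lt_or_ge k q with h | h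
    · exfalso
      have h2 : n * (k + 1) ≤ n * q := Nat.mul_le_mul_left n h
      rw [Nat.mul_succ] at h2
      linarith
    rcases Nat.lt_or_ge (q + 1) k with h' | h'
    · exfalso
      have h2 : n * (q + 2) ≤ n * k := Nat.mul_le_mul_left n h'
      have h3 : n * (q + 2) = n * q + n + n := by ring
      linarith
    · omega
  rcases hk with rfl | rfl
  · have e' : i = r + p := by
      have h := Nat.add_left_cancel (show n * k + i = n * k + (r + p) by linarith)
      exact h
    have h2 : i + (n - r) = p + n := by omega
    rw [h2, Nat.add_mod_right, Nat.mod_eq_of_lt hp]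
  · have e' : n + i = r + p := by
      have h' : n * q + n + i = n * q + r + p := by rw [Nat.mul_succ] at e; linarith
      have h := Nat.add_left_cancel (show n * q + (n + i) = n * q + (r + p) by linarith)
      exact h
    have h2 : i + (n - r) = p := by omega
    rw [h2, Nat.mod_eq_of_lt (by omega)]

open Fin.NatCast in
lemma aux_subRight_pow (n : ℕ) [NeZero n] (m : ℕ) :
    (Equiv.subRight (1 : Fin n)) ^ m = Equiv.subRight ((m : Fin n)) := by
  induction m with
  | zero => ext x; simp
  | succ m ih =>
    ext x
    rw [pow_succ, Equiv.Perm.mul_apply, ih]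
    simp only [Equiv.subRight_apply]
    push_cast
    rw [sub_sub, add_comm (1 : Fin n)]

lemma aux_sign_subRight_one (n : ℕ) (hn : 0 < n) [NeZero n] :
    Equiv.Perm.sign (Equiv.subRight (1 : Fin n)) = (-1) ^ (n - 1) := by
  obtain ⟨n', rfl⟩ : ∃ n', n = n' + 1 := ⟨n - 1, by omega⟩
  have h1 : Equiv.subRight (1 : Fin (n' + 1)) = (finRotate (n' + 1))⁻¹ := by
    rw [eq_inv_iff_mul_eq_one]
    ext x
    simp [Equiv.Perm.mul_apply, Equiv.subRight_apply, finRotate_succ_apply]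
  rw [h1, Equiv.Perm.sign_inv, sign_finRotate]

open Fin.NatCast in
set_option maxHeartbeats 1000000 in
/-- For `f = a₀ + a₁t + ⋯ + a_m t^m ∈ K[t;σ]` of degree `m`, the reduced norm
`N(f)` (the determinant of the left regular representation on the `K(x)`-basis
`1, t, …, t^{n-1}`, `x = t^n`) lies in `F[x]`, has constant coefficient
`N_{K/F}(a₀)`, leading coefficient `(−1)^{m(n−1)} N_{K/F}(a_m)`, and degree `m`. -/
theorem reduced_norm_of_skew_polynomial
    (F K : Type) [Field F] [Field K] [Algebra F K] [IsGalois F K]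
    (n : ℕ) (hn : 0 < n) (hdim : Module.finrank F K = n)
    (σ : K ≃ₐ[F] K) (hσgen : ∀ τ : K ≃ₐ[F] K, τ ∈ Subgroup.zpowers σ)
    (R : Type) [Ring R] (ι : K →+* R) (t : R)
    (hmul : ∀ a : K, t * ι a = ι (σ a) * t)
    (coeff : R →+ (ℕ →₀ K))
    (hcoeff : ∀ (a : K) (i : ℕ), coeff (ι a * t ^ i) = Finsupp.single i a)
    (hrepr : ∀ x : R, (coeff x).sum (fun i a => ι a * t ^ i) = x)
    -- the left regular representation ρ with respect to the basis 1, t, …, t^{n-1}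
    -- over K[x] with x = t^n, and the reduced norm N = det ∘ ρ:
    (ρ : R → Matrix (Fin n) (Fin n) (Polynomial K))
    (hρ : ∀ (g : R) (i : Fin n), t ^ (i : ℕ) * g =
      ∑ j : Fin n, ((ρ g i j).sum fun k a => ι a * t ^ (n * k)) * t ^ (j : ℕ))
    (N : R → Polynomial K) (hN : ∀ g : R, N g = (ρ g).det)
    (f : R) (m : ℕ) (hdeg : coeff f m ≠ 0 ∧ ∀ i : ℕ, m < i → coeff f i = 0) :
    (∀ k : ℕ, (N f).coeff k ∈ (algebraMap F K).range) ∧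
    (N f).coeff 0 = algebraMap F K (Algebra.norm F (coeff f 0)) ∧
    (N f).natDegree = m ∧
    (N f).coeff m = (-1) ^ (m * (n - 1)) * algebraMap F K (Algebra.norm F (coeff f m)) := by
  classical
  obtain ⟨ham, htop⟩ := hdeg
  haveI : FiniteDimensional F K := FiniteDimensional.of_finrank_pos (hdim ▸ hn)
  haveI : NeZero n := ⟨hn.ne'⟩
  have hcard : Fintype.card (K ≃ₐ[F] K) = n := by
    rw [← Nat.card_eq_fintype_card, IsGalois.card_aut_eq_finrank, hdim]
  have hσn : σ ^ n = 1 := by rw [← hcard]; exact pow_card_eq_one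
  have horder : orderOf σ = n := by
    have htop' : Subgroup.zpowers σ = ⊤ := (Subgroup.eq_top_iff' _).mpr hσgen
    rw [← Nat.card_zpowers, htop', Subgroup.card_top, Nat.card_eq_fintype_card, hcard]
  -- the norm as a product over powers of σ
  have hbij : Function.Bijective (fun i : Fin n => σ ^ (i : ℕ)) := by
    refine (Fintype.bijective_iff_injective_and_card _).mpr ⟨?_, by simp [hcard]⟩
    intro i j hij
    refine Fin.ext (pow_injOn_Iio_orderOf ?_ ?_ hij)
    · rw [Set.mem_Iio, horder]; exact i.isLt
    · rw [Set.mem_Iio, horder]; exact j.isLt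
  have hnorm : ∀ y : K, algebraMap F K (Algebra.norm F y) = ∏ i : Fin n, (σ ^ (i : ℕ)) y := by
    intro y
    rw [Algebra.norm_eq_prod_automorphisms]
    exact (Fintype.prod_bijective _ hbij _ _ fun i => rfl).symm
  -- coefficients of skew polynomials
  have hcoeff' : ∀ (c : K) (i s : ℕ), coeff (ι c * t ^ i) s = if i = s then c else 0 := by
    intro c i s; rw [hcoeff]; exact Finsupp.single_apply
  have hcomm : ∀ (c : K) (i : ℕ), t ^ i * ι c = ι ((σ ^ i) c) * t ^ i := by
    intro c i
    induction i generalizing c with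
    | zero => simp
    | succ i ih =>
      rw [pow_succ, mul_assoc, hmul, ← mul_assoc, ih (σ c), mul_assoc, ← pow_succ,
        pow_succ σ i, AlgEquiv.mul_apply]
  have hcoefftf : ∀ i s : ℕ, coeff (t ^ i * f) s
      = if i ≤ s then (σ ^ i) (coeff f (s - i)) else 0 := by
    intro i s
    have h1 : t ^ i * f = ∑ l ∈ (coeff f).support, ι ((σ ^ i) (coeff f l)) * t ^ (i + l) := by
      conv_lhs => rw [← hrepr f]
      rw [Finsupp.sum, Finset.mul_sum]
      refine Finset.sum_congr rfl fun l _ => ?_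
      rw [← mul_assoc, hcomm, mul_assoc, ← pow_add]
    rw [h1, map_sum, Finsupp.finset_sum_apply]
    simp only [hcoeff']
    by_cases his : i ≤ s
    · rw [if_pos his]
      have h2 : ∀ l ∈ (coeff f).support, (if i + l = s then (σ ^ i) (coeff f l) else 0)
          = (if l = s - i then (σ ^ i) (coeff f l) else 0) := fun l _ => if_congr (by omega) rfl rfl
      rw [Finset.sum_congr rfl h2,
        Finset.sum_ite_eq' ((coeff f).support) (s - i) (fun l => (σ ^ i) (coeff f l))]
      split
      · rfl
      · rename_i hns
        rw [Finsupp.notMem_support_iff.mp hns, map_zero]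
    · rw [if_neg his]
      exact Finset.sum_eq_zero fun l _ => if_neg (by omega)
  -- the key explicit formula for the entries of ρ f
  have key : ∀ (i j : Fin n) (k : ℕ), (ρ f i j).coeff k =
      if (i : ℕ) ≤ n * k + (j : ℕ) then (σ ^ (i : ℕ)) (coeff f (n * k + (j : ℕ) - (i : ℕ))) else 0 := by
    intro i j k
    have hsum : t ^ (i : ℕ) * f = ∑ j' : Fin n, ∑ k' ∈ (ρ f i j').support,
        ι ((ρ f i j').coeff k') * t ^ (n * k' + (j' : ℕ)) := by
      rw [hρ f i]
      refine Finset.sum_congr rfl fun j' _ => ?_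
      rw [Polynomial.sum_def, Finset.sum_mul]
      exact Finset.sum_congr rfl fun k' _ => by rw [mul_assoc, ← pow_add]
    have h := congrArg (fun g => coeff g (n * k + (j : ℕ))) hsum
    simp only [map_sum, Finsupp.finset_sum_apply, hcoeff'] at h
    rw [hcoefftf] at h
    rw [h]
    have houter : ∀ j' : Fin n, j' ∈ Finset.univ → j' ≠ j →
        (∑ k' ∈ (ρ f i j').support,
          if n * k' + (j' : ℕ) = n * k + (j : ℕ) then (ρ f i j').coeff k' else 0) = 0 := by
      intro j' _ hj'
      refine Finset.sum_eq_zero fun k' _ => if_neg fun e => hj' ?_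
      refine Fin.ext ?_
      have h1 := congrArg (· % n) e
      simpa [Nat.mul_add_mod, Nat.mod_eq_of_lt j'.isLt, Nat.mod_eq_of_lt j.isLt] using h1
    rw [Finset.sum_eq_single j houter (fun hj => absurd (Finset.mem_univ j) hj)]
    have hinner : ∀ k' ∈ (ρ f i j).support,
        (if n * k' + (j : ℕ) = n * k + (j : ℕ) then (ρ f i j).coeff k' else 0)
        = (if k' = k then (ρ f i j).coeff k' else 0) := by
      intro k' _
      refine if_congr ⟨fun e => Nat.eq_of_mul_eq_mul_left hn (Nat.add_right_cancel e), ?_⟩ rfl rfl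
      rintro rfl; rfl
    rw [Finset.sum_congr rfl hinner,
      Finset.sum_ite_eq' ((ρ f i j).support) k (fun k' => (ρ f i j).coeff k')]
    split
    · rfl
    · rename_i hns
      exact Polynomial.notMem_support_iff.mp hns
  -- support constraints for entries
  have hcon : ∀ (p i : Fin n) (k : ℕ), (ρ f p i).coeff k ≠ 0 →
      (p : ℕ) ≤ n * k + (i : ℕ) ∧ n * k + (i : ℕ) ≤ m + (p : ℕ) := by
    intro p i k h
    rw [key] at h
    by_cases hc : (p : ℕ) ≤ n * k + (i : ℕ)
    · refine ⟨hc, ?_⟩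
      rw [if_pos hc] at h
      by_contra hgt
      push_neg at hgt
      have : coeff f (n * k + (i : ℕ) - (p : ℕ)) = 0 := htop _ (by omega)
      rw [this, map_zero] at h
      exact h rfl
    · rw [if_neg hc] at h; exact absurd rfl h
  set q := m / n with hq
  set r := m % n with hrdef
  have hr : r < n := Nat.mod_lt _ hn
  have hm : n * q + r = m := Nat.div_add_mod m n
  -- the distinguished permutation
  set π₀ : Equiv.Perm (Fin n) := Equiv.subRight ((m : Fin n)) with hπ₀def
  have hπ₀m : ∀ i : Fin n, ((π₀ i : Fin n) : ℕ) = (((i : ℕ)) + (n - r)) % n := by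
    intro i
    rw [hπ₀def]
    simp only [Equiv.subRight_apply]
    rw [Fin.sub_def]
    simp only [Fin.val_natCast]
    rw [Nat.add_comm]
  have hπ₀v : ∀ i : Fin n, ((π₀ i : Fin n) : ℕ)
      = if r ≤ (i : ℕ) then (i : ℕ) - r else (i : ℕ) + n - r := by
    intro i
    have hi := i.isLt
    rw [hπ₀m i]
    by_cases hri : r ≤ (i : ℕ)
    · rw [if_pos hri]
      have h2 : (i : ℕ) + (n - r) = ((i : ℕ) - r) + n := by omega
      rw [h2, Nat.add_mod_right, Nat.mod_eq_of_lt (by omega : (i : ℕ) - r < n)]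
    · rw [if_neg hri, Nat.mod_eq_of_lt (by omega : (i : ℕ) + (n - r) < n)]
      omega
  -- vanishing of high coefficients, and uniqueness of the top permutation
  have hvanish : ∀ (π : Equiv.Perm (Fin n)) (c : ℕ),
      (∏ i : Fin n, ρ f (π i) i).coeff c ≠ 0 → c ≤ m ∧ (c = m → π = π₀) := by
    intro π c hne
    obtain ⟨k, hks, hkne⟩ := aux_coeff_prod_ne_zero Finset.univ _ c hne
    have hcon' : ∀ i : Fin n, (π i : ℕ) ≤ n * k i + (i : ℕ) ∧ n * k i + (i : ℕ) ≤ m + (π i : ℕ) :=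
      fun i => hcon _ _ _ (hkne i (Finset.mem_univ i))
    have hL : ∑ i : Fin n, (n * k i + (i : ℕ)) = n * c + ∑ i : Fin n, (i : ℕ) := by
      rw [Finset.sum_add_distrib, ← Finset.mul_sum, hks]
    have hRR : ∑ i : Fin n, (m + (π i : ℕ)) = n * m + ∑ i : Fin n, (i : ℕ) := by
      rw [Finset.sum_add_distrib, Finset.sum_const, Finset.card_univ, Fintype.card_fin,
        smul_eq_mul, Equiv.sum_comp π (fun j : Fin n => (j : ℕ)), Nat.mul_comm]
    have hsum1 : ∑ i : Fin n, (n * k i + (i : ℕ)) ≤ ∑ i : Fin n, (m + (π i : ℕ)) :=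
      Finset.sum_le_sum fun i _ => (hcon' i).2
    rw [hL, hRR] at hsum1
    have hcm : c ≤ m := by
      have h1 : n * c ≤ n * m := by omega
      exact Nat.le_of_mul_le_mul_left h1 hn
    refine ⟨hcm, fun hcm' => ?_⟩
    subst hcm'
    have heq : ∑ i : Fin n, (n * k i + (i : ℕ)) = ∑ i : Fin n, (c + (π i : ℕ)) := by
      rw [hL, hRR]
    have htermeq : ∀ i ∈ Finset.univ, n * k i + (i : ℕ) = c + (π i : ℕ) :=
      (Finset.sum_eq_sum_iff_of_le (fun i _ => (hcon' i).2)).mp heq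
    refine Equiv.ext fun i => Fin.ext ?_
    rw [hπ₀m i]
    refine (aux_mod n q r (i : ℕ) ((π i : Fin n) : ℕ) (k i) hn hr i.isLt (π i).isLt ?_).symm
    rw [hm]
    exact htermeq i (Finset.mem_univ i)
  -- the determinant coefficient formula
  have hcoeffdet : ∀ c : ℕ, (N f).coeff c = ∑ π : Equiv.Perm (Fin n),
      ((Equiv.Perm.sign π : ℤ) : K) * (∏ i : Fin n, ρ f (π i) i).coeff c := by
    intro c
    rw [hN, Matrix.det_apply', Polynomial.finset_sum_coeff]
    refine Finset.sum_congr rfl fun π _ => ?_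
    rw [← map_intCast (Polynomial.C : K →+* Polynomial K), Polynomial.coeff_C_mul]
  -- the top coefficient of the π₀ term
  have hterm : (∏ i : Fin n, ρ f (π₀ i) i).coeff m
      = ∏ i : Fin n, (σ ^ ((π₀ i : Fin n) : ℕ)) (coeff f m) := by
    set d : Fin n → ℕ := fun i => if (i : ℕ) < r then q + 1 else q with hd
    have hsumr : ∑ i : Fin n, (if (i : ℕ) < r then (1 : ℕ) else 0) = r := by
      rw [Fin.sum_univ_eq_sum_range (fun l => if l < r then (1 : ℕ) else 0)]
      rw [← Finset.sum_subset (Finset.range_subset_range.mpr hr.le)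
        (fun l _ hl => if_neg (by simpa using hl))]
      rw [Finset.sum_congr rfl (fun l hl => if_pos (Finset.mem_range.mp hl))]
      simp
    have hdsum : ∑ i : Fin n, d i = m := by
      have h1 : ∀ i : Fin n, d i = q + (if (i : ℕ) < r then 1 else 0) := by
        intro i; by_cases h : (i : ℕ) < r <;> simp [hd, h]
      rw [Finset.sum_congr rfl fun i _ => h1 i, Finset.sum_add_distrib, Finset.sum_const,
        Finset.card_univ, Fintype.card_fin, smul_eq_mul, hsumr, hm]
    have hdle : ∀ i ∈ Finset.univ, (ρ f (π₀ i) i).natDegree ≤ d i := by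
      intro i _
      rw [Polynomial.natDegree_le_iff_coeff_eq_zero]
      intro c hc
      by_contra h
      have h2 := (hcon _ _ _ h).2
      rw [hπ₀v i] at h2
      have hi := i.isLt
      by_cases hir : r ≤ (i : ℕ)
      · rw [if_pos hir] at h2
        have hdi : d i = q := by simp [hd, not_lt.mpr hir]
        rw [hdi] at hc
        have h3 : n * (q + 1) ≤ n * c := Nat.mul_le_mul_left n hc
        rw [Nat.mul_succ] at h3
        have h4 : m + ((i : ℕ) - r) = n * q + (i : ℕ) := by rw [← hm]; omega
        linarith
      · rw [if_neg hir] at h2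
        have hdi : d i = q + 1 := by simp [hd, not_le.mp hir]
        rw [hdi] at hc
        have h3 : n * (q + 1 + 1) ≤ n * c := Nat.mul_le_mul_left n hc
        have h5 : n * (q + 1 + 1) = n * q + n + n := by ring
        rw [h5] at h3
        have h4 : m + ((i : ℕ) + n - r) = n * q + n + (i : ℕ) := by rw [← hm]; omega
        linarith
    rw [← hdsum, aux_coeff_prod Finset.univ _ d hdle]
    refine Finset.prod_congr rfl fun i _ => ?_
    rw [key]
    have hi := i.isLt
    by_cases hir : (i : ℕ) < r
    · have hdi : d i = q + 1 := by simp [hd, hir]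
      have hπv : ((π₀ i : Fin n) : ℕ) = (i : ℕ) + n - r := by rw [hπ₀v i, if_neg (by omega)]
      rw [hdi, hπv, Nat.mul_succ]
      have e1 : (i : ℕ) + n - r ≤ n * q + n + (i : ℕ) := by omega
      rw [if_pos e1]
      have e2 : n * q + n + (i : ℕ) - ((i : ℕ) + n - r) = m := by rw [← hm]; omega
      rw [e2, hdsum]
    · have hdi : d i = q := by simp [hd, hir]
      have hπv : ((π₀ i : Fin n) : ℕ) = (i : ℕ) - r := by rw [hπ₀v i, if_pos (by omega)]
      rw [hdi, hπv]
      have e1 : (i : ℕ) - r ≤ n * q + (i : ℕ) := by omega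
      rw [if_pos e1]
      have e2 : n * q + (i : ℕ) - ((i : ℕ) - r) = m := by rw [← hm]; omega
      rw [e2, hdsum]
  have hsign : ((Equiv.Perm.sign π₀ : ℤ) : K) = (-1) ^ (m * (n - 1)) := by
    rw [hπ₀def, ← aux_subRight_pow n m, map_pow, aux_sign_subRight_one n hn, ← pow_mul]
    push_cast
    rw [Nat.mul_comm]
  -- coefficient m of N f
  have hcoeffm : (N f).coeff m = (-1) ^ (m * (n - 1)) * algebraMap F K (Algebra.norm F (coeff f m)) := by
    rw [hcoeffdet m, Finset.sum_eq_single π₀]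
    · rw [hterm, hsign, Equiv.prod_comp π₀ (fun j : Fin n => (σ ^ (j : ℕ)) (coeff f m)), ← hnorm]
    · intro π _ hπ
      have h0 : (∏ i : Fin n, ρ f (π i) i).coeff m = 0 := by
        by_contra h
        exact hπ ((hvanish π m h).2 rfl)
      rw [h0, mul_zero]
    · intro h; exact absurd (Finset.mem_univ π₀) h
  -- constant coefficient
  have hcoeff0 : (N f).coeff 0 = algebraMap F K (Algebra.norm F (coeff f 0)) := by
    rw [hN]
    have h0 : (ρ f).det.coeff 0 = ((ρ f).map (Polynomial.constantCoeff)).det := by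
      show Polynomial.constantCoeff ((ρ f).det) = _
      rw [RingHom.map_det, RingHom.mapMatrix_apply]
    have htri : ((ρ f).map Polynomial.constantCoeff).BlockTriangular id := by
      intro p i hlt
      simp only [Matrix.map_apply]
      rw [Polynomial.constantCoeff_apply, key, if_neg (by simpa using hlt)]
    rw [h0, Matrix.det_of_upperTriangular htri]
    have hdiag : ∀ p : Fin n, ((ρ f).map Polynomial.constantCoeff) p p
        = (σ ^ (p : ℕ)) (coeff f 0) := by
      intro p
      simp only [Matrix.map_apply, Polynomial.constantCoeff_apply]
      rw [key, if_pos (by simp)]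
      congr 1
      simp
    rw [Finset.prod_congr rfl (fun p _ => hdiag p), ← hnorm]
  -- degree
  have hdeg' : (N f).natDegree = m := by
    have hle : (N f).natDegree ≤ m := by
      rw [Polynomial.natDegree_le_iff_coeff_eq_zero]
      intro c hc
      rw [hcoeffdet c]
      refine Finset.sum_eq_zero fun π _ => ?_
      have h0 : (∏ i : Fin n, ρ f (π i) i).coeff c = 0 := by
        by_contra h
        exact absurd ((hvanish π c h).1) (by omega)
      rw [h0, mul_zero]
    have hne : (N f).coeff m ≠ 0 := by
      rw [hcoeffm]
      refine mul_ne_zero (pow_ne_zero _ (by norm_num)) ?_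
      rw [map_ne_zero_iff _ (algebraMap F K).injective]
      exact Algebra.norm_ne_zero_iff.mpr ham
    exact le_antisymm hle (Polynomial.le_natDegree_of_ne_zero hne)
  -- invariance of coefficients under the Galois action
  have hσfull : ∀ y : K, σ ((σ ^ (n - 1)) y) = y := by
    intro y
    rw [← AlgEquiv.mul_apply, ← pow_succ', Nat.sub_add_cancel hn, hσn, AlgEquiv.one_apply]
  have hpow1 : ∀ (i : ℕ) (y : K), σ ((σ ^ i) y) = (σ ^ (i + 1)) y := by
    intro i y
    rw [pow_succ', AlgEquiv.mul_apply]
  have hfix : ∀ k : ℕ, σ ((N f).coeff k) = (N f).coeff k := by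
    set σr : K →+* K := σ.toAlgHom.toRingHom with hσr
    have hσrapp : ∀ y : K, σr y = σ y := fun y => rfl
    set φ : Polynomial K →+* Polynomial K := Polynomial.mapRingHom σr with hφ
    set c : Equiv.Perm (Fin n) := Equiv.addRight (1 : Fin n) with hcdef
    have hcval : ∀ i : Fin n, ((c i : Fin n) : ℕ)
        = if (i : ℕ) = n - 1 then 0 else (i : ℕ) + 1 := by
      intro i
      have hi := i.isLt
      have h1 : ((c i : Fin n) : ℕ) = ((i : ℕ) + 1 % n) % n := by
        rw [hcdef]; simp only [Equiv.coe_addRight]; rw [Fin.val_add, Fin.val_one']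
      rw [h1]
      by_cases h2 : (i : ℕ) = n - 1
      · rw [if_pos h2]
        rcases (by omega : n = 1 ∨ 1 < n) with h3 | h3
        · simp [h3, Nat.mod_one]
        · rw [Nat.mod_eq_of_lt h3, h2, Nat.sub_add_cancel hn, Nat.mod_self]
      · rw [if_neg h2]
        rw [Nat.mod_eq_of_lt (by omega : 1 < n), Nat.mod_eq_of_lt (by omega)]
    have hcsval : ∀ j : Fin n, ((c.symm j : Fin n) : ℕ)
        = if (j : ℕ) = 0 then n - 1 else (j : ℕ) - 1 := by
      intro j
      have hj := j.isLt
      have h0 : c (c.symm j) = j := c.apply_symm_apply j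
      have h1 := hcval (c.symm j)
      have h2 := congrArg (fun x : Fin n => (x : ℕ)) h0
      rw [h1] at h2
      have hcs := (c.symm j).isLt
      by_cases h3 : ((c.symm j : Fin n) : ℕ) = n - 1
      · rw [if_pos h3] at h2
        rw [if_pos (by omega), h3]
      · rw [if_neg h3] at h2
        rw [if_neg (by omega)]
        omega
    set w : Fin n → Polynomial K := fun l => if (l : ℕ) = n - 1 then Polynomial.X else 1 with hw
    set T : Matrix (Fin n) (Fin n) (Polynomial K) :=
      Matrix.of (fun i j => if j = c i then w i else 0) with hT
    have hTmul : ((ρ f).map φ) * T = T * (ρ f) := by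
      refine Matrix.ext fun i j => ?_
      have hL : (((ρ f).map φ) * T) i j = φ (ρ f i (c.symm j)) * w (c.symm j) := by
        rw [Matrix.mul_apply, Finset.sum_eq_single (c.symm j)]
        · simp only [hT, Matrix.map_apply, Matrix.of_apply]
          rw [if_pos (c.apply_symm_apply j).symm]
        · intro l _ hl
          have hne : ¬ (j = c l) := fun h => hl (by rw [h, Equiv.symm_apply_apply])
          simp only [hT, Matrix.of_apply]
          rw [if_neg hne, mul_zero]
        · intro h; exact absurd (Finset.mem_univ _) h
      have hR : (T * (ρ f)) i j = w i * ρ f (c i) j := by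
        rw [Matrix.mul_apply, Finset.sum_eq_single (c i)]
        · simp only [hT, Matrix.of_apply]
          rw [if_true]
        · intro l _ hl
          simp only [hT, Matrix.of_apply]
          rw [if_neg hl, zero_mul]
        · intro h; exact absurd (Finset.mem_univ _) h
      rw [hL, hR]
      have hwc : w (c.symm j) = if (j : ℕ) = 0 then Polynomial.X else 1 := by
        by_cases h : (j : ℕ) = 0
        · rw [if_pos h, hw]; simp only; rw [hcsval j, if_pos h, if_pos rfl]
        · rw [if_neg h, hw]; simp only; rw [hcsval j, if_neg h]
          exact if_neg (by have := j.isLt; omega)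
      have hcoeffφ : ∀ (p : Fin n) (i' : Fin n) (k : ℕ),
          (φ (ρ f p i')).coeff k = σ ((ρ f p i').coeff k) := by
        intro p i' k
        rw [hφ, Polynomial.coe_mapRingHom, Polynomial.coeff_map, hσrapp]
      have hj := j.isLt
      have hi := i.isLt
      by_cases hj0 : (j : ℕ) = 0 <;> by_cases hil : (i : ℕ) = n - 1
      · -- j = 0, i = n-1
        rw [hwc, if_pos hj0, hw]
        simp only [if_pos hil]
        refine Polynomial.ext fun k => ?_
        cases k with
        | zero =>
          rw [Polynomial.mul_coeff_zero, Polynomial.mul_coeff_zero]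
          simp [Polynomial.coeff_X_zero]
        | succ k =>
          rw [Polynomial.coeff_mul_X, Polynomial.coeff_X_mul, hcoeffφ, key, key,
            hcsval j, if_pos hj0, hcval i, if_pos hil, hil, hj0]
          rw [apply_ite σ, map_zero]
          have e1 : (n - 1 : ℕ) ≤ n * k + (n - 1) := by omega
          rw [if_pos e1, if_pos (Nat.zero_le _)]
          have e2 : n * k + (n - 1) - (n - 1) = n * k + 0 - 0 := by omega
          rw [hσfull, e2, pow_zero, AlgEquiv.one_apply]
      · -- j = 0, i ≠ n-1
        rw [hwc, if_pos hj0, hw]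
        simp only [if_neg hil]
        rw [one_mul]
        refine Polynomial.ext fun k => ?_
        cases k with
        | zero =>
          rw [Polynomial.mul_coeff_zero, Polynomial.coeff_X_zero, mul_zero, key,
            hcval i, if_neg hil, hj0]
          rw [if_neg (by omega)]
        | succ k =>
          rw [Polynomial.coeff_mul_X, hcoeffφ, key, key, hcsval j, if_pos hj0,
            hcval i, if_neg hil, hj0]
          rw [apply_ite σ, map_zero]
          have e1 : (i : ℕ) ≤ n * k + (n - 1) := by omega
          have e2 : (i : ℕ) + 1 ≤ n * (k + 1) + 0 := by
            rw [Nat.mul_succ]; omega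
          rw [if_pos e1, if_pos e2]
          have e3 : n * k + (n - 1) - (i : ℕ) = n * (k + 1) + 0 - ((i : ℕ) + 1) := by
            rw [Nat.mul_succ]; omega
          rw [hpow1, e3]
      · -- j ≠ 0, i = n-1
        rw [hwc, if_neg hj0, hw]
        simp only [if_pos hil]
        rw [mul_one]
        refine Polynomial.ext fun k => ?_
        cases k with
        | zero =>
          rw [Polynomial.mul_coeff_zero, Polynomial.coeff_X_zero, zero_mul, hcoeffφ, key,
            hcsval j, if_neg hj0, hil]
          rw [if_neg (by omega), map_zero]
        | succ k =>
          rw [Polynomial.coeff_X_mul, hcoeffφ, key, key, hcsval j, if_neg hj0,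
            hcval i, if_pos hil, hil]
          rw [apply_ite σ, map_zero]
          have e1 : (n - 1 : ℕ) ≤ n * (k + 1) + ((j : ℕ) - 1) := by
            rw [Nat.mul_succ]; omega
          rw [if_pos e1, if_pos (Nat.zero_le _)]
          have e3 : n * (k + 1) + ((j : ℕ) - 1) - (n - 1) = n * k + (j : ℕ) - 0 := by
            rw [Nat.mul_succ]; omega
          rw [hσfull, e3, pow_zero, AlgEquiv.one_apply]
      · -- j ≠ 0, i ≠ n-1
        rw [hwc, if_neg hj0, hw]
        simp only [if_neg hil]
        rw [mul_one, one_mul]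
        refine Polynomial.ext fun k => ?_
        rw [hcoeffφ, key, key, hcsval j, if_neg hj0, hcval i, if_neg hil]
        rw [apply_ite σ, map_zero]
        have e2 : n * k + ((j : ℕ) - 1) - (i : ℕ) = n * k + (j : ℕ) - ((i : ℕ) + 1) := by
          have hgen : ∀ Nk : ℕ, Nk + ((j : ℕ) - 1) - (i : ℕ) = Nk + (j : ℕ) - ((i : ℕ) + 1) := by
            intro Nk; omega
          exact hgen (n * k)
        rw [e2, hpow1]
        refine if_congr ?_ rfl rfl
        have hgen : ∀ Nk : ℕ, ((i : ℕ) ≤ Nk + ((j : ℕ) - 1)) ↔ (((i : ℕ) + 1) ≤ Nk + (j : ℕ)) := by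
          intro Nk
          omega
        exact hgen (n * k)
    have hTdet : T.det ≠ 0 := by
      have hTfact : T = (Matrix.diagonal w) * (c.permMatrix (Polynomial K)) := by
        ext i j
        rw [Matrix.diagonal_mul]
        simp only [hT, Matrix.of_apply, Equiv.Perm.permMatrix, PEquiv.toMatrix_apply,
          Equiv.toPEquiv_apply, Option.mem_def, Option.some.injEq]
        by_cases h : j = c i
        · rw [if_pos h, if_pos h.symm, mul_one]
        · rw [if_neg h, if_neg (fun hh => h hh.symm), mul_zero]
      have hprodw : ∏ l : Fin n, w l = Polynomial.X := by
        have h1 : ∀ l : Fin n, w l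
            = if l = (⟨n - 1, by omega⟩ : Fin n) then Polynomial.X else 1 := by
          intro l
          rw [hw]
          simp only
          exact if_congr (by rw [Fin.ext_iff]) rfl rfl
        rw [Finset.prod_congr rfl fun l _ => h1 l, Finset.prod_ite_eq' Finset.univ]
        simp
      rw [hTfact, Matrix.det_mul, Matrix.det_diagonal, hprodw, Matrix.det_permutation]
      refine mul_ne_zero Polynomial.X_ne_zero ?_
      rcases Int.units_eq_one_or (Equiv.Perm.sign c) with h | h <;> simp [h]
    have hdetfix : φ ((ρ f).det) = (ρ f).det := by
      have h1 : ((ρ f).map φ).det * T.det = T.det * (ρ f).det := by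
        rw [← Matrix.det_mul, hTmul, Matrix.det_mul]
      have h2 : T.det * ((ρ f).map φ).det = T.det * (ρ f).det := by
        rw [mul_comm] at h1; exact h1
      have h3 := mul_left_cancel₀ hTdet h2
      rw [RingHom.map_det, RingHom.mapMatrix_apply, h3]
    intro k
    have h4 := congrArg (fun p : Polynomial K => p.coeff k) hdetfix
    rw [hφ, Polynomial.coe_mapRingHom, Polynomial.coeff_map, hσrapp] at h4
    rw [hN]
    exact h4
  refine ⟨?_, hcoeff0, hdeg', hcoeffm⟩
  intro k
  have hnatfix : ∀ (l : ℕ), (σ ^ l) ((N f).coeff k) = (N f).coeff k := by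
    intro l
    induction l with
    | zero => simp
    | succ l ih => rw [pow_succ', AlgEquiv.mul_apply, ih, hfix k]
  have hall : ∀ τ : K ≃ₐ[F] K, τ ((N f).coeff k) = (N f).coeff k := by
    intro τ
    obtain ⟨z, hz⟩ := Subgroup.mem_zpowers_iff.mp (hσgen τ)
    rw [← hz]
    rcases z with z | z
    · rw [show (Int.ofNat z) = (z : ℤ) from rfl, zpow_natCast]
      exact hnatfix z
    · rw [zpow_negSucc]
      have h1 : (σ ^ (z + 1))⁻¹ = (σ ^ (z + 1)).symm := rfl
      rw [h1]
      rw [AlgEquiv.symm_apply_eq]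
      exact (hnatfix (z + 1)).symm
  have hbot : (N f).coeff k ∈ (⊥ : IntermediateField F K) := by
    have hTFAE := ((IsGalois.tfae (F := F) (E := K)).out 0 1).mp (inferInstance : IsGalois F K)
    rw [← hTFAE]
    exact fun g => hall g
  obtain ⟨x, hx⟩ := IntermediateField.mem_bot.mp hbot
  exact ⟨x, hx⟩
end

section
/- Let K/F be a finite cyclic Galois extension of degree n with Gal(K/F)=⟨σ⟩, R = K[t;σ], x = t^n, and N the reduced norm of K(t;σ) over F(x) as above. Then for every f ∈ R one has N(f) ∈ F[x], and f right-divides N(f) in R: there exists f^♯ ∈ R with N(f) = f^♯ · f = f · f^♯. -/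
/-- For every `f ∈ R = K[t;σ]`, the reduced norm `N(f)` lies in `F[x]` and `f`
divides `N(f)` in `R`: there is `f^♯ ∈ R` with `N(f) = f^♯·f = f·f^♯`. -/
theorem skew_polynomial_divides_its_norm
    (F K : Type) [Field F] [Field K] [Algebra F K] [IsGalois F K]
    (n : ℕ) (hn : 0 < n) (hdim : Module.finrank F K = n)
    (σ : K ≃ₐ[F] K) (hσgen : ∀ τ : K ≃ₐ[F] K, τ ∈ Subgroup.zpowers σ)
    (R : Type) [Ring R] (ι : K →+* R) (t : R)
    (hmul : ∀ a : K, t * ι a = ι (σ a) * t)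
    (coeff : R →+ (ℕ →₀ K))
    (hcoeff : ∀ (a : K) (i : ℕ), coeff (ι a * t ^ i) = Finsupp.single i a)
    (hrepr : ∀ x : R, (coeff x).sum (fun i a => ι a * t ^ i) = x)
    (ρ : R → Matrix (Fin n) (Fin n) (Polynomial K))
    (hρ : ∀ (g : R) (i : Fin n), t ^ (i : ℕ) * g =
      ∑ j : Fin n, ((ρ g i j).sum fun k a => ι a * t ^ (n * k)) * t ^ (j : ℕ))
    (N : R → Polynomial K) (hN : ∀ g : R, N g = (ρ g).det)
    (f : R) :
    (∀ k : ℕ, (N f).coeff k ∈ (algebraMap F K).range) ∧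
    ∃ fsharp : R,
      ((N f).sum fun k a => ι a * t ^ (n * k)) = fsharp * f ∧
      ((N f).sum fun k a => ι a * t ^ (n * k)) = f * fsharp := by
  haveI : FiniteDimensional F K := FiniteDimensional.of_finrank_pos (by rw [hdim]; exact hn)
  have hσn : σ ^ n = 1 := by
    have hc : Fintype.card (K ≃ₐ[F] K) = n := by rw [← Nat.card_eq_fintype_card, IsGalois.card_aut_eq_finrank, hdim]
    rw [← hc]; exact pow_card_eq_one
  obtain ⟨m, rfl⟩ : ∃ m, n = m + 1 := ⟨n - 1, by omega⟩
  set σr : K →+* K := σ.toAlgHom.toRingHom with hσr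
  -- powers of t versus ι
  have hpow : ∀ (k : ℕ) (a : K), t ^ k * ι a = ι ((σ ^ k) a) * t ^ k := by
    intro k
    induction k with
    | zero => intro a; simp
    | succ k ih =>
      intro a
      have hs : (σ ^ (k + 1)) a = (σ ^ k) (σ a) := by rw [pow_succ, AlgEquiv.mul_apply]
      calc t ^ (k + 1) * ι a = t ^ k * (t * ι a) := by rw [pow_succ, mul_assoc]
        _ = t ^ k * (ι (σ a) * t) := by rw [hmul]
        _ = (t ^ k * ι (σ a)) * t := by rw [mul_assoc]
        _ = (ι ((σ ^ k) (σ a)) * t ^ k) * t := by rw [ih]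
        _ = ι ((σ ^ (k + 1)) a) * t ^ (k + 1) := by rw [hs, mul_assoc, ← pow_succ]
  have hcomm : ∀ a : K, Commute (ι a) (t ^ (m + 1)) := by
    intro a
    have h := hpow (m + 1) a
    rw [hσn, AlgEquiv.one_apply] at h
    exact h.symm
  set ev : Polynomial K →+* R := Polynomial.eval₂RingHom' ι (t ^ (m + 1)) hcomm with hev
  have ev_def : ∀ p : Polynomial K, (p.sum fun k a => ι a * t ^ ((m + 1) * k)) = ev p := by
    intro p
    simp [hev, Polynomial.eval₂RingHom', Polynomial.eval₂_eq_sum, pow_mul]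
  have ev_X : ev Polynomial.X = t ^ (m + 1) := by
    simp [hev, Polynomial.eval₂RingHom']
  have hρ' : ∀ (g : R) (i : Fin (m + 1)), t ^ (i : ℕ) * g =
      ∑ j : Fin (m + 1), ev (ρ g i j) * t ^ (j : ℕ) := by
    intro g i
    rw [hρ g i]
    exact Finset.sum_congr rfl fun j _ => by rw [ev_def]
  -- coefficient computation for sums ∑ ev (v j) * t^j
  have coeff_evt : ∀ (p : Polynomial K) (j : ℕ),
      coeff (ev p * t ^ j) = p.sum fun k a => Finsupp.single ((m + 1) * k + j) a := by
    intro p j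
    rw [← ev_def, Polynomial.sum_def, Polynomial.sum_def, Finset.sum_mul, map_sum]
    refine Finset.sum_congr rfl fun k _ => ?_
    rw [mul_assoc, ← pow_add, hcoeff]
  have key_coeff : ∀ (v : Fin (m + 1) → Polynomial K) (k : ℕ) (j : Fin (m + 1)),
      coeff (∑ j' : Fin (m + 1), ev (v j') * t ^ (j' : ℕ)) ((m + 1) * k + (j : ℕ))
        = (v j).coeff k := by
    intro v k j
    rw [map_sum, Finsupp.finset_sum_apply]
    have hterm : ∀ j' : Fin (m + 1),
        (coeff (ev (v j') * t ^ (j' : ℕ))) ((m + 1) * k + (j : ℕ))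
          = if j' = j then (v j).coeff k else 0 := by
      intro j'
      rw [coeff_evt, Polynomial.sum_def, Finsupp.finset_sum_apply]
      by_cases hj : j' = j
      · subst hj
        rw [if_pos rfl]
        have h2 : ∀ k' ∈ (v j').support,
            (Finsupp.single ((m + 1) * k' + (j' : ℕ)) ((v j').coeff k')) ((m + 1) * k + (j' : ℕ))
              = if k' = k then (v j').coeff k' else 0 := by
          intro k' _
          rw [Finsupp.single_apply]
          have hiff : ((m + 1) * k' + (j' : ℕ) = (m + 1) * k + (j' : ℕ)) ↔ k' = k := by
            constructor
            · intro h
              exact Nat.eq_of_mul_eq_mul_left (Nat.succ_pos m) (Nat.add_right_cancel h)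
            · intro h; rw [h]
          rw [if_congr hiff rfl rfl]
        rw [Finset.sum_congr rfl h2, Finset.sum_ite_eq' (v j').support k]
        by_cases hk : k ∈ (v j').support
        · rw [if_pos hk]
        · rw [if_neg hk]
          exact (Polynomial.notMem_support_iff.mp hk).symm
      · rw [if_neg hj]
        apply Finset.sum_eq_zero
        intro k' _
        rw [Finsupp.single_apply, if_neg]
        intro hEq
        apply hj
        have h1 : ((m + 1) * k' + (j' : ℕ)) % (m + 1) = ((m + 1) * k + (j : ℕ)) % (m + 1) := by
          rw [hEq]
        rw [Nat.mul_add_mod, Nat.mul_add_mod, Nat.mod_eq_of_lt j'.isLt,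
          Nat.mod_eq_of_lt j.isLt] at h1
        exact Fin.ext h1
    rw [Finset.sum_congr rfl fun j' _ => hterm j', Finset.sum_ite_eq' Finset.univ j,
      if_pos (Finset.mem_univ j)]
  have huniq : ∀ v w : Fin (m + 1) → Polynomial K,
      (∑ j : Fin (m + 1), ev (v j) * t ^ (j : ℕ)) = (∑ j : Fin (m + 1), ev (w j) * t ^ (j : ℕ))
        → v = w := by
    intro v w h
    funext j
    apply Polynomial.ext
    intro k
    have h2 : (coeff (∑ j' : Fin (m + 1), ev (v j') * t ^ (j' : ℕ))) ((m + 1) * k + (j : ℕ))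
        = (coeff (∑ j' : Fin (m + 1), ev (w j') * t ^ (j' : ℕ))) ((m + 1) * k + (j : ℕ)) := by
      rw [h]
    rw [key_coeff, key_coeff] at h2
    exact h2
  -- expansion of (∑ ev(p k) t^k) * g
  have hexpand : ∀ (p : Fin (m + 1) → Polynomial K) (g : R),
      (∑ k : Fin (m + 1), ev (p k) * t ^ (k : ℕ)) * g
        = ∑ j : Fin (m + 1), ev (∑ k : Fin (m + 1), p k * ρ g k j) * t ^ (j : ℕ) := by
    intro p g
    rw [Finset.sum_mul]
    have hterm : ∀ k : Fin (m + 1), (ev (p k) * t ^ (k : ℕ)) * g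
        = ∑ j : Fin (m + 1), ev (p k * ρ g k j) * t ^ (j : ℕ) := by
      intro k
      rw [mul_assoc, hρ' g k, Finset.mul_sum]
      exact Finset.sum_congr rfl fun j _ => by rw [← mul_assoc, ← map_mul]
    rw [Finset.sum_congr rfl fun k _ => hterm k, Finset.sum_comm]
    refine Finset.sum_congr rfl fun j _ => ?_
    rw [map_sum, Finset.sum_mul]
  -- commutation of t with ev
  have t_mul_ev : ∀ p : Polynomial K, t * ev p = ev (p.map σr) * t := by
    intro p
    induction p using Polynomial.induction_on' with
    | add p q hp hq => rw [map_add, mul_add, hp, hq, Polynomial.map_add, map_add, add_mul]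
    | monomial k a =>
      have evm : ∀ b : K, ev (Polynomial.monomial k b) = ι b * (t ^ (m + 1)) ^ k := by
        intro b
        simp [hev, Polynomial.eval₂RingHom', Polynomial.eval₂_monomial]
      rw [Polynomial.map_monomial, evm, evm]
      have ht : t * (t ^ (m + 1)) ^ k = (t ^ (m + 1)) ^ k * t :=
        (((Commute.refl t).pow_right (m + 1)).pow_right k)
      calc t * (ι a * (t ^ (m + 1)) ^ k) = (t * ι a) * (t ^ (m + 1)) ^ k := by rw [mul_assoc]
        _ = ι (σ a) * (t * (t ^ (m + 1)) ^ k) := by rw [hmul, mul_assoc]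
        _ = ι (σ a) * ((t ^ (m + 1)) ^ k * t) := by rw [ht]
        _ = (ι (σr a) * (t ^ (m + 1)) ^ k) * t := by rw [mul_assoc]; rfl
  -- the twist matrices
  set w : Fin (m + 1) → Polynomial K :=
    fun i => if i = Fin.last m then Polynomial.X else 1 with hw
  set D : Matrix (Fin (m + 1)) (Fin (m + 1)) (Polynomial K) :=
    Matrix.of (fun i j => if j = i + 1 then w i else 0) with hD
  set Aσ : Matrix (Fin (m + 1)) (Fin (m + 1)) (Polynomial K) :=
    (Polynomial.mapRingHom σr).mapMatrix (ρ f) with hAσ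
  have hwlast : w (Fin.last m) = Polynomial.X := if_pos rfl
  have hwne : ∀ i : Fin (m + 1), i ≠ Fin.last m → w i = 1 := fun i hi => if_neg hi
  have hDentry : ∀ i j : Fin (m + 1), D i j = if j = i + 1 then w i else 0 := fun i j => rfl
  have hDmulA : ∀ (M : Matrix (Fin (m + 1)) (Fin (m + 1)) (Polynomial K)) (i j : Fin (m + 1)),
      (D * M) i j = w i * M (i + 1) j := by
    intro M i j
    rw [Matrix.mul_apply, Finset.sum_eq_single (i + 1)]
    · rw [hDentry, if_pos rfl]
    · intro b _ hb
      rw [hDentry, if_neg hb, zero_mul]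
    · intro h; exact absurd (Finset.mem_univ _) h
  have hMulD : ∀ (q : Fin (m + 1) → Polynomial K) (j : Fin (m + 1)),
      (∑ k : Fin (m + 1), q k * D k j) = q (j - 1) * w (j - 1) := by
    intro q j
    rw [Finset.sum_eq_single (j - 1)]
    · rw [hDentry, if_pos (by rw [sub_add_cancel])]
    · intro b _ hb
      rw [hDentry, if_neg, mul_zero]
      intro h
      exact hb (by rw [h, add_sub_cancel_right])
    · intro h; exact absurd (Finset.mem_univ _) h
  have hshift : ∀ q : Fin (m + 1) → Polynomial K,
      (∑ j : Fin (m + 1), ev (q j) * t ^ ((j : ℕ) + 1))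
        = ∑ j : Fin (m + 1), ev (∑ k : Fin (m + 1), q k * D k j) * t ^ (j : ℕ) := by
    intro q
    refine Fintype.sum_equiv (Equiv.addRight 1) _ _ fun j => ?_
    rw [Equiv.coe_addRight]
    rw [hMulD, add_sub_cancel_right]
    by_cases hj : j = Fin.last m
    · subst hj
      rw [hwlast, Fin.val_add_one, if_pos rfl, pow_zero, mul_one, map_mul, ev_X, Fin.val_last]
    · rw [hwne j hj, mul_one, Fin.val_add_one, if_neg hj]
  have t_pow_mul : ∀ (i : ℕ) (g : R), t * (t ^ i * g) = t ^ (i + 1) * g := by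
    intro i g
    rw [← mul_assoc, ← pow_succ']
  -- D * (ρ f) = Aσ * D
  have hDA : D * (ρ f) = Aσ * D := by
    have hrow : ∀ i : Fin (m + 1),
        (fun j => (D * (ρ f)) i j) = (fun j => (Aσ * D) i j) := by
      intro i
      apply huniq
      have hR : (∑ j : Fin (m + 1), ev ((Aσ * D) i j) * t ^ (j : ℕ))
          = t ^ ((i : ℕ) + 1) * f := by
        have step : t ^ ((i : ℕ) + 1) * f
            = ∑ j : Fin (m + 1), ev ((ρ f i j).map σr) * t ^ ((j : ℕ) + 1) := by
          rw [← t_pow_mul, hρ' f i, Finset.mul_sum]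
          refine Finset.sum_congr rfl fun j _ => ?_
          rw [← mul_assoc, t_mul_ev, mul_assoc, ← pow_succ']
        rw [step, hshift]
        refine Finset.sum_congr rfl fun j _ => ?_
        refine congrArg (fun p => ev p * t ^ (j : ℕ)) ?_
        rw [Matrix.mul_apply]
        refine Finset.sum_congr rfl fun k _ => ?_
        refine congrArg (fun p => p * D k j) ?_
        rw [hAσ, RingHom.mapMatrix_apply, Matrix.map_apply, Polynomial.coe_mapRingHom]
      have hL : (∑ j : Fin (m + 1), ev ((D * (ρ f)) i j) * t ^ (j : ℕ))
          = t ^ ((i : ℕ) + 1) * f := by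
        by_cases hi : i = Fin.last m
        · subst hi
          have h0 : ∀ j : Fin (m + 1), (D * (ρ f)) (Fin.last m) j = Polynomial.X * ρ f 0 j := by
            intro j
            rw [hDmulA, Fin.last_add_one, hwlast]
          have hf0 : f = ∑ k : Fin (m + 1), ev (ρ f 0 k) * t ^ (k : ℕ) := by
            have h := hρ' f 0
            rwa [Fin.val_zero, pow_zero, one_mul] at h
          calc (∑ j : Fin (m + 1), ev ((D * (ρ f)) (Fin.last m) j) * t ^ (j : ℕ))
              = ∑ j : Fin (m + 1), t ^ (m + 1) * (ev (ρ f 0 j) * t ^ (j : ℕ)) := by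
                refine Finset.sum_congr rfl fun j _ => ?_
                rw [h0, map_mul, ev_X, mul_assoc]
            _ = t ^ (m + 1) * f := by rw [← Finset.mul_sum, ← hf0]
            _ = t ^ ((Fin.last m : ℕ) + 1) * f := by rw [Fin.val_last]
        · have h0 : ∀ j : Fin (m + 1), (D * (ρ f)) i j = ρ f (i + 1) j := by
            intro j
            rw [hDmulA, hwne i hi, one_mul]
          have hv : ((i + 1 : Fin (m + 1)) : ℕ) = (i : ℕ) + 1 := by
            rw [Fin.val_add_one, if_neg hi]
          calc (∑ j : Fin (m + 1), ev ((D * (ρ f)) i j) * t ^ (j : ℕ))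
              = ∑ j : Fin (m + 1), ev (ρ f (i + 1) j) * t ^ (j : ℕ) := by
                refine Finset.sum_congr rfl fun j _ => ?_; rw [h0]
            _ = t ^ ((i + 1 : Fin (m + 1)) : ℕ) * f := (hρ' f (i + 1)).symm
            _ = t ^ ((i : ℕ) + 1) * f := by rw [hv]
      exact hL.trans hR.symm
    exact Matrix.ext fun i j => congrFun (hrow i) j
  -- det D ≠ 0
  have hdetD : D.det ≠ 0 := by
    have hDfac : D
        = Matrix.diagonal w * PEquiv.toMatrix (Equiv.addRight (1 : Fin (m + 1))).toPEquiv := by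
      refine Matrix.ext fun i j => ?_
      rw [Matrix.diagonal_mul, hDentry]
      simp only [PEquiv.toMatrix_apply, Equiv.toPEquiv_apply, Option.mem_some_iff,
        Equiv.coe_addRight, mul_ite, mul_one, mul_zero]
      rcases eq_or_ne j (i + 1) with h | h
      · rw [if_pos h, if_pos h.symm]
      · rw [if_neg h, if_neg fun hh => h hh.symm]
    rw [hDfac, Matrix.det_mul, Matrix.det_diagonal, Matrix.det_permutation]
    have hprod : (∏ i : Fin (m + 1), w i) = Polynomial.X := by
      simp only [hw]
      rw [Finset.prod_ite_eq' Finset.univ (Fin.last m) fun _ => (Polynomial.X : Polynomial K)]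
      rw [if_pos (Finset.mem_univ _)]
    rw [hprod]
    rcases Int.units_eq_one_or (Equiv.Perm.sign (Equiv.addRight (1 : Fin (m + 1)))) with hs | hs <;>
      rw [hs] <;> simp [Polynomial.X_ne_zero]
  -- Galois invariance of det (ρ f)
  have hfixed : Polynomial.map σr (ρ f).det = (ρ f).det := by
    have h1 : D.det * (ρ f).det = Aσ.det * D.det := by
      rw [← Matrix.det_mul, ← Matrix.det_mul, hDA]
    have h2 : (ρ f).det * D.det = Aσ.det * D.det := by rw [mul_comm ((ρ f).det), h1]
    have h3 := mul_right_cancel₀ hdetD h2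
    calc Polynomial.map σr (ρ f).det
        = ((Polynomial.mapRingHom σr).mapMatrix (ρ f)).det := by
          rw [← RingHom.map_det]; rfl
      _ = Aσ.det := by rw [hAσ]
      _ = (ρ f).det := h3.symm
  have hNdet : N f = (ρ f).det := hN f
  have part1 : ∀ k : ℕ, (N f).coeff k ∈ (algebraMap F K).range := by
    intro k
    have hfa : σ ((N f).coeff k) = (N f).coeff k := by
      have h2 := congrArg (fun p => p.coeff k) hfixed
      simp only [Polynomial.coeff_map] at h2
      rw [hNdet]
      exact h2
    set a : K := (N f).coeff k with ha
    have hnatfix : ∀ l : ℕ, (σ ^ l) a = a := by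
      intro l
      induction l with
      | zero => simp
      | succ l ih => rw [pow_succ, AlgEquiv.mul_apply, hfa, ih]
    have hall : ∀ τ : K ≃ₐ[F] K, τ a = a := by
      intro τ
      obtain ⟨z, rfl⟩ := Subgroup.mem_zpowers_iff.mp (hσgen τ)
      cases z with
      | ofNat l =>
        rw [Int.ofNat_eq_coe, zpow_natCast]
        exact hnatfix l
      | negSucc l =>
        rw [zpow_negSucc]
        have h := hnatfix (l + 1)
        calc ((σ ^ (l + 1))⁻¹) a = ((σ ^ (l + 1))⁻¹) ((σ ^ (l + 1)) a) := by rw [h]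
          _ = a := by rw [← AlgEquiv.mul_apply, inv_mul_cancel, AlgEquiv.one_apply]
    have h1 : a ∈ IntermediateField.fixedField (⊤ : Subgroup (K ≃ₐ[F] K)) := fun g => hall g
    rwa [← IntermediateField.fixingSubgroup_bot, IsGalois.fixedField_fixingSubgroup ⊥,
      IntermediateField.mem_bot] at h1
  refine ⟨part1, ?_⟩
  rw [ev_def]
  by_cases hd0 : N f = 0
  · exact ⟨0, by rw [hd0, map_zero, zero_mul], by rw [hd0, map_zero, mul_zero]⟩
  · -- centrality of ev (N f)
    have hmapN : (N f).map σr = N f := by rw [hNdet]; exact hfixed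
    have h1 : t * ev (N f) = ev (N f) * t := by rw [t_mul_ev, hmapN]
    have hcen : ∀ k : ℕ, t ^ k * ev (N f) = ev (N f) * t ^ k := by
      intro k
      induction k with
      | zero => simp
      | succ k ih =>
        rw [pow_succ]
        calc t ^ k * t * ev (N f) = t ^ k * (ev (N f) * t) := by rw [mul_assoc, h1]
          _ = ev (N f) * (t ^ k * t) := by rw [← mul_assoc, ih, mul_assoc]
    have hscal : ∀ i : Fin (m + 1), t ^ (i : ℕ) * ev (N f)
        = ∑ j : Fin (m + 1),
            ev (((N f) • (1 : Matrix (Fin (m + 1)) (Fin (m + 1)) (Polynomial K))) i j)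
              * t ^ (j : ℕ) := by
      intro i
      rw [hcen]
      symm
      rw [Finset.sum_eq_single i]
      · rw [Matrix.smul_apply, Matrix.one_apply_eq, smul_eq_mul, mul_one]
      · intro b _ hb
        rw [Matrix.smul_apply, Matrix.one_apply_ne fun hh => hb hh.symm, smul_eq_mul, mul_zero,
          map_zero, zero_mul]
      · intro h; exact absurd (Finset.mem_univ _) h
    have hscal0 : ev (N f)
        = ∑ j : Fin (m + 1),
            ev (((N f) • (1 : Matrix (Fin (m + 1)) (Fin (m + 1)) (Polynomial K))) 0 j)
              * t ^ (j : ℕ) := by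
      have h0 := hscal 0
      rwa [Fin.val_zero, pow_zero, one_mul] at h0
    set B : Matrix (Fin (m + 1)) (Fin (m + 1)) (Polynomial K) := (ρ f).adjugate with hB
    set fs : R := ∑ k : Fin (m + 1), ev (B 0 k) * t ^ (k : ℕ) with hfs
    have hentry : ∀ j : Fin (m + 1), (∑ k : Fin (m + 1), B 0 k * ρ f k j)
        = ((N f) • (1 : Matrix (Fin (m + 1)) (Fin (m + 1)) (Polynomial K))) 0 j := by
      intro j
      rw [← Matrix.mul_apply, hB, Matrix.adjugate_mul, ← hNdet]
    have hfsf : fs * f = ev (N f) := by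
      rw [hfs, hexpand]
      exact (Finset.sum_congr rfl fun j _ => by rw [hentry]).trans hscal0.symm
    have hBA : ρ fs * ρ f
        = (N f) • (1 : Matrix (Fin (m + 1)) (Fin (m + 1)) (Polynomial K)) := by
      have hrow : ∀ i : Fin (m + 1),
          (fun j => (ρ fs * ρ f) i j)
            = (fun j => ((N f) • (1 : Matrix (Fin (m + 1)) (Fin (m + 1)) (Polynomial K))) i j) := by
        intro i
        apply huniq
        have hL : (∑ j : Fin (m + 1), ev ((ρ fs * ρ f) i j) * t ^ (j : ℕ))
            = t ^ (i : ℕ) * (fs * f) := by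
          rw [← mul_assoc, hρ' fs i, hexpand]
          exact Finset.sum_congr rfl fun j _ => by rw [Matrix.mul_apply]
        have hR : (∑ j : Fin (m + 1),
            ev (((N f) • (1 : Matrix (Fin (m + 1)) (Fin (m + 1)) (Polynomial K))) i j)
              * t ^ (j : ℕ)) = t ^ (i : ℕ) * (fs * f) := by
          rw [hfsf]
          exact (hscal i).symm
        exact hL.trans hR.symm
      exact Matrix.ext fun i j => congrFun (hrow i) j
    have hfsB : ρ fs = B := by
      have e1 : (N f) • ρ fs = (N f) • B := by
        calc (N f) • ρ fs
            = ρ fs * ((N f) • (1 : Matrix (Fin (m + 1)) (Fin (m + 1)) (Polynomial K))) := by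
              rw [Matrix.mul_smul, Matrix.mul_one]
          _ = ρ fs * (ρ f * B) := by rw [hB, Matrix.mul_adjugate, ← hNdet]
          _ = (ρ fs * ρ f) * B := by rw [Matrix.mul_assoc]
          _ = ((N f) • (1 : Matrix (Fin (m + 1)) (Fin (m + 1)) (Polynomial K))) * B := by
              rw [hBA]
          _ = (N f) • B := by rw [Matrix.smul_mul, Matrix.one_mul]
      refine Matrix.ext fun i j => ?_
      apply mul_left_cancel₀ hd0
      have h2 : ((N f) • ρ fs) i j = ((N f) • B) i j := by rw [e1]
      simpa [Matrix.smul_apply, smul_eq_mul] using h2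
    have hffs : f * fs = ev (N f) := by
      have hf0 : f = ∑ k : Fin (m + 1), ev (ρ f 0 k) * t ^ (k : ℕ) := by
        have h := hρ' f 0
        rwa [Fin.val_zero, pow_zero, one_mul] at h
      have hentry2 : ∀ j : Fin (m + 1), (∑ k : Fin (m + 1), ρ f 0 k * ρ fs k j)
          = ((N f) • (1 : Matrix (Fin (m + 1)) (Fin (m + 1)) (Polynomial K))) 0 j := by
        intro j
        rw [← Matrix.mul_apply, hfsB, hB, Matrix.mul_adjugate, ← hNdet]
      calc f * fs = (∑ k : Fin (m + 1), ev (ρ f 0 k) * t ^ (k : ℕ)) * fs := by rw [← hf0]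
        _ = ∑ j : Fin (m + 1), ev (∑ k : Fin (m + 1), ρ f 0 k * ρ fs k j) * t ^ (j : ℕ) :=
            hexpand _ _
        _ = ev (N f) := (Finset.sum_congr rfl fun j _ => by rw [hentry2]).trans hscal0.symm
    exact ⟨fs, hfsf.symm, hffs.symm⟩
end

section
/- Let K/F be cyclic Galois of degree n with Gal(K/F)=⟨σ⟩, R = K[t;σ], and N the reduced norm of K(t;σ) over F(x), x = t^n. If f ∈ R and N(f) is irreducible in F[x], then f is irreducible in R. -/
open Polynomial

namespace SkewNormAux

variable {K R : Type} [Field K] [Ring R] {n : ℕ}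

theorem A_apply (ι : K →+* R) (t : R) (hc : ∀ a : K, Commute (ι a) (t ^ n))
    (p : Polynomial K) :
    eval₂RingHom' ι (t^n) hc p = ∑ k ∈ p.support, ι (p.coeff k) * t ^ (n * k) := by
  show eval₂ ι (t^n) p = _
  rw [eval₂_eq_sum]
  simp only [pow_mul]
  rfl

theorem unique0 (hn : 0 < n) (ι : K →+* R) (t : R)
    (hc : ∀ a : K, Commute (ι a) (t ^ n))
    (coeff : R →+ (ℕ →₀ K))
    (hcoeff : ∀ (a : K) (i : ℕ), coeff (ι a * t ^ i) = Finsupp.single i a)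
    (P : Fin n → Polynomial K)
    (h : (∑ j : Fin n, eval₂RingHom' ι (t^n) hc (P j) * t ^ (j:ℕ)) = 0) :
    P = 0 := by
  have key : ∀ (p : Polynomial K) (j : ℕ), coeff (eval₂RingHom' ι (t^n) hc p * t ^ j)
      = ∑ k ∈ p.support, Finsupp.single (n * k + j) (p.coeff k) := by
    intro p j
    rw [A_apply, Finset.sum_mul, map_sum]
    refine Finset.sum_congr rfl fun k _ => ?_
    rw [mul_assoc, ← pow_add, hcoeff]
  have h0 := congrArg (⇑coeff) h
  rw [map_sum, map_zero] at h0
  funext j0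
  ext m
  have h1 := congrArg (fun v : ℕ →₀ K => v (n * m + (j0:ℕ))) h0
  simp only [key, Finset.sum_apply', Finsupp.single_apply, Finsupp.coe_zero,
    Pi.zero_apply] at h1
  have hcond : ∀ (j : Fin n) (k : ℕ),
      n * k + (j:ℕ) = n * m + (j0:ℕ) ↔ k = m ∧ j = j0 := by
    intro j k
    constructor
    · intro hh
      have h2 := congrArg (· % n) hh
      simp only [Nat.mul_add_mod, Nat.mod_eq_of_lt j.isLt, Nat.mod_eq_of_lt j0.isLt] at h2
      have hj : j = j0 := Fin.ext h2
      refine ⟨?_, hj⟩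
      subst hj
      have : n * k = n * m := by omega
      exact Nat.eq_of_mul_eq_mul_left hn this
    · rintro ⟨rfl, rfl⟩; rfl
  rw [Finset.sum_eq_single j0 (fun j _ hj => ?_) (fun hj => absurd (Finset.mem_univ j0) hj)]
    at h1
  · rw [Finset.sum_eq_single m (fun k _ hk => ?_) (fun hm => ?_)] at h1
    · rwa [if_pos rfl] at h1
    · rw [if_neg]
      intro hc'
      exact hk (hcond j0 k |>.mp hc').1
    · rw [Polynomial.notMem_support_iff.mp hm, if_pos rfl]
  · refine Finset.sum_eq_zero fun k _ => ?_
    rw [if_neg]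
    intro hc'
    exact hj ((hcond j k).mp hc').2

theorem uniqueEq (hn : 0 < n) (ι : K →+* R) (t : R)
    (hc : ∀ a : K, Commute (ι a) (t ^ n))
    (coeff : R →+ (ℕ →₀ K))
    (hcoeff : ∀ (a : K) (i : ℕ), coeff (ι a * t ^ i) = Finsupp.single i a)
    (P Q : Fin n → Polynomial K)
    (h : (∑ j : Fin n, eval₂RingHom' ι (t^n) hc (P j) * t ^ (j:ℕ))
       = (∑ j : Fin n, eval₂RingHom' ι (t^n) hc (Q j) * t ^ (j:ℕ))) :
    P = Q := by
  have h0 : (∑ j : Fin n, eval₂RingHom' ι (t^n) hc ((P - Q) j) * t ^ (j:ℕ)) = 0 := by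
    simp only [Pi.sub_apply, map_sub, sub_mul, Finset.sum_sub_distrib, h, sub_self]
  have := unique0 hn ι t hc coeff hcoeff (P - Q) h0
  exact sub_eq_zero.mp this



theorem core (ι : K →+* R) (t : R) (hc : ∀ a : K, Commute (ι a) (t ^ n))
    (ρ : R → Matrix (Fin n) (Fin n) (Polynomial K))
    (hρ : ∀ (g : R) (i : Fin n), t ^ (i:ℕ) * g
      = ∑ j : Fin n, eval₂RingHom' ι (t^n) hc (ρ g i j) * t ^ (j:ℕ))
    (P : Fin n → Polynomial K) (g : R) :
    (∑ j : Fin n, eval₂RingHom' ι (t^n) hc (P j) * t ^ (j:ℕ)) * g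
      = ∑ k : Fin n, eval₂RingHom' ι (t^n) hc (∑ j : Fin n, P j * ρ g j k) * t ^ (k:ℕ) := by
  rw [Finset.sum_mul]
  have e1 : ∀ j : Fin n, (eval₂RingHom' ι (t^n) hc (P j) * t ^ (j:ℕ)) * g
      = ∑ k : Fin n, eval₂RingHom' ι (t^n) hc (P j * ρ g j k) * t ^ (k:ℕ) := by
    intro j
    rw [mul_assoc, hρ g j, Finset.mul_sum]
    refine Finset.sum_congr rfl fun k _ => ?_
    rw [← mul_assoc, ← map_mul]
  simp only [e1]
  rw [Finset.sum_comm]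
  refine Finset.sum_congr rfl fun k _ => ?_
  rw [map_sum, Finset.sum_mul]

theorem rho_mul (hn : 0 < n) (ι : K →+* R) (t : R)
    (hc : ∀ a : K, Commute (ι a) (t ^ n))
    (coeff : R →+ (ℕ →₀ K))
    (hcoeff : ∀ (a : K) (i : ℕ), coeff (ι a * t ^ i) = Finsupp.single i a)
    (ρ : R → Matrix (Fin n) (Fin n) (Polynomial K))
    (hρ : ∀ (g : R) (i : Fin n), t ^ (i:ℕ) * g
      = ∑ j : Fin n, eval₂RingHom' ι (t^n) hc (ρ g i j) * t ^ (j:ℕ))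
    (g h : R) : ρ (g * h) = ρ g * ρ h := by
  refine Matrix.ext fun i k => ?_
  have hrow : (fun k => ρ (g * h) i k) = fun k => (ρ g * ρ h) i k := by
    apply uniqueEq hn ι t hc coeff hcoeff
    rw [← hρ (g * h) i, ← mul_assoc, hρ g i, core ι t hc ρ hρ (fun j => ρ g i j) h]
    refine Finset.sum_congr rfl fun k _ => ?_
    rw [Matrix.mul_apply]
  exact congrFun hrow k

theorem rho_zero (hn : 0 < n) (ι : K →+* R) (t : R)
    (hc : ∀ a : K, Commute (ι a) (t ^ n))
    (coeff : R →+ (ℕ →₀ K))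
    (hcoeff : ∀ (a : K) (i : ℕ), coeff (ι a * t ^ i) = Finsupp.single i a)
    (ρ : R → Matrix (Fin n) (Fin n) (Polynomial K))
    (hρ : ∀ (g : R) (i : Fin n), t ^ (i:ℕ) * g
      = ∑ j : Fin n, eval₂RingHom' ι (t^n) hc (ρ g i j) * t ^ (j:ℕ)) :
    ρ (0 : R) = 0 := by
  refine Matrix.ext fun i k => ?_
  have hrow : (fun k => ρ (0:R) i k)
      = fun k => (0 : Matrix (Fin n) (Fin n) (Polynomial K)) i k := by
    apply uniqueEq hn ι t hc coeff hcoeff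
    rw [← hρ 0 i, mul_zero]
    simp
  exact congrFun hrow k

theorem rho_one (hn : 0 < n) (ι : K →+* R) (t : R)
    (hc : ∀ a : K, Commute (ι a) (t ^ n))
    (coeff : R →+ (ℕ →₀ K))
    (hcoeff : ∀ (a : K) (i : ℕ), coeff (ι a * t ^ i) = Finsupp.single i a)
    (ρ : R → Matrix (Fin n) (Fin n) (Polynomial K))
    (hρ : ∀ (g : R) (i : Fin n), t ^ (i:ℕ) * g
      = ∑ j : Fin n, eval₂RingHom' ι (t^n) hc (ρ g i j) * t ^ (j:ℕ)) :
    ρ (1 : R) = 1 := by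
  refine Matrix.ext fun i k => ?_
  have hrow : (fun k => ρ (1:R) i k)
      = fun k => (1 : Matrix (Fin n) (Fin n) (Polynomial K)) i k := by
    apply uniqueEq hn ι t hc coeff hcoeff
    rw [← hρ 1 i, mul_one]
    simp [Matrix.one_apply, apply_ite, ite_mul]
  exact congrFun hrow k

theorem rho_tn (hn : 0 < n) (ι : K →+* R) (t : R)
    (hc : ∀ a : K, Commute (ι a) (t ^ n))
    (coeff : R →+ (ℕ →₀ K))
    (hcoeff : ∀ (a : K) (i : ℕ), coeff (ι a * t ^ i) = Finsupp.single i a)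
    (ρ : R → Matrix (Fin n) (Fin n) (Polynomial K))
    (hρ : ∀ (g : R) (i : Fin n), t ^ (i:ℕ) * g
      = ∑ j : Fin n, eval₂RingHom' ι (t^n) hc (ρ g i j) * t ^ (j:ℕ)) :
    ρ (t ^ n) = Matrix.diagonal (fun _ => (X : Polynomial K)) := by
  refine Matrix.ext fun i k => ?_
  have hrow : (fun k => ρ (t^n) i k)
      = fun k => Matrix.diagonal (fun _ => (X : Polynomial K)) i k := by
    apply uniqueEq hn ι t hc coeff hcoeff
    rw [← hρ (t^n) i]
    have : t ^ (i:ℕ) * t ^ n = t ^ n * t ^ (i:ℕ) := by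
      rw [← pow_add, ← pow_add, Nat.add_comm]
    rw [this]
    have hX : (eval₂RingHom' ι (t^n) hc (X : Polynomial K) : R) = t ^ n := eval₂_X _ _
    simp [Matrix.diagonal_apply, apply_ite, ite_mul, hX]
  exact congrFun hrow k

theorem tA (ι : K →+* R) (t : R) (s : K →+* K)
    (hmul : ∀ a : K, t * ι a = ι (s a) * t)
    (hc : ∀ a : K, Commute (ι a) (t ^ n)) (p : Polynomial K) :
    t * eval₂RingHom' ι (t^n) hc p = eval₂RingHom' ι (t^n) hc (p.map s) * t := by
  induction p using Polynomial.induction_on' with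
  | add p q hp hq =>
    rw [map_add, Polynomial.map_add, map_add, mul_add, add_mul, hp, hq]
  | monomial k a =>
    rw [show (eval₂RingHom' ι (t^n) hc (monomial k a) : R) = ι a * (t^n)^k from
        eval₂_monomial _ _, Polynomial.map_monomial,
      show (eval₂RingHom' ι (t^n) hc (monomial k (s a)) : R) = ι (s a) * (t^n)^k from
        eval₂_monomial _ _]
    rw [← mul_assoc, hmul a, mul_assoc, mul_assoc]
    congr 1
    rw [← pow_mul]
    exact ((Commute.refl t).pow_right (n*k)).eq

theorem conj (hn : 0 < n) (ι : K →+* R) (t : R) (s : K →+* K)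
    (hmul : ∀ a : K, t * ι a = ι (s a) * t)
    (hc : ∀ a : K, Commute (ι a) (t ^ n))
    (coeff : R →+ (ℕ →₀ K))
    (hcoeff : ∀ (a : K) (i : ℕ), coeff (ι a * t ^ i) = Finsupp.single i a)
    (ρ : R → Matrix (Fin n) (Fin n) (Polynomial K))
    (hρ : ∀ (g : R) (i : Fin n), t ^ (i:ℕ) * g
      = ∑ j : Fin n, eval₂RingHom' ι (t^n) hc (ρ g i j) * t ^ (j:ℕ))
    (g : R) :
    (ρ g).map (fun p => p.map s) * ρ t = ρ t * ρ g := by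
  refine Matrix.ext fun i k => ?_
  have hrow : (fun k => ((ρ g).map (fun p => p.map s) * ρ t) i k)
      = fun k => (ρ t * ρ g) i k := by
    apply uniqueEq hn ι t hc coeff hcoeff
    have lhs : (∑ j : Fin n,
        eval₂RingHom' ι (t^n) hc (((ρ g).map (fun p => p.map s) * ρ t) i j) * t ^ (j:ℕ))
        = (∑ j : Fin n, eval₂RingHom' ι (t^n) hc ((ρ g i j).map s) * t ^ (j:ℕ)) * t := by
      rw [core ι t hc ρ hρ (fun j => (ρ g i j).map s) t]
      refine Finset.sum_congr rfl fun k _ => ?_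
      rw [Matrix.mul_apply]
      rfl
    have mid : (∑ j : Fin n, eval₂RingHom' ι (t^n) hc ((ρ g i j).map s) * t ^ (j:ℕ)) * t
        = t ^ (i:ℕ) * (t * g) := by
      have e2 : t * (t ^ (i:ℕ) * g)
          = (∑ j : Fin n, eval₂RingHom' ι (t^n) hc ((ρ g i j).map s) * t ^ (j:ℕ)) * t := by
        rw [hρ g i, Finset.mul_sum, Finset.sum_mul]
        refine Finset.sum_congr rfl fun j _ => ?_
        rw [← mul_assoc, tA ι t s hmul hc, mul_assoc, mul_assoc]
        congr 1
        exact ((Commute.refl t).pow_left (j:ℕ)).eq.symm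
      rw [← e2, ← mul_assoc,
        show t * t ^ (i:ℕ) = t ^ (i:ℕ) * t from ((Commute.refl t).pow_right _).eq, mul_assoc]
    rw [lhs, mid]
    rw [show t ^ (i:ℕ) * (t * g) = t ^ (i:ℕ) * (t * g) from rfl]
    rw [hρ (t * g) i, rho_mul hn ι t hc coeff hcoeff ρ hρ t g]
  exact congrFun hrow k


theorem pow_mul_iota (ι : K →+* R) (t : R) (s : K →+* K)
    (hmul : ∀ a : K, t * ι a = ι (s a) * t) :
    ∀ (i : ℕ) (a : K), t ^ i * ι a = ι ((⇑s)^[i] a) * t ^ i := by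
  intro i
  induction i with
  | zero => intro a; simp
  | succ i ih =>
    intro a
    rw [pow_succ, mul_assoc, hmul a, ← mul_assoc, ih (s a), mul_assoc, ← pow_succ,
      Function.iterate_succ_apply]

theorem domain (ι : K →+* R) (t : R) (s : K →+* K)
    (hs : Function.Injective ⇑s)
    (hpow : ∀ (i : ℕ) (a : K), t ^ i * ι a = ι ((⇑s)^[i] a) * t ^ i)
    (coeff : R →+ (ℕ →₀ K))
    (hcoeff : ∀ (a : K) (i : ℕ), coeff (ι a * t ^ i) = Finsupp.single i a)
    (hrepr : ∀ x : R, (coeff x).sum (fun i a => ι a * t ^ i) = x)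
    (g h : R) (hg : g ≠ 0) (hh : h ≠ 0) : g * h ≠ 0 := by
  have hinj : ∀ x : R, coeff x = 0 → x = 0 := by
    intro x hx
    have hr := hrepr x
    rw [hx, Finsupp.sum_zero_index] at hr
    exact hr.symm
  have hcg : coeff g ≠ 0 := fun e => hg (hinj g e)
  have hch : coeff h ≠ 0 := fun e => hh (hinj h e)
  have hsg : (coeff g).support.Nonempty := Finsupp.support_nonempty_iff.mpr hcg
  have hsh : (coeff h).support.Nonempty := Finsupp.support_nonempty_iff.mpr hch
  set dg := (coeff g).support.max' hsg with hdg
  set dh := (coeff h).support.max' hsh with hdh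
  have hexp : g * h = ∑ i ∈ (coeff g).support, ∑ j ∈ (coeff h).support,
      ι ((coeff g) i * (⇑s)^[i] ((coeff h) j)) * t ^ (i + j) := by
    conv_lhs => rw [← hrepr g, ← hrepr h]
    rw [Finsupp.sum, Finsupp.sum, Finset.sum_mul_sum]
    refine Finset.sum_congr rfl fun i _ => Finset.sum_congr rfl fun j _ => ?_
    rw [mul_assoc, ← mul_assoc (t ^ i), hpow i, mul_assoc, ← pow_add, ← mul_assoc, ← map_mul]
  intro h0
  have hco := congrArg (⇑coeff) hexp
  rw [h0, map_zero] at hco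
  simp only [map_sum, hcoeff] at hco
  have h1 := congrArg (fun v : ℕ →₀ K => v (dg + dh)) hco
  simp only [Finsupp.coe_zero, Pi.zero_apply, Finset.sum_apply', Finsupp.single_apply] at h1
  have hval : (∑ i ∈ (coeff g).support, ∑ j ∈ (coeff h).support,
      (if i + j = dg + dh then (coeff g) i * (⇑s)^[i] ((coeff h) j) else 0))
      = (coeff g) dg * (⇑s)^[dg] ((coeff h) dh) := by
    rw [Finset.sum_eq_single dg]
    · rw [Finset.sum_eq_single dh]
      · rw [if_pos rfl]
      · intro j hj hne
        rw [if_neg]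
        have := Finset.le_max' _ j hj
        omega
      · intro hmem; exact absurd (Finset.max'_mem _ hsh) hmem
    · intro i hi hne
      refine Finset.sum_eq_zero fun j hj => ?_
      rw [if_neg]
      have h2 := Finset.le_max' _ i hi
      have h3 := Finset.le_max' _ j hj
      omega
    · intro hmem; exact absurd (Finset.max'_mem _ hsg) hmem
  rw [hval] at h1
  have hgne : (coeff g) dg ≠ 0 := Finsupp.mem_support_iff.mp (Finset.max'_mem _ hsg)
  have hhne : (coeff h) dh ≠ 0 := Finsupp.mem_support_iff.mp (Finset.max'_mem _ hsh)
  have hsne : (⇑s)^[dg] ((coeff h) dh) ≠ 0 := by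
    intro e
    apply hhne
    have h00 : (⇑s)^[dg] (0 : K) = 0 := Function.iterate_fixed (map_zero s) dg
    exact hs.iterate dg (by rw [e, h00])
  exact mul_ne_zero hgne hsne h1.symm

end SkewNormAux

open SkewNormAux in
/-- If `f ∈ R = K[t;σ]` and the reduced norm `N(f)` is irreducible in `F[x]`,
then `f` is irreducible in `R`. -/
theorem irreducible_of_irreducible_norm
    (F K : Type) [Field F] [Field K] [Algebra F K] [IsGalois F K]
    (n : ℕ) (hn : 0 < n) (hdim : Module.finrank F K = n)
    (σ : K ≃ₐ[F] K) (hσgen : ∀ τ : K ≃ₐ[F] K, τ ∈ Subgroup.zpowers σ)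
    (R : Type) [Ring R] (ι : K →+* R) (t : R)
    (hmul : ∀ a : K, t * ι a = ι (σ a) * t)
    (coeff : R →+ (ℕ →₀ K))
    (hcoeff : ∀ (a : K) (i : ℕ), coeff (ι a * t ^ i) = Finsupp.single i a)
    (hrepr : ∀ x : R, (coeff x).sum (fun i a => ι a * t ^ i) = x)
    (ρ : R → Matrix (Fin n) (Fin n) (Polynomial K))
    (hρ : ∀ (g : R) (i : Fin n), t ^ (i : ℕ) * g =
      ∑ j : Fin n, ((ρ g i j).sum fun k a => ι a * t ^ (n * k)) * t ^ (j : ℕ))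
    (N : R → Polynomial K) (hN : ∀ g : R, N g = (ρ g).det)
    (f : R)
    -- N(f), as a polynomial in F[x], is irreducible:
    (q : Polynomial F) (hq : q.map (algebraMap F K) = N f) (hqirr : Irreducible q) :
    Irreducible f := by
  classical
  have hFD : FiniteDimensional F K := Module.finite_of_finrank_pos (hdim ▸ hn)
  have hcard : Nat.card (K ≃ₐ[F] K) = n := by
    rw [IsGalois.card_aut_eq_finrank, hdim]
  have horder : orderOf σ = n := by
    rw [orderOf_eq_card_of_forall_mem_zpowers hσgen, hcard]
  have hσn : σ ^ n = 1 := by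
    rw [← horder, pow_orderOf_eq_one]
  set s : K →+* K := RingHomClass.toRingHom σ with hs_def
  have hs_app : ∀ a : K, s a = σ a := fun a => rfl
  have hit : ∀ (m : ℕ) (a : K), (⇑s)^[m] a = (σ ^ m) a := by
    intro m
    induction m with
    | zero => intro a; simp
    | succ m ih =>
      intro a
      rw [Function.iterate_succ_apply, ih, pow_succ, AlgEquiv.mul_apply, hs_app]
  have hmuls : ∀ a : K, t * ι a = ι (s a) * t := hmul
  have hpow := pow_mul_iota ι t s hmuls
  have hc : ∀ a : K, Commute (ι a) (t ^ n) := by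
    intro a
    have h1 := hpow n a
    rw [hit n a, hσn, AlgEquiv.one_apply] at h1
    exact h1.symm
  have hρA : ∀ (g : R) (i : Fin n), t ^ (i:ℕ) * g
      = ∑ j : Fin n, Polynomial.eval₂RingHom' ι (t^n) hc (ρ g i j) * t ^ (j:ℕ) := by
    intro g i
    rw [hρ g i]
    refine Finset.sum_congr rfl fun j _ => ?_
    congr 1
    rw [A_apply ι t hc, Polynomial.sum_def]
  have hNmul : ∀ g h : R, N (g * h) = N g * N h := by
    intro g h
    rw [hN, hN, hN, rho_mul hn ι t hc coeff hcoeff ρ hρA, Matrix.det_mul]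
  have hN1 : N 1 = 1 := by
    rw [hN, rho_one hn ι t hc coeff hcoeff ρ hρA, Matrix.det_one]
  have hN0 : N 0 = 0 := by
    haveI : Nonempty (Fin n) := ⟨⟨0, hn⟩⟩
    rw [hN, rho_zero hn ι t hc coeff hcoeff ρ hρA, Matrix.det_zero]
  have hNtn : N (t ^ n) = Polynomial.X ^ n := by
    rw [hN, rho_tn hn ι t hc coeff hcoeff ρ hρA, Matrix.det_diagonal]
    simp
  have hNpow : ∀ m : ℕ, N (t ^ m) = N t ^ m := by
    intro m
    induction m with
    | zero => simpa using hN1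
    | succ m ih => rw [pow_succ, hNmul, ih, pow_succ]
  have hNt : N t ≠ 0 := by
    intro h0
    have h1 : (Polynomial.X : Polynomial K) ^ n = 0 := by
      rw [← hNtn, hNpow n, h0, zero_pow hn.ne']
    exact Polynomial.X_ne_zero (pow_eq_zero_iff hn.ne' |>.mp h1)
  have hdom : ∀ g h : R, g ≠ 0 → h ≠ 0 → g * h ≠ 0 :=
    domain ι t s s.injective hpow coeff hcoeff hrepr
  -- Galois descent for N
  have hdesc : ∀ g : R, (N g).map s = N g := by
    intro g
    have hcj := conj hn ι t s hmuls hc coeff hcoeff ρ hρA g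
    have hdet := congrArg Matrix.det hcj
    rw [Matrix.det_mul, Matrix.det_mul] at hdet
    have hmapdet : ((ρ g).map (fun p => p.map s)).det = ((ρ g).det).map s := by
      have h2 := (Polynomial.mapRingHom s).map_det (ρ g)
      simpa [Polynomial.coe_mapRingHom] using h2.symm
    rw [hmapdet, ← hN g, ← hN t] at hdet
    rw [mul_comm (N t) (N g)] at hdet
    exact mul_right_cancel₀ hNt hdet
  have hfix : ∀ (g : R) (m : ℕ), ∃ y : F, algebraMap F K y = (N g).coeff m := by
    intro g m
    set c := (N g).coeff m with hc_def
    have hσc : σ c = c := by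
      have h2 := congrArg (fun p => p.coeff m) (hdesc g)
      simpa [Polynomial.coeff_map, hs_app] using h2
    have hinvc : σ⁻¹ c = c := by
      apply σ.injective
      calc σ (σ⁻¹ c) = (σ * σ⁻¹) c := (AlgEquiv.mul_apply _ _ _).symm
      _ = c := by rw [mul_inv_cancel]; rfl
      _ = σ c := hσc.symm
    have hallz : ∀ z : ℤ, (σ ^ z) c = c := by
      intro z
      induction z using Int.induction_on with
      | zero => simp
      | succ k ih => rw [zpow_add_one, AlgEquiv.mul_apply, hσc, ih]
      | pred k ih => rw [zpow_sub_one, AlgEquiv.mul_apply, hinvc, ih]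
    have hall : ∀ τ : K ≃ₐ[F] K, τ c = c := by
      intro τ
      obtain ⟨z, hz⟩ := Subgroup.mem_zpowers_iff.mp (hσgen τ)
      rw [← hz]; exact hallz z
    have hmem : c ∈ IntermediateField.fixedField (⊤ : Subgroup (K ≃ₐ[F] K)) := by
      rintro ⟨τ, -⟩
      exact hall τ
    have hff : IntermediateField.fixedField (⊤ : Subgroup (K ≃ₐ[F] K)) = ⊥ :=
      OrderIso.map_bot (IsGalois.intermediateFieldEquivSubgroup (F := F) (E := K)).symm
    rw [hff] at hmem
    exact IntermediateField.mem_bot.mp hmem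
  have hliftN : ∀ g : R, ∃ p : Polynomial F, p.map (algebraMap F K) = N g := by
    intro g
    have hl : N g ∈ Polynomial.lifts (algebraMap F K) := by
      rw [Polynomial.lifts_iff_coeff_lifts]
      intro m
      exact hfix g m
    exact (Polynomial.mem_lifts _).mp hl
  have hunit : ∀ g : R, IsUnit (N g) → IsUnit g := by
    intro g hg
    have hgne : g ≠ 0 := by
      rintro rfl
      rw [hN0] at hg
      exact not_isUnit_zero hg
    rw [hN] at hg
    obtain ⟨u, hu⟩ := (Matrix.isUnit_iff_isUnit_det (ρ g)).mpr hg
    set i0 : Fin n := ⟨0, hn⟩ with hi0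
    have hMg : (↑u⁻¹ : Matrix (Fin n) (Fin n) (Polynomial K)) * ρ g = 1 := by
      rw [← hu]; exact u.inv_mul
    set u0 : R := ∑ j : Fin n,
      Polynomial.eval₂RingHom' ι (t^n) hc ((↑u⁻¹ : Matrix (Fin n) (Fin n) (Polynomial K)) i0 j)
        * t ^ (j:ℕ) with hu0
    have hleft : u0 * g = 1 := by
      rw [hu0, core ι t hc ρ hρA _ g]
      have hrow : ∀ k : Fin n,
          (∑ j : Fin n, (↑u⁻¹ : Matrix (Fin n) (Fin n) (Polynomial K)) i0 j * ρ g j k)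
          = (1 : Matrix (Fin n) (Fin n) (Polynomial K)) i0 k := by
        intro k
        rw [← Matrix.mul_apply, hMg]
      simp only [hrow]
      simp [Matrix.one_apply, apply_ite, ite_mul, hi0]
    have hright : g * u0 = 1 := by
      have h2 : (g * u0 - 1) * g = 0 := by
        rw [sub_mul, one_mul, mul_assoc, hleft, mul_one, sub_self]
      by_contra hne
      exact hdom _ _ (sub_ne_zero.mpr hne) hgne h2
    exact ⟨⟨g, u0, hright, hleft⟩, rfl⟩
  constructor
  · intro hf
    obtain ⟨v, hv⟩ := hf.exists_right_inv
    have h1 : N f * N v = 1 := by rw [← hNmul, hv, hN1]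
    have hUq : IsUnit (q.map (algebraMap F K)) := by
      rw [hq]; exact IsUnit.of_mul_eq_one _ h1
    have hqU : IsUnit q := by
      have hdeg := Polynomial.degree_eq_zero_of_isUnit hUq
      rw [Polynomial.degree_map_eq_of_injective (algebraMap F K).injective] at hdeg
      exact Polynomial.isUnit_iff_degree_eq_zero.mpr hdeg
    exact hqirr.not_isUnit hqU
  · intro a b hab
    obtain ⟨pa, hpa⟩ := hliftN a
    obtain ⟨pb, hpb⟩ := hliftN b
    have hqab : q = pa * pb := by
      apply Polynomial.map_injective (algebraMap F K) (algebraMap F K).injective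
      rw [Polynomial.map_mul, hpa, hpb, hq, hab, hNmul]
    rcases hqirr.isUnit_or_isUnit hqab with h | h
    · left
      apply hunit a
      rw [← hpa]
      simpa using h.map (Polynomial.mapRingHom (algebraMap F K))
    · right
      apply hunit b
      rw [← hpb]
      simpa using h.map (Polynomial.mapRingHom (algebraMap F K))
end
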